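/- arXiv:math/0108091 — 3 statements merged into one kernel-verified Lean document; each statement's English description precedes it below -/
import Mathlib

section
/- Any nilpotent group of orientation-preserving C² diffeomorphisms of the closed interval [0,1] is abelian. -/
open Set

open Filter Topology
open scoped commutatorElement

/-- Regularity data for a map on `Icc P Q`. -/
structure PTReg (P Q : ℝ) (f f' : ℝ → ℝ) : Prop where
  smono : StrictMonoOn f (Icc P Q)
  maps : MapsTo f (Icc P Q) (Icc P Q)
  hd : ∀ x ∈ Icc P Q, HasDerivWithinAt f (f' x) (Icc P Q) x
  dpos : ∀ x ∈ Icc P Q, 0 < f' x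
  dcont : ContinuousOn f' (Icc P Q)
  dlip : ∃ C, 0 ≤ C ∧ ∀ x ∈ Icc P Q, ∀ y ∈ Icc P Q,
      |Real.log (f' x) - Real.log (f' y)| ≤ C * |x - y|

namespace PTReg

variable {P Q : ℝ} {f f' : ℝ → ℝ}

lemma cont (h : PTReg P Q f f') : ContinuousOn f (Icc P Q) :=
  fun x hx => (h.hd x hx).continuousWithinAt

lemma restrict (h : PTReg P Q f f') {r s : ℝ} (hPr : P ≤ r) (hsQ : s ≤ Q)
    (hmaps : MapsTo f (Icc r s) (Icc r s)) : PTReg r s f f' := by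
  have hsub : Icc r s ⊆ Icc P Q := Icc_subset_Icc hPr hsQ
  refine ⟨h.smono.mono hsub, hmaps, fun x hx => (h.hd x (hsub hx)).mono hsub,
    fun x hx => h.dpos x (hsub hx), h.dcont.mono hsub, ?_⟩
  obtain ⟨C, hC0, hC⟩ := h.dlip
  exact ⟨C, hC0, fun x hx y hy => hC x (hsub hx) y (hsub hy)⟩

lemma mapsTo_of_fix (h : PTReg P Q f f') {r s : ℝ} (hr : r ∈ Icc P Q) (hs : s ∈ Icc P Q)
    (hrs : r ≤ s) (hfr : f r = r) (hfs : f s = s) : MapsTo f (Icc r s) (Icc r s) := by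
  intro x hx
  have hxPQ : x ∈ Icc P Q := ⟨hr.1.trans hx.1, hx.2.trans hs.2⟩
  constructor
  · calc r = f r := hfr.symm
      _ ≤ f x := h.smono.monotoneOn hr hxPQ hx.1
  · calc f x ≤ f s := h.smono.monotoneOn hxPQ hs hx.2
      _ = s := hfs

lemma reflect (h : PTReg P Q f f') :
    PTReg (-Q) (-P) (fun x => -f (-x)) (fun x => f' (-x)) := by
  have hnegmaps : MapsTo (fun x : ℝ => -x) (Icc (-Q) (-P)) (Icc P Q) := by
    intro x hx; simp only [mem_Icc] at hx ⊢; constructor <;> linarith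
  have hmem : ∀ x ∈ Icc (-Q) (-P), -x ∈ Icc P Q := fun x hx => hnegmaps hx
  refine ⟨?_, ?_, ?_, fun x hx => h.dpos _ (hmem x hx), ?_, ?_⟩
  · intro x hx y hy hxy
    have : f (-y) < f (-x) := h.smono (hmem y hy) (hmem x hx) (by linarith)
    show -f (-x) < -f (-y)
    linarith
  · intro x hx
    have := h.maps (hmem x hx)
    exact ⟨by show -Q ≤ -f (-x); linarith [this.2], by show -f (-x) ≤ -P; linarith [this.1]⟩
  · intro x hx
    have h1 : HasDerivWithinAt (fun y : ℝ => -y) (-1) (Icc (-Q) (-P)) x :=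
      (hasDerivWithinAt_id x _).neg
    have h2 : HasDerivWithinAt f (f' (-x)) (Icc P Q) (-x) := h.hd _ (hmem x hx)
    have h3 : HasDerivWithinAt (f ∘ fun y : ℝ => -y) (f' (-x) * (-1)) (Icc (-Q) (-P)) x :=
      h2.comp x h1 hnegmaps
    have h4 := h3.neg
    exact h4.congr_deriv (by ring)
  · exact h.dcont.comp (continuousOn_id.neg) hnegmaps
  · obtain ⟨C, hC0, hC⟩ := h.dlip
    refine ⟨C, hC0, fun x hx y hy => ?_⟩
    have := hC (-x) (hmem x hx) (-y) (hmem y hy)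
    have heq : |-x - -y| = |x - y| := by
      rw [show (-x - -y) = -(x - y) by ring, abs_neg]
    rwa [heq] at this

end PTReg

section Iterates

variable {P Q : ℝ} {f : ℝ → ℝ}

lemma PT.iterate_mapsTo (h : MapsTo f (Icc P Q) (Icc P Q)) (n : ℕ) :
    MapsTo (f^[n]) (Icc P Q) (Icc P Q) := h.iterate n

lemma PT.iterate_smono (hm : StrictMonoOn f (Icc P Q)) (h : MapsTo f (Icc P Q) (Icc P Q)) :
    ∀ n, StrictMonoOn (f^[n]) (Icc P Q) := by
  intro n
  induction n with
  | zero => simpa using strictMonoOn_id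
  | succ n ih =>
      rw [Function.iterate_succ']
      exact hm.comp ih (h.iterate n)

lemma PT.iterate_comm_self {g : ℝ → ℝ} (hf : MapsTo f (Icc P Q) (Icc P Q))
    (hg : MapsTo g (Icc P Q) (Icc P Q))
    (hcomm : ∀ x ∈ Icc P Q, f (g x) = g (f x)) :
    ∀ n k, ∀ x ∈ Icc P Q, f^[n] (g^[k] x) = g^[k] (f^[n] x) := by
  have key : ∀ k, ∀ x ∈ Icc P Q, f (g^[k] x) = g^[k] (f x) := by
    intro k
    induction k with
    | zero => intro x _; simp
    | succ k ih =>
        intro x hx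
        rw [Function.iterate_succ', Function.comp_apply, Function.comp_apply]
        rw [hcomm _ ((hg.iterate k) hx), ih x hx]
  intro n
  induction n with
  | zero => intro k x _; simp
  | succ n ih =>
      intro k x hx
      rw [Function.iterate_succ', Function.comp_apply, Function.comp_apply,
        ih k x hx]
      exact key k _ ((PT.iterate_mapsTo hf n) hx)

/-- Iterates of a map `≤ id`, fixing only `P`, tend to `P`. -/
lemma PT.tendsto_iterate_bot (hc : ContinuousOn f (Icc P Q))
    (hmaps : MapsTo f (Icc P Q) (Icc P Q))
    (hmono : StrictMonoOn f (Icc P Q))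
    (hlt : ∀ x ∈ Ioo P Q, f x < x) (hfP : f P = P) {x : ℝ} (hx : x ∈ Ico P Q) :
    Tendsto (fun n => f^[n] x) atTop (𝓝 P) := by
  have hPQ : P < Q := lt_of_le_of_lt hx.1 hx.2
  -- iterates stay in Ico P Q
  have hstay : ∀ n, f^[n] x ∈ Ico P Q := by
    intro n
    induction n with
    | zero => simpa using hx
    | succ n ih =>
        rw [Function.iterate_succ', Function.comp_apply]
        rcases eq_or_lt_of_le ih.1 with hP | hP
        · rw [← hP, hfP]; exact ⟨le_refl _, hPQ⟩
        · constructor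
          · have : f P < f (f^[n] x) := hmono ⟨le_refl _, hPQ.le⟩
              ⟨ih.1, ih.2.le⟩ hP
            rw [hfP] at this; exact this.le
          · exact lt_trans (hlt _ ⟨hP, ih.2⟩) ih.2
  have hanti : Antitone (fun n => f^[n] x) := by
    apply antitone_nat_of_succ_le
    intro n
    rw [Function.iterate_succ', Function.comp_apply]
    rcases eq_or_lt_of_le (hstay n).1 with hP | hP
    · rw [← hP, hfP]
    · exact (hlt _ ⟨hP, (hstay n).2⟩).le
  have hbdd : BddBelow (range fun n => f^[n] x) := by
    refine ⟨P, ?_⟩; rintro y ⟨n, rfl⟩; exact (hstay n).1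
  have hlim := tendsto_atTop_ciInf hanti hbdd
  set L := ⨅ n, f^[n] x with hL
  have hLmem : L ∈ Icc P Q := by
    constructor
    · exact le_ciInf fun n => (hstay n).1
    · exact le_trans (ciInf_le hbdd 0) (by simpa using hx.2.le)
  have hLlt : L < Q := lt_of_le_of_lt (ciInf_le hbdd 0) (by simpa using hx.2)
  -- f L = L
  have hseq : Tendsto (fun n => f^[n] x) atTop (𝓝[Icc P Q] L) := by
    apply tendsto_nhdsWithin_of_tendsto_nhds_of_eventually_within _ hlim
    exact Eventually.of_forall fun n => ⟨(hstay n).1, (hstay n).2.le⟩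
  have h1 : Tendsto (fun n => f (f^[n] x)) atTop (𝓝 (f L)) :=
    (hc L hLmem).tendsto.comp hseq
  have h2 : Tendsto (fun n => f (f^[n] x)) atTop (𝓝 L) := by
    have : (fun n => f (f^[n] x)) = fun n => f^[n+1] x := by
      funext n; rw [Function.iterate_succ', Function.comp_apply]
    rw [this]
    exact hlim.comp (tendsto_add_atTop_nat 1)
  have hfL : f L = L := tendsto_nhds_unique h1 h2
  have : L = P := by
    by_contra hne
    have hLP : P < L := lt_of_le_of_ne hLmem.1 (Ne.symm hne)
    exact absurd hfL (ne_of_lt (hlt L ⟨hLP, hLlt⟩))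
  rwa [this] at hlim

/-- Iterates of a map `≥ id`, fixing only `Q`, tend to `Q`. -/
lemma PT.tendsto_iterate_top (hc : ContinuousOn f (Icc P Q))
    (hmaps : MapsTo f (Icc P Q) (Icc P Q))
    (hmono : StrictMonoOn f (Icc P Q))
    (hgt : ∀ x ∈ Ioo P Q, x < f x) (hfQ : f Q = Q) {x : ℝ} (hx : x ∈ Ioc P Q) :
    Tendsto (fun n => f^[n] x) atTop (𝓝 Q) := by
  -- reflect
  set F := fun y : ℝ => -f (-y) with hF
  have hmem : ∀ y ∈ Icc (-Q) (-P), -y ∈ Icc P Q := by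
    intro y hy; simp only [mem_Icc] at hy ⊢; constructor <;> linarith
  have hnegmaps : MapsTo (fun y : ℝ => -y) (Icc (-Q) (-P)) (Icc P Q) := fun y hy => hmem y hy
  have hFc : ContinuousOn F (Icc (-Q) (-P)) := (hc.comp continuousOn_id.neg hnegmaps).neg
  have hFmaps : MapsTo F (Icc (-Q) (-P)) (Icc (-Q) (-P)) := by
    intro y hy
    have := hmaps (hmem y hy)
    exact ⟨by show -Q ≤ -f (-y); linarith [this.2], by show -f (-y) ≤ -P; linarith [this.1]⟩
  have hFmono : StrictMonoOn F (Icc (-Q) (-P)) := by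
    intro u hu v hv huv
    have : f (-v) < f (-u) := hmono (hmem v hv) (hmem u hu) (by linarith)
    simp only [hF]; linarith
  have hFlt : ∀ y ∈ Ioo (-Q) (-P), F y < y := by
    intro y hy
    have : -y ∈ Ioo P Q := ⟨by linarith [hy.2], by linarith [hy.1]⟩
    have := hgt _ this
    simp only [hF]; linarith
  have hFP : F (-Q) = -Q := by simp [hF, hfQ]
  have hxm : -x ∈ Ico (-Q) (-P) := ⟨neg_le_neg hx.2, neg_lt_neg hx.1⟩
  have hiter : ∀ n y, y ∈ Icc P Q → F^[n] (-y) = -(f^[n] y) := by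
    intro n
    induction n with
    | zero => simp
    | succ n ih =>
        intro y hy
        have h1 : F (-y) = -(f y) := by simp [hF]
        rw [Function.iterate_succ_apply, Function.iterate_succ_apply, h1,
          ih (f y) (hmaps hy)]
  have hxQ : x ∈ Icc P Q := ⟨hx.1.le, hx.2⟩
  have := PT.tendsto_iterate_bot hFc hFmaps hFmono hFlt hFP hxm
  have heq : (fun n => F^[n] (-x)) = fun n => -(f^[n] x) := funext fun n => hiter n x hxQ
  rw [heq] at this
  have := this.neg
  simpa using this

end Iterates

section KopellCore

variable {P A : ℝ} {f f' g g' : ℝ → ℝ}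

/-- Kopell's lemma, core version: on `[P,A]`, if `f` is strictly contracting towards `P`
(no fixed point in `(P,A]`), `g` commutes with `f` and fixes both `P` and `A`,
then `g` is the identity. -/
lemma kopell_core (hPA : P < A) (hf : PTReg P A f f') (hfP : f P = P)
    (hflt : ∀ x ∈ Ioc P A, f x < x)
    (hg : PTReg P A g g') (hgP : g P = P) (hgA : g A = A)
    (hcomm : ∀ x ∈ Icc P A, f (g x) = g (f x)) :
    ∀ x ∈ Icc P A, g x = x := by
  by_contra hcon
  push_neg at hcon
  obtain ⟨x₀, hx₀S, hx₀⟩ := hcon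
  have hPS : P ∈ Icc P A := ⟨le_refl _, hPA.le⟩
  have hAS : A ∈ Icc P A := ⟨hPA.le, le_refl _⟩
  -- the orbit of A under f
  set aa := fun n => f^[n] A with haa
  have haaS : ∀ n, aa n ∈ Icc P A := fun n => (hf.maps.iterate n) hAS
  have haaP : ∀ n, P < aa n := by
    intro n; induction n with
    | zero => simpa [haa] using hPA
    | succ n ih =>
        have h0 : aa (n+1) = f (aa n) := Function.iterate_succ_apply' f n A
        rw [h0]
        have := hf.smono hPS (haaS n) ih
        rwa [hfP] at this
  have haa_succ : ∀ n, f (aa n) = aa (n+1) := fun n => (Function.iterate_succ_apply' f n A).symm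
  have haalt : ∀ n, aa (n+1) < aa n := by
    intro n
    rw [← haa_succ n]
    exact hflt _ ⟨haaP n, (haaS n).2⟩
  have haamono : ∀ {i j}, i ≤ j → aa j ≤ aa i := by
    intro i j hij
    induction hij with
    | refl => exact le_refl _
    | step h ih => exact le_trans (haalt _).le (by exact ih)
  have hfltIoo : ∀ x ∈ Ioo P A, f x < x := fun x hx => hflt x ⟨hx.1, hx.2.le⟩
  have htends : ∀ x ∈ Icc P A, Tendsto (fun n => f^[n] x) atTop (𝓝 P) := by
    intro x hx
    rcases eq_or_lt_of_le hx.2 with hA | hA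
    · have : (fun n => f^[n] x) = aa := by rw [haa, hA]
      rw [this]
      have h2 : Tendsto (fun n => aa (n + 1)) atTop (𝓝 P) := by
        have h3 : ∀ n, aa (n+1) = f^[n] (f A) := by
          intro n; rw [haa]; exact Function.iterate_succ_apply f n A
        rw [show (fun n => aa (n+1)) = fun n => f^[n] (f A) from funext h3]
        apply PT.tendsto_iterate_bot hf.cont hf.maps hf.smono hfltIoo hfP
        constructor
        · exact (hf.maps hAS).1
        · exact hflt A ⟨hPA, le_refl _⟩
      exact (tendsto_add_atTop_iff_nat 1).mp h2
    · exact PT.tendsto_iterate_bot hf.cont hf.maps hf.smono hfltIoo hfP ⟨hx.1, hA⟩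
  have haalim : Tendsto aa atTop (𝓝 P) := htends A hAS
  -- g fixes each aa n
  have hgaa : ∀ n, g (aa n) = aa n := by
    intro n; induction n with
    | zero => simpa [haa] using hgA
    | succ n ih =>
        have h1 : g (f (aa n)) = f (g (aa n)) := (hcomm _ (haaS n)).symm
        rw [← haa_succ n, h1, ih]
  -- derivative of g at P is 1
  have hg'P : g' P = 1 := by
    have hder := hg.hd P hPS
    rw [hasDerivWithinAt_iff_tendsto_slope] at hder
    have hseq : Tendsto aa atTop (𝓝[Icc P A \ {P}] P) := by
      apply tendsto_nhdsWithin_of_tendsto_nhds_of_eventually_within _ haalim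
      exact Eventually.of_forall fun n => ⟨haaS n, by simp [(haaP n).ne']⟩
    have h1 : Tendsto (fun n => slope g P (aa n)) atTop (𝓝 (g' P)) := hder.comp hseq
    have h2 : ∀ n, slope g P (aa n) = 1 := by
      intro n
      rw [slope_def_field, hgaa n, hgP]
      exact div_self (sub_ne_zero.mpr (haaP n).ne')
    rw [show (fun n => slope g P (aa n)) = fun _ => (1:ℝ) from funext h2] at h1
    exact tendsto_nhds_unique h1 tendsto_const_nhds
  -- locate x₀ in a fundamental domain
  have hx₀A : x₀ ≠ A := fun h => hx₀ (by rw [h, hgA])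
  have hx₀P : x₀ ≠ P := fun h => hx₀ (by rw [h, hgP])
  have hx₀Ioo : x₀ ∈ Ioo P A := ⟨lt_of_le_of_ne hx₀S.1 (Ne.symm hx₀P), lt_of_le_of_ne hx₀S.2 hx₀A⟩
  have hex : ∃ n, aa n < x₀ := (haalim.eventually (eventually_lt_nhds hx₀Ioo.1)).exists
  have hN0 : ¬ aa 0 < x₀ := by
    simp only [haa, Function.iterate_zero, id_eq]
    exact not_lt.mpr hx₀Ioo.2.le
  obtain ⟨m, hm⟩ : ∃ m, Nat.find hex = m + 1 :=
    Nat.exists_eq_succ_of_ne_zero (by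
      intro h
      exact hN0 (h ▸ Nat.find_spec hex))
  set β := aa (m+1) with hβ
  set α := aa m with hα
  have hβx : β < x₀ := by rw [hβ, ← hm]; exact Nat.find_spec hex
  have hxα : x₀ ≤ α := by
    have := Nat.find_min hex (show m < Nat.find hex by omega)
    exact not_lt.mp this
  have hβα : β < α := haalt m
  have hβS := haaS (m+1)
  have hαS := haaS m
  have hJS : Icc β α ⊆ Icc P A := Icc_subset_Icc hβS.1 hαS.2
  have hx₀J : x₀ ∈ Icc β α := ⟨hβx.le, hxα⟩
  have hgβ : g β = β := hgaa (m+1)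
  have hgα : g α = α := hgaa m
  have hgJ : MapsTo g (Icc β α) (Icc β α) := hg.mapsTo_of_fix hβS hαS hβα.le hgβ hgα
  -- product derivatives
  set Df : ℕ → ℝ → ℝ := fun n x => ∏ i ∈ Finset.range n, f' (f^[i] x) with hDf
  set Dg : ℕ → ℝ → ℝ := fun k x => ∏ i ∈ Finset.range k, g' (g^[i] x) with hDg
  have hDf_deriv : ∀ n, ∀ x ∈ Icc P A, HasDerivWithinAt (f^[n]) (Df n x) (Icc P A) x := by
    intro n; induction n with
    | zero =>
        intro x hx
        simp only [Function.iterate_zero, hDf, Finset.range_zero, Finset.prod_empty]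
        exact hasDerivWithinAt_id x _
    | succ n ih =>
        intro x hx
        have h1 : HasDerivWithinAt f (f' (f^[n] x)) (Icc P A) (f^[n] x) :=
          hf.hd _ ((hf.maps.iterate n) hx)
        have h2 := h1.comp x (ih x hx) (hf.maps.iterate n)
        have h3 : f^[n+1] = f ∘ f^[n] := Function.iterate_succ' f n
        rw [h3]
        exact h2.congr_deriv (by simp only [hDf, Finset.prod_range_succ]; ring)
  have hDg_deriv : ∀ k, ∀ x ∈ Icc P A, HasDerivWithinAt (g^[k]) (Dg k x) (Icc P A) x := by
    intro k; induction k with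
    | zero =>
        intro x hx
        simp only [Function.iterate_zero, hDg, Finset.range_zero, Finset.prod_empty]
        exact hasDerivWithinAt_id x _
    | succ k ih =>
        intro x hx
        have h1 : HasDerivWithinAt g (g' (g^[k] x)) (Icc P A) (g^[k] x) :=
          hg.hd _ ((hg.maps.iterate k) hx)
        have h2 := h1.comp x (ih x hx) (hg.maps.iterate k)
        have h3 : g^[k+1] = g ∘ g^[k] := Function.iterate_succ' g k
        rw [h3]
        exact h2.congr_deriv (by simp only [hDg, Finset.prod_range_succ]; ring)
  have hDfpos : ∀ n, ∀ x ∈ Icc P A, 0 < Df n x := by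
    intro n x hx
    exact Finset.prod_pos fun i _ => hf.dpos _ ((hf.maps.iterate i) hx)
  have hDgpos : ∀ k, ∀ x ∈ Icc P A, 0 < Dg k x := by
    intro k x hx
    exact Finset.prod_pos fun i _ => hg.dpos _ ((hg.maps.iterate i) hx)
  have hgiter_cont : ∀ k, ContinuousOn (g^[k]) (Icc P A) := by
    intro k x hx
    exact (hDg_deriv k x hx).continuousWithinAt
  have hDgcont : ∀ k, ContinuousOn (Dg k) (Icc P A) := by
    intro k; induction k with
    | zero => simp only [hDg, Finset.range_zero, Finset.prod_empty]; exact continuousOn_const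
    | succ k ih =>
        have h1 : ContinuousOn (fun x => g' (g^[k] x)) (Icc P A) :=
          hg.dcont.comp (hgiter_cont k) (hg.maps.iterate k)
        have h2 : Dg (k+1) = fun x => Dg k x * g' (g^[k] x) := by
          funext x; simp only [hDg, Finset.prod_range_succ]
        rw [h2]
        exact ih.mul h1
  have hDgP : ∀ k, Dg k P = 1 := by
    intro k
    simp only [hDg]
    have : ∀ i, g^[i] P = P := fun i => Function.iterate_fixed hgP i
    rw [Finset.prod_congr rfl fun i _ => by rw [this i, hg'P]]
    simp
  -- distortion control
  obtain ⟨C, hC0, hClip⟩ := hf.dlip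
  set K := Real.exp (C * (A - P)) with hK
  have hKpos : 0 < K := Real.exp_pos _
  -- fundamental domain images
  have hfund : ∀ i, ∀ x ∈ Icc β α, f^[i] x ∈ Icc (aa (m+1+i)) (aa (m+i)) := by
    intro i x hx
    have h1 : f^[i] β = aa (m+1+i) := by
      rw [hβ, haa, ← Function.iterate_add_apply]
      congr 1; omega
    have h2 : f^[i] α = aa (m+i) := by
      rw [hα, haa, ← Function.iterate_add_apply]
      congr 1; omega
    have hmono := (PT.iterate_smono hf.smono hf.maps i).monotoneOn
    constructor
    · rw [← h1]; exact hmono hβS (hJS hx) hx.1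
    · rw [← h2]; exact hmono (hJS hx) hαS hx.2
  have hlogdiff : ∀ n, ∀ x ∈ Icc β α, ∀ y ∈ Icc β α,
      Real.log (Df n x) - Real.log (Df n y) ≤ C * (A - P) := by
    intro n x hx y hy
    have hlx : Real.log (Df n x) = ∑ i ∈ Finset.range n, Real.log (f' (f^[i] x)) :=
      Real.log_prod fun i _ => (hf.dpos _ ((hf.maps.iterate i) (hJS hx))).ne'
    have hly : Real.log (Df n y) = ∑ i ∈ Finset.range n, Real.log (f' (f^[i] y)) :=
      Real.log_prod fun i _ => (hf.dpos _ ((hf.maps.iterate i) (hJS hy))).ne'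
    rw [hlx, hly, ← Finset.sum_sub_distrib]
    have hterm : ∀ i ∈ Finset.range n,
        Real.log (f' (f^[i] x)) - Real.log (f' (f^[i] y))
          ≤ C * aa (m+i) - C * aa (m+(i+1)) := by
      intro i _
      have hxi := hfund i x hx
      have hyi := hfund i y hy
      have habs : |f^[i] x - f^[i] y| ≤ aa (m+i) - aa (m+1+i) := by
        rw [abs_sub_le_iff]
        constructor <;> [linarith [hxi.1, hxi.2, hyi.1, hyi.2]; linarith [hxi.1, hxi.2, hyi.1, hyi.2]]
      have h3 := hClip _ ((hf.maps.iterate i) (hJS hx)) _ ((hf.maps.iterate i) (hJS hy))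
      have h4 : Real.log (f' (f^[i] x)) - Real.log (f' (f^[i] y))
          ≤ C * |f^[i] x - f^[i] y| := le_trans (le_abs_self _) h3
      have h5 : C * |f^[i] x - f^[i] y| ≤ C * (aa (m+i) - aa (m+1+i)) :=
        mul_le_mul_of_nonneg_left habs hC0
      have h6 : m + 1 + i = m + (i + 1) := by omega
      rw [h6] at h5
      linarith
    calc ∑ i ∈ Finset.range n,
          (Real.log (f' (f^[i] x)) - Real.log (f' (f^[i] y)))
        ≤ ∑ i ∈ Finset.range n, (C * aa (m+i) - C * aa (m+(i+1))) :=
          Finset.sum_le_sum hterm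
      _ = C * aa (m+0) - C * aa (m+n) := by
          exact Finset.sum_range_sub' (fun i => C * aa (m+i)) n
      _ ≤ C * (A - P) := by
          have h7 : aa (m+0) ≤ A := (haaS _).2
          have h8 : P ≤ aa (m+n) := (haaS _).1
          nlinarith
  have key1 : ∀ n, ∀ x ∈ Icc β α, ∀ y ∈ Icc β α, Df n x ≤ K * Df n y := by
    intro n x hx y hy
    have h := hlogdiff n x hx y hy
    have hx' := hDfpos n x (hJS hx)
    have hy' := hDfpos n y (hJS hy)
    have hlog : Real.log (Df n x) ≤ Real.log (K * Df n y) := by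
      rw [Real.log_mul hKpos.ne' hy'.ne', hK, Real.log_exp]
      linarith
    have := Real.exp_le_exp.mpr hlog
    rwa [Real.exp_log hx', Real.exp_log (by positivity)] at this
  -- commutation identity and the key lower bound on (g^[k])'
  have hcommiter := PT.iterate_comm_self hf.maps hg.maps hcomm
  have key2 : ∀ k, ∀ x ∈ Icc β α, K⁻¹ ≤ Dg k x := by
    intro k x hx
    have hxS := hJS hx
    have hgkx : g^[k] x ∈ Icc β α := (hgJ.iterate k) hx
    have hiden : ∀ n, Dg k (f^[n] x) * Df n x = Df n (g^[k] x) * Dg k x := by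
      intro n
      have h1 : HasDerivWithinAt (g^[k] ∘ f^[n]) (Dg k (f^[n] x) * Df n x) (Icc P A) x :=
        (hDg_deriv k _ ((hf.maps.iterate n) hxS)).comp x (hDf_deriv n x hxS) (hf.maps.iterate n)
      have h2 : HasDerivWithinAt (f^[n] ∘ g^[k]) (Df n (g^[k] x) * Dg k x) (Icc P A) x :=
        (hDf_deriv n _ ((hg.maps.iterate k) hxS)).comp x (hDg_deriv k x hxS) (hg.maps.iterate k)
      have h2' : HasDerivWithinAt (g^[k] ∘ f^[n]) (Df n (g^[k] x) * Dg k x) (Icc P A) x := by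
        apply h2.congr
        · intro y hy
          exact (hcommiter n k y hy).symm
        · exact (hcommiter n k x hxS).symm
      exact ((uniqueDiffOn_Icc hPA) x hxS).eq_deriv _ h1 h2'
    have hineq : ∀ n, Dg k (f^[n] x) / K ≤ Dg k x := by
      intro n
      have hid := hiden n
      have h1 : Df n (g^[k] x) ≤ K * Df n x := key1 n _ hgkx _ hx
      have hDfx := hDfpos n x hxS
      have hDgx := hDgpos k x hxS
      have hDgf := hDgpos k _ ((hf.maps.iterate n) hxS)
      rw [div_le_iff₀ hKpos]
      have h2 : Dg k (f^[n] x) * Df n x ≤ (K * Df n x) * Dg k x := by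
        rw [hid]
        nlinarith
      nlinarith
    have hfnx : Tendsto (fun n => f^[n] x) atTop (𝓝 P) := htends x hxS
    have hfnxW : Tendsto (fun n => f^[n] x) atTop (𝓝[Icc P A] P) := by
      apply tendsto_nhdsWithin_of_tendsto_nhds_of_eventually_within _ hfnx
      exact Eventually.of_forall fun n => (hf.maps.iterate n) hxS
    have hlim1 : Tendsto (fun n => Dg k (f^[n] x)) atTop (𝓝 1) := by
      have := (hDgcont k P hPS).tendsto.comp hfnxW
      rwa [hDgP k] at this
    have hlim2 : Tendsto (fun n => Dg k (f^[n] x) / K) atTop (𝓝 (1 / K)) :=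
      hlim1.div_const K
    have := le_of_tendsto hlim2 (Eventually.of_forall hineq)
    rwa [one_div] at this
  -- the contradiction: derivatives of g^[k] must get small on [x₀, g x₀]
  set u := fun k => g^[k] x₀ with hu
  have huJ : ∀ k, u k ∈ Icc β α := fun k => (hgJ.iterate k) hx₀J
  have hgx₀J : g x₀ ∈ Icc β α := hgJ hx₀J
  have hsucc : ∀ k, u (k+1) = g^[k] (g x₀) := by
    intro k; rw [hu]; exact Function.iterate_succ_apply g k x₀
  set sm := min x₀ (g x₀) with hsm
  set sM := max x₀ (g x₀) with hsM
  have hsmM : sm < sM := min_lt_max.mpr (Ne.symm hx₀)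
  have hsmJ : sm ∈ Icc β α := by
    rcases min_cases x₀ (g x₀) with ⟨h1, _⟩ | ⟨h1, _⟩ <;> rw [hsm, h1]
    exacts [hx₀J, hgx₀J]
  have hsMJ : sM ∈ Icc β α := by
    rcases max_cases x₀ (g x₀) with ⟨h1, _⟩ | ⟨h1, _⟩ <;> rw [hsM, h1]
    exacts [hx₀J, hgx₀J]
  -- u is monotone or antitone, hence converges; successive differences tend to 0
  have hdiff0 : Tendsto (fun k => u (k+1) - u k) atTop (𝓝 0) := by
    have hbddA : BddAbove (range u) := ⟨α, by rintro y ⟨k, rfl⟩; exact (huJ k).2⟩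
    have hbddB : BddBelow (range u) := ⟨β, by rintro y ⟨k, rfl⟩; exact (huJ k).1⟩
    have hconv : ∃ L, Tendsto u atTop (𝓝 L) := by
      rcases lt_or_gt_of_ne hx₀ with hlt | hgt
      · have hanti : Antitone u := by
          apply antitone_nat_of_succ_le
          intro k
          rw [hsucc k]
          exact ((PT.iterate_smono hg.smono hg.maps k) (hJS hgx₀J) (hJS hx₀J) hlt).le
        exact ⟨_, tendsto_atTop_ciInf hanti hbddB⟩
      · have hmono : Monotone u := by
          apply monotone_nat_of_le_succ
          intro k
          rw [hsucc k]
          exact ((PT.iterate_smono hg.smono hg.maps k) (hJS hx₀J) (hJS hgx₀J) hgt).le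
        exact ⟨_, tendsto_atTop_ciSup hmono hbddA⟩
    obtain ⟨L, hL⟩ := hconv
    have := (hL.comp (tendsto_add_atTop_nat 1)).sub hL
    simpa using this
  have hεpos : 0 < (sM - sm) / K := div_pos (by linarith) hKpos
  have hev : ∀ᶠ k in atTop, |u (k+1) - u k| < (sM - sm) / K := by
    have habs : Tendsto (fun k => |u (k+1) - u k|) atTop (𝓝 0) := by
      simpa using hdiff0.abs
    exact habs.eventually_lt_const hεpos
  obtain ⟨k, hk⟩ := hev.exists
  have hIccsub : Icc sm sM ⊆ Icc β α := Icc_subset_Icc hsmJ.1 hsMJ.2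
  have hIoosub : Ioo sm sM ⊆ Ioo P A := by
    intro y hy
    constructor
    · exact lt_of_le_of_lt (le_trans hβS.1 hsmJ.1) hy.1
    · exact lt_of_lt_of_le hy.2 (le_trans hsMJ.2 hαS.2)
  have hcontk : ContinuousOn (g^[k]) (Icc sm sM) :=
    (hgiter_cont k).mono fun y hy => hJS (hIccsub hy)
  have hderivk : ∀ y ∈ Ioo sm sM, HasDerivAt (g^[k]) (Dg k y) y := by
    intro y hy
    have hyIoo : y ∈ Ioo P A := hIoosub hy
    exact (hDg_deriv k y ⟨hyIoo.1.le, hyIoo.2.le⟩).hasDerivAt (Icc_mem_nhds hyIoo.1 hyIoo.2)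
  obtain ⟨ξ, hξ, hslope⟩ := exists_hasDerivAt_eq_slope (g^[k]) (Dg k) hsmM hcontk hderivk
  have hξJ : ξ ∈ Icc β α := hIccsub ⟨hξ.1.le, hξ.2.le⟩
  have hk2 := key2 k ξ hξJ
  have hnum : g^[k] sM - g^[k] sm < (sM - sm) / K := by
    rcases lt_or_gt_of_ne hx₀ with hlt | hgt
    · have h1 : sm = g x₀ := min_eq_right hlt.le
      have h2 : sM = x₀ := max_eq_left hlt.le
      have h3 : g^[k] sM - g^[k] sm = u k - u (k+1) := by
        rw [h1, h2, hsucc k, hu]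
      calc g^[k] sM - g^[k] sm = u k - u (k+1) := h3
        _ ≤ |u (k+1) - u k| := by rw [abs_sub_comm]; exact le_abs_self _
        _ < (sM - sm) / K := hk
    · have h1 : sm = x₀ := min_eq_left hgt.le
      have h2 : sM = g x₀ := max_eq_right hgt.le
      have h3 : g^[k] sM - g^[k] sm = u (k+1) - u k := by
        rw [h1, h2, hsucc k, hu]
      calc g^[k] sM - g^[k] sm = u (k+1) - u k := h3
        _ ≤ |u (k+1) - u k| := le_abs_self _
        _ < (sM - sm) / K := hk
  have hlt2 : Dg k ξ < K⁻¹ := by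
    rw [hslope, div_lt_iff₀ (by linarith : (0:ℝ) < sM - sm)]
    rw [div_eq_inv_mul] at hnum
    linarith
  linarith

end KopellCore

section KopellWrap

/-- A continuous map without fixed points on an open interval has constant sign
of displacement. -/
lemma PT.sign_const {P Q : ℝ} {f : ℝ → ℝ} (hc : ContinuousOn f (Icc P Q))
    (hfpf : ∀ x ∈ Ioo P Q, f x ≠ x) :
    (∀ x ∈ Ioo P Q, f x < x) ∨ (∀ x ∈ Ioo P Q, x < f x) := by
  by_contra hcon
  push_neg at hcon
  obtain ⟨⟨y₁, hy₁, hy₁'⟩, ⟨y₂, hy₂, hy₂'⟩⟩ := hcon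
  have h₁ : y₁ < f y₁ := lt_of_le_of_ne hy₁' (hfpf y₁ hy₁).symm
  have h₂ : f y₂ < y₂ := lt_of_le_of_ne hy₂' (hfpf y₂ hy₂)
  set φ := fun y => f y - y with hφ
  rcases le_total y₁ y₂ with h | h
  · have hsub : Icc y₁ y₂ ⊆ Icc P Q := Icc_subset_Icc hy₁.1.le hy₂.2.le
    have hφc : ContinuousOn φ (Icc y₁ y₂) := ((hc.mono hsub).sub continuousOn_id)
    have h0 : (0:ℝ) ∈ Icc (φ y₂) (φ y₁) := ⟨by simp [hφ]; linarith, by simp [hφ]; linarith⟩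
    obtain ⟨y, hy, hy0⟩ := intermediate_value_Icc' h hφc h0
    have : y ∈ Ioo P Q := ⟨lt_of_lt_of_le hy₁.1 hy.1, lt_of_le_of_lt hy.2 hy₂.2⟩
    exact hfpf y this (by simpa [hφ, sub_eq_zero] using hy0)
  · have hsub : Icc y₂ y₁ ⊆ Icc P Q := Icc_subset_Icc hy₂.1.le hy₁.2.le
    have hφc : ContinuousOn φ (Icc y₂ y₁) := ((hc.mono hsub).sub continuousOn_id)
    have h0 : (0:ℝ) ∈ Icc (φ y₂) (φ y₁) := ⟨by simp [hφ]; linarith, by simp [hφ]; linarith⟩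
    obtain ⟨y, hy, hy0⟩ := intermediate_value_Icc h hφc h0
    have : y ∈ Ioo P Q := ⟨lt_of_lt_of_le hy₂.1 hy.1, lt_of_le_of_lt hy.2 hy₁.2⟩
    exact hfpf y this (by simpa [hφ, sub_eq_zero] using hy0)

lemma kopellIccLt {P Q : ℝ} {f f' g g' : ℝ → ℝ} (hPQ : P < Q)
    (hf : PTReg P Q f f') (hfP : f P = P)
    (hflt : ∀ x ∈ Ioo P Q, f x < x)
    (hg : PTReg P Q g g') (hgP : g P = P) (hgQ : g Q = Q)
    (hcomm : ∀ x ∈ Icc P Q, f (g x) = g (f x))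
    {z : ℝ} (hz : z ∈ Ioo P Q) (hgz : g z = z) :
    ∀ x ∈ Icc P Q, g x = x := by
  have hPz : P < z := hz.1
  have hPmem : P ∈ Icc P Q := ⟨le_refl _, hPQ.le⟩
  have hzmem : z ∈ Icc P Q := ⟨hz.1.le, hz.2.le⟩
  have hfmapsJ : MapsTo f (Icc P z) (Icc P z) := by
    intro x hx
    rcases eq_or_lt_of_le hx.1 with h | h
    · rw [← h, hfP]; exact ⟨le_refl _, hPz.le⟩
    · constructor
      · have := hf.smono hPmem ⟨hx.1, le_trans hx.2 hz.2.le⟩ h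
        rw [hfP] at this; exact this.le
      · exact le_trans (hflt x ⟨h, lt_of_le_of_lt hx.2 hz.2⟩).le hx.2
  have hgmapsJ : MapsTo g (Icc P z) (Icc P z) :=
    hg.mapsTo_of_fix hPmem hzmem hPz.le hgP hgz
  have hfJ : PTReg P z f f' := hf.restrict (le_refl _) hz.2.le hfmapsJ
  have hgJ : PTReg P z g g' := hg.restrict (le_refl _) hz.2.le hgmapsJ
  have hcore := kopell_core hPz hfJ hfP
    (fun x hx => hflt x ⟨hx.1, lt_of_le_of_lt hx.2 hz.2⟩)
    hgJ hgP hgz (fun x hx => hcomm x ⟨hx.1, le_trans hx.2 hz.2.le⟩)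
  intro x hx
  rcases le_or_gt x z with hxz | hxz
  · exact hcore x ⟨hx.1, hxz⟩
  rcases eq_or_lt_of_le hx.2 with hQ | hQ
  · rw [hQ]; exact hgQ
  · have hxmem : x ∈ Icc P Q := hx
    have htend : Tendsto (fun n => f^[n] x) atTop (𝓝 P) :=
      PT.tendsto_iterate_bot hf.cont hf.maps hf.smono hflt hfP ⟨hx.1, hQ⟩
    obtain ⟨n, hn⟩ := (htend.eventually (eventually_lt_nhds hPz)).exists
    have hfnx : f^[n] x ∈ Icc P Q := (hf.maps.iterate n) hxmem
    have h1 : g (f^[n] x) = f^[n] x := hcore _ ⟨hfnx.1, hn.le⟩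
    have h2 : f^[n] (g x) = f^[n] x := by
      have h3 := PT.iterate_comm_self hf.maps hg.maps hcomm n 1 x hxmem
      simp only [Function.iterate_one] at h3
      rw [h3, h1]
    exact (PT.iterate_smono hf.smono hf.maps n).injOn (hg.maps hxmem) hxmem h2

/-- Kopell's lemma on a closed interval: if `f` has no interior fixed point,
`g` commutes with `f`, both fix the endpoints, and `g` has an interior fixed
point, then `g` is the identity. -/
lemma kopellIcc {P Q : ℝ} {f f' g g' : ℝ → ℝ} (hPQ : P < Q)
    (hf : PTReg P Q f f') (hfP : f P = P) (hfQ : f Q = Q)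
    (hfpf : ∀ x ∈ Ioo P Q, f x ≠ x)
    (hg : PTReg P Q g g') (hgP : g P = P) (hgQ : g Q = Q)
    (hcomm : ∀ x ∈ Icc P Q, f (g x) = g (f x))
    {z : ℝ} (hz : z ∈ Ioo P Q) (hgz : g z = z) :
    ∀ x ∈ Icc P Q, g x = x := by
  rcases PT.sign_const hf.cont hfpf with hlt | hgt
  · exact kopellIccLt hPQ hf hfP hlt hg hgP hgQ hcomm hz hgz
  · -- reflect the picture
    have hmem : ∀ y ∈ Icc (-Q) (-P), -y ∈ Icc P Q := by
      intro y hy; simp only [mem_Icc] at hy ⊢; constructor <;> linarith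
    have hres := kopellIccLt (neg_lt_neg hPQ) hf.reflect
      (by simp [hfQ])
      (by
        intro y hy
        have hyI : -y ∈ Ioo P Q := by
          simp only [mem_Ioo] at hy ⊢; constructor <;> linarith
        have := hgt _ hyI
        show -f (-y) < y
        linarith)
      hg.reflect
      (by simp [hgQ])
      (by simp [hgP])
      (by
        intro y hy
        have h1 := hcomm (-y) (hmem y hy)
        show -f (-(-g (-y))) = -g (-(-f (-y)))
        rw [neg_neg, neg_neg, h1])
      (show -z ∈ Ioo (-Q) (-P) from ⟨neg_lt_neg hz.2, neg_lt_neg hz.1⟩)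
      (by simp [hgz])
    intro x hx
    have hx' : -x ∈ Icc (-Q) (-P) := ⟨neg_le_neg hx.2, neg_le_neg hx.1⟩
    have := hres (-x) hx'
    simp only [neg_neg] at this
    linarith [this]

end KopellWrap

/-- `f` is an orientation-preserving `C^n` diffeomorphism of the set `s ⊆ ℝ`
onto itself: it maps `s` bijectively onto `s`, is `C^n` on `s`, and has
everywhere positive derivative on `s` (hence is orientation-preserving).
Note that when such maps form a group, the inverse map, which is again a
member of the group, is automatically `C^n` as well. -/
def IsDiffeoOn (n : WithTop ℕ∞) (s : Set ℝ) (f : ℝ → ℝ) : Prop :=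
  Set.InjOn f s ∧ f '' s = s ∧ ContDiffOn ℝ n f s ∧ ∀ x ∈ s, 0 < derivWithin f s x


section Builder

lemma log_lip_aux {m M u v : ℝ} (hm : 0 < m) (hmu : m ≤ u) (hmv : m ≤ v)
    (huv : |u - v| ≤ M) : |Real.log u - Real.log v| ≤ M / m := by
  have key : ∀ {x y : ℝ}, m ≤ x → m ≤ y → y ≤ x → x - y ≤ M →
      Real.log x - Real.log y ≤ M / m := by
    intro x y hmx hmy hyx hxy
    have hx : 0 < x := lt_of_lt_of_le hm hmx
    have hy : 0 < y := lt_of_lt_of_le hm hmy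
    have h1 : Real.log x - Real.log y = Real.log (x / y) := by
      rw [Real.log_div hx.ne' hy.ne']
    rw [h1]
    have h2 : Real.log (x / y) ≤ x / y - 1 := Real.log_le_sub_one_of_pos (by positivity)
    have h3 : x / y - 1 = (x - y) / y := by field_simp
    have h4 : (x - y) / y ≤ M / m := by gcongr; linarith
    linarith
  rcases le_total v u with h | h
  · rw [abs_of_nonneg (by linarith [Real.log_le_log (lt_of_lt_of_le hm hmv) h] :
      (0:ℝ) ≤ Real.log u - Real.log v)]
    exact key hmu hmv h (by rw [abs_of_nonneg (by linarith)] at huv; exact huv)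
  · rw [abs_sub_comm]
    rw [abs_of_nonneg (by linarith [Real.log_le_log (lt_of_lt_of_le hm hmu) h] :
      (0:ℝ) ≤ Real.log v - Real.log u)]
    exact key hmv hmu h (by rw [abs_sub_comm, abs_of_nonneg (by linarith)] at huv; exact huv)

/-- From a `C²` diffeo of `[0,1]` we extract the regularity package. -/
lemma isDiffeo_PTReg {f : ℝ → ℝ} (h : IsDiffeoOn 2 (Icc 0 1) f) :
    PTReg 0 1 f (derivWithin f (Icc 0 1)) ∧ f 0 = 0 ∧ f 1 = 1 := by
  obtain ⟨hinj, himg, hcd, hdpos⟩ := h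
  have hI : UniqueDiffOn ℝ (Icc (0:ℝ) 1) := uniqueDiffOn_Icc zero_lt_one
  set f' := derivWithin f (Icc (0:ℝ) 1) with hf'
  have hdiffOn : DifferentiableOn ℝ f (Icc (0:ℝ) 1) :=
    hcd.differentiableOn (by norm_num)
  have hder : ∀ x ∈ Icc (0:ℝ) 1, HasDerivWithinAt f (f' x) (Icc (0:ℝ) 1) x :=
    fun x hx => (hdiffOn x hx).hasDerivWithinAt
  have hcont : ContinuousOn f (Icc (0:ℝ) 1) := hcd.continuousOn
  have hmaps : MapsTo f (Icc (0:ℝ) 1) (Icc (0:ℝ) 1) := by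
    intro x hx
    have : f x ∈ f '' Icc (0:ℝ) 1 := mem_image_of_mem f hx
    rwa [himg] at this
  -- strict monotonicity
  have hsmono : StrictMonoOn f (Icc (0:ℝ) 1) := by
    apply strictMonoOn_of_deriv_pos (convex_Icc 0 1) hcont
    intro x hx
    rw [interior_Icc] at hx
    have hxI : x ∈ Icc (0:ℝ) 1 := ⟨hx.1.le, hx.2.le⟩
    have hnh : Icc (0:ℝ) 1 ∈ 𝓝 x := Icc_mem_nhds hx.1 hx.2
    have hda := (hder x hxI).hasDerivAt hnh
    rw [hda.deriv]
    exact hdpos x hxI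
  have hf'cd : ContDiffOn ℝ 1 f' (Icc 0 1) := hcd.derivWithin hI (by norm_num)
  have hf'cont : ContinuousOn f' (Icc 0 1) := hf'cd.continuousOn
  set f'' := derivWithin f' (Icc (0:ℝ) 1) with hf''def
  have hf''cont : ContinuousOn f'' (Icc 0 1) := hf'cd.continuousOn_derivWithin hI (by norm_num)
  obtain ⟨M, hM⟩ := isCompact_Icc.exists_bound_of_continuousOn hf''cont
  have hf'der : ∀ x ∈ Icc (0:ℝ) 1, HasDerivWithinAt f' (f'' x) (Icc 0 1) x :=
    fun x hx => ((hf'cd.differentiableOn one_ne_zero) x hx).hasDerivWithinAt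
  have hf'lip : ∀ x ∈ Icc (0:ℝ) 1, ∀ y ∈ Icc (0:ℝ) 1, |f' x - f' y| ≤ M * |x - y| := by
    intro x hx y hy
    have := Convex.norm_image_sub_le_of_norm_hasDerivWithin_le hf'der hM (convex_Icc 0 1) hy hx
    simpa [Real.norm_eq_abs] using this
  obtain ⟨xm, hxm, hxmin⟩ := isCompact_Icc.exists_isMinOn (nonempty_Icc.mpr zero_le_one) hf'cont
  set m := f' xm with hmdef
  have hmpos : 0 < m := hdpos xm hxm
  have hmle : ∀ x ∈ Icc (0:ℝ) 1, m ≤ f' x := fun x hx => hxmin hx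
  have h0mem : (0:ℝ) ∈ Icc (0:ℝ) 1 := ⟨le_refl _, zero_le_one⟩
  have h1mem : (1:ℝ) ∈ Icc (0:ℝ) 1 := ⟨zero_le_one, le_refl _⟩
  refine ⟨⟨hsmono, hmaps, hder, hdpos, hf'cont, ⟨M / m, ?_, ?_⟩⟩, ?_, ?_⟩
  · have h0 : (0:ℝ) ≤ M := le_trans (norm_nonneg _) (hM 0 h0mem)
    positivity
  · intro x hx y hy
    have h1 : |f' x - f' y| ≤ M * |x - y| := hf'lip x hx y hy
    have h2 := log_lip_aux hmpos (hmle x hx) (hmle y hy) h1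
    calc |Real.log (f' x) - Real.log (f' y)| ≤ M * |x - y| / m := h2
      _ = M / m * |x - y| := by ring
  · obtain ⟨y, hy, hy0⟩ : ∃ y ∈ Icc (0:ℝ) 1, f y = 0 := by
      have h3 : (0:ℝ) ∈ f '' Icc 0 1 := by rw [himg]; exact h0mem
      obtain ⟨y, hy, h⟩ := h3; exact ⟨y, hy, h⟩
    have h2 : f 0 ≤ f y := hsmono.monotoneOn h0mem hy hy.1
    rw [hy0] at h2
    exact le_antisymm h2 (hmaps h0mem).1
  · obtain ⟨y, hy, hy1⟩ : ∃ y ∈ Icc (0:ℝ) 1, f y = 1 := by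
      have h3 : (1:ℝ) ∈ f '' Icc 0 1 := by rw [himg]; exact h1mem
      obtain ⟨y, hy, h⟩ := h3; exact ⟨y, hy, h⟩
    have h2 : f y ≤ f 1 := hsmono.monotoneOn hy h1mem hy.2
    rw [hy1] at h2
    exact le_antisymm (hmaps h1mem).2 h2

/-- Extraction of the connected component of non-fixed points around a
non-fixed point `x₀`. -/
lemma PT.exists_comp {h : ℝ → ℝ} (hc : ContinuousOn h (Icc 0 1))
    (h0 : h 0 = 0) (h1 : h 1 = 1) {x₀ : ℝ} (hx₀ : x₀ ∈ Icc (0:ℝ) 1) (hne : h x₀ ≠ x₀) :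
    ∃ p q, 0 ≤ p ∧ p < x₀ ∧ x₀ < q ∧ q ≤ 1 ∧ h p = p ∧ h q = q ∧
      ∀ y ∈ Ioo p q, h y ≠ y := by
  set E := {y | y ∈ Icc (0:ℝ) x₀ ∧ h y = y} with hE
  set F := {y | y ∈ Icc x₀ (1:ℝ) ∧ h y = y} with hF
  have hE0 : (0:ℝ) ∈ E := ⟨⟨le_refl _, hx₀.1⟩, h0⟩
  have hF1 : (1:ℝ) ∈ F := ⟨⟨hx₀.2, le_refl _⟩, h1⟩
  have hEbdd : BddAbove E := ⟨x₀, fun y hy => hy.1.2⟩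
  have hFbdd : BddBelow F := ⟨x₀, fun y hy => hy.1.1⟩
  set p := sSup E with hp
  set q := sInf F with hq
  have hpx : p ≤ x₀ := csSup_le ⟨0, hE0⟩ fun y hy => hy.1.2
  have h0p : 0 ≤ p := le_csSup hEbdd hE0
  have hxq : x₀ ≤ q := le_csInf ⟨1, hF1⟩ fun y hy => hy.1.1
  have hq1 : q ≤ 1 := csInf_le hFbdd hF1
  have hpI : p ∈ Icc (0:ℝ) 1 := ⟨h0p, le_trans hpx hx₀.2⟩
  have hqI : q ∈ Icc (0:ℝ) 1 := ⟨le_trans hx₀.1 hxq, hq1⟩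
  -- h p = p
  have hhp : h p = p := by
    obtain ⟨u, hu_mono, hu_tend, hu_mem⟩ := exists_seq_tendsto_sSup ⟨0, hE0⟩ hEbdd
    have huI : ∀ n, u n ∈ Icc (0:ℝ) 1 :=
      fun n => ⟨(hu_mem n).1.1, le_trans (hu_mem n).1.2 hx₀.2⟩
    have htW : Tendsto u atTop (𝓝[Icc (0:ℝ) 1] p) := by
      apply tendsto_nhdsWithin_of_tendsto_nhds_of_eventually_within _ hu_tend
      exact Eventually.of_forall huI
    have hA : Tendsto (fun n => h (u n)) atTop (𝓝 (h p)) := (hc p hpI).tendsto.comp htW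
    have hB : Tendsto (fun n => h (u n)) atTop (𝓝 p) := by
      have : (fun n => h (u n)) = u := funext fun n => (hu_mem n).2
      rw [this]; exact hu_tend
    exact tendsto_nhds_unique hA hB
  have hhq : h q = q := by
    obtain ⟨u, hu_anti, hu_tend, hu_mem⟩ := exists_seq_tendsto_sInf ⟨1, hF1⟩ hFbdd
    have huI : ∀ n, u n ∈ Icc (0:ℝ) 1 :=
      fun n => ⟨le_trans hx₀.1 (hu_mem n).1.1, (hu_mem n).1.2⟩
    have htW : Tendsto u atTop (𝓝[Icc (0:ℝ) 1] q) := by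
      apply tendsto_nhdsWithin_of_tendsto_nhds_of_eventually_within _ hu_tend
      exact Eventually.of_forall huI
    have hA : Tendsto (fun n => h (u n)) atTop (𝓝 (h q)) := (hc q hqI).tendsto.comp htW
    have hB : Tendsto (fun n => h (u n)) atTop (𝓝 q) := by
      have : (fun n => h (u n)) = u := funext fun n => (hu_mem n).2
      rw [this]; exact hu_tend
    exact tendsto_nhds_unique hA hB
  have hplt : p < x₀ := by
    rcases eq_or_lt_of_le hpx with heq | hlt
    · exact absurd (heq ▸ hhp) hne
    · exact hlt
  have hqgt : x₀ < q := by
    rcases eq_or_lt_of_le hxq with heq | hlt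
    · exact absurd (heq ▸ hhq) hne
    · exact hlt
  refine ⟨p, q, h0p, hplt, hqgt, hq1, hhp, hhq, ?_⟩
  intro y hy hfix
  rcases le_total y x₀ with hyx | hyx
  · have : y ∈ E := ⟨⟨le_trans h0p hy.1.le, hyx⟩, hfix⟩
    exact absurd (le_csSup hEbdd this) (not_le.mpr hy.1)
  · have : y ∈ F := ⟨⟨hyx, le_trans hy.2.le hq1⟩, hfix⟩
    exact absurd (csInf_le hFbdd this) (not_le.mpr hy.2)

/-- Core dynamical statement: a central element of a group of `C²` diffeos of
`[0,1]` which is a commutator must act trivially. -/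
theorem PT.main_aux {G : Type*} [Group G] (ρ : G → ℝ → ℝ)
    (hmul : ∀ g h : G, ∀ x ∈ Icc (0:ℝ) 1, ρ (g * h) x = ρ g (ρ h x))
    (hone : ∀ x ∈ Icc (0:ℝ) 1, ρ 1 x = x)
    (hdiff : ∀ g : G, IsDiffeoOn 2 (Icc (0:ℝ) 1) (ρ g))
    (c : G) (hcent : ∀ g : G, c * g = g * c)
    (a b : G) (hcab : a * b * a⁻¹ * b⁻¹ = c) :
    ∀ x ∈ Icc (0:ℝ) 1, ρ c x = x := by
  by_contra hcon
  push_neg at hcon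
  obtain ⟨x₀, hx₀I, hx₀⟩ := hcon
  have hreg : ∀ g : G, PTReg 0 1 (ρ g) (derivWithin (ρ g) (Icc 0 1)) :=
    fun g => (isDiffeo_PTReg (hdiff g)).1
  have hfix0 : ∀ g : G, ρ g 0 = 0 := fun g => (isDiffeo_PTReg (hdiff g)).2.1
  have hfix1 : ∀ g : G, ρ g 1 = 1 := fun g => (isDiffeo_PTReg (hdiff g)).2.2
  have hmemI : ∀ (g : G) {x : ℝ}, x ∈ Icc (0:ℝ) 1 → ρ g x ∈ Icc (0:ℝ) 1 :=
    fun g {x} hx => (hreg g).maps hx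
  have hinvl : ∀ (g : G) {x : ℝ}, x ∈ Icc (0:ℝ) 1 → ρ g⁻¹ (ρ g x) = x := by
    intro g x hx
    rw [← hmul g⁻¹ g x hx, inv_mul_cancel, hone x hx]
  have hinvr : ∀ (g : G) {x : ℝ}, x ∈ Icc (0:ℝ) 1 → ρ g (ρ g⁻¹ x) = x := by
    intro g x hx
    rw [← hmul g g⁻¹ x hx, mul_inv_cancel, hone x hx]
  have hcommc : ∀ (g : G) {x : ℝ}, x ∈ Icc (0:ℝ) 1 → ρ c (ρ g x) = ρ g (ρ c x) := by
    intro g x hx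
    rw [← hmul c g x hx, hcent g, hmul g c x hx]
  -- the component of non-fixed points of c around x₀
  obtain ⟨p, q, h0p, hpx, hxq, hq1, hcp, hcq, hfpf⟩ :=
    PT.exists_comp (hreg c).cont (hfix0 c) (hfix1 c) hx₀I hx₀
  have hpq : p < q := lt_trans hpx hxq
  have hpI : p ∈ Icc (0:ℝ) 1 := ⟨h0p, by linarith⟩
  have hqI : q ∈ Icc (0:ℝ) 1 := ⟨by linarith, hq1⟩
  have hx₀pq : x₀ ∈ Ioo p q := ⟨hpx, hxq⟩
  have hsub_pq : Icc p q ⊆ Icc (0:ℝ) 1 := Icc_subset_Icc h0p hq1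
  have hfixptc : ∀ (g : G) {x : ℝ}, x ∈ Icc (0:ℝ) 1 → ρ c x = x → ρ c (ρ g x) = ρ g x := by
    intro g x hx hfix
    rw [hcommc g hx, hfix]
  have hiterpow : ∀ (g : G) (n : ℕ), ∀ x ∈ Icc (0:ℝ) 1, ρ (g ^ n) x = (ρ g)^[n] x := by
    intro g n
    induction n with
    | zero => intro x hx; simpa using hone x hx
    | succ n ih =>
        intro x hx
        rw [show g ^ (n+1) = g * g ^ n from pow_succ' g n, hmul g (g^n) x hx, ih x hx,
          Function.iterate_succ_apply']
  -- "moving case" is impossible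
  have hmove : ∀ w : G, q ≤ ρ w p → False := by
    intro w hwp
    have hwpne : ρ w p ≠ p := by intro h; rw [h] at hwp; linarith
    obtain ⟨r, s, h0r, hrp, hps, hs1, hwr, hws, hwfpf⟩ :=
      PT.exists_comp (hreg w).cont (hfix0 w) (hfix1 w) hpI hwpne
    have hrs : r < s := lt_trans hrp hps
    have hrI : r ∈ Icc (0:ℝ) 1 := ⟨h0r, by linarith⟩
    have hsI : s ∈ Icc (0:ℝ) 1 := ⟨by linarith, hs1⟩
    have hsub_rs : Icc r s ⊆ Icc (0:ℝ) 1 := Icc_subset_Icc h0r hs1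
    have hprs : p ∈ Ioo r s := ⟨hrp, hps⟩
    have hwsign : ∀ y ∈ Ioo r s, y < ρ w y := by
      rcases PT.sign_const ((hreg w).cont.mono hsub_rs) hwfpf with hlt | hgt
      · exfalso; have := hlt p hprs; linarith
      · exact hgt
    have hwmaps_rs : MapsTo (ρ w) (Icc r s) (Icc r s) :=
      (hreg w).mapsTo_of_fix hrI hsI hrs.le hwr hws
    have hq_lt_s : q < s := by
      have h1 : ρ w p < ρ w s := (hreg w).smono (hsub_rs ⟨hrp.le, hps.le⟩) hsI hps
      rw [hws] at h1
      linarith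
    have hqrs : q ∈ Ioo r s := ⟨by linarith, hq_lt_s⟩
    -- c fixes s (iterating w from q)
    have hcfixiter : ∀ n, ρ c ((ρ w)^[n] q) = (ρ w)^[n] q := by
      intro n
      induction n with
      | zero => simpa using hcq
      | succ n ih =>
          have hmem := (hwmaps_rs.iterate n) ⟨hqrs.1.le, hq_lt_s.le⟩
          rw [Function.iterate_succ_apply']
          calc ρ c (ρ w ((ρ w)^[n] q)) = ρ w (ρ c ((ρ w)^[n] q)) := hcommc w (hsub_rs hmem)
            _ = ρ w ((ρ w)^[n] q) := by rw [ih]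
    have htop : Tendsto (fun n => (ρ w)^[n] q) atTop (𝓝 s) :=
      PT.tendsto_iterate_top ((hreg w).cont.mono hsub_rs) hwmaps_rs
        ((hreg w).smono.mono hsub_rs) hwsign hws ⟨hqrs.1, hq_lt_s.le⟩
    have hcs : ρ c s = s := by
      have hseqW : Tendsto (fun n => (ρ w)^[n] q) atTop (𝓝[Icc (0:ℝ) 1] s) := by
        apply tendsto_nhdsWithin_of_tendsto_nhds_of_eventually_within _ htop
        exact Eventually.of_forall fun n => hsub_rs ((hwmaps_rs.iterate n) ⟨hqrs.1.le, hq_lt_s.le⟩)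
      have hA : Tendsto (fun n => ρ c ((ρ w)^[n] q)) atTop (𝓝 (ρ c s)) :=
        ((hreg c).cont s hsI).tendsto.comp hseqW
      have hB : Tendsto (fun n => ρ c ((ρ w)^[n] q)) atTop (𝓝 s) := by
        rw [show (fun n => ρ c ((ρ w)^[n] q)) = fun n => (ρ w)^[n] q from funext hcfixiter]
        exact htop
      exact tendsto_nhds_unique hA hB
    -- c fixes r (iterating w⁻¹ from q)
    have hwir : ρ w⁻¹ r = r := by
      have h1 := hinvl w hrI
      rwa [hwr] at h1
    have hwis : ρ w⁻¹ s = s := by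
      have h1 := hinvl w hsI
      rwa [hws] at h1
    have hwimaps_rs : MapsTo (ρ w⁻¹) (Icc r s) (Icc r s) :=
      (hreg w⁻¹).mapsTo_of_fix hrI hsI hrs.le hwir hwis
    have hwisign : ∀ y ∈ Ioo r s, ρ w⁻¹ y < y := by
      intro y hy
      have hyI : y ∈ Icc (0:ℝ) 1 := hsub_rs (Ioo_subset_Icc_self hy)
      have hmemy : ρ w⁻¹ y ∈ Icc r s := hwimaps_rs (Ioo_subset_Icc_self hy)
      rcases eq_or_lt_of_le hmemy.1 with h1 | h1
      · exfalso
        have := congrArg (ρ w) h1.symm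
        rw [hinvr w hyI, hwr] at this
        rw [this] at hy
        exact lt_irrefl r hy.1
      rcases eq_or_lt_of_le hmemy.2 with h2 | h2
      · exfalso
        have := congrArg (ρ w) h2
        rw [hinvr w hyI, hws] at this
        rw [this] at hy
        exact lt_irrefl s hy.2
      · have h3 := hwsign _ ⟨h1, h2⟩
        rw [hinvr w hyI] at h3
        exact h3
    have hcifixiter : ∀ n, ρ c ((ρ w⁻¹)^[n] q) = (ρ w⁻¹)^[n] q := by
      intro n
      induction n with
      | zero => simpa using hcq
      | succ n ih =>
          have hmem := (hwimaps_rs.iterate n) ⟨hqrs.1.le, hq_lt_s.le⟩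
          rw [Function.iterate_succ_apply']
          calc ρ c (ρ w⁻¹ ((ρ w⁻¹)^[n] q)) = ρ w⁻¹ (ρ c ((ρ w⁻¹)^[n] q)) :=
                hcommc w⁻¹ (hsub_rs hmem)
            _ = ρ w⁻¹ ((ρ w⁻¹)^[n] q) := by rw [ih]
    have hbot : Tendsto (fun n => (ρ w⁻¹)^[n] q) atTop (𝓝 r) :=
      PT.tendsto_iterate_bot ((hreg w⁻¹).cont.mono hsub_rs) hwimaps_rs
        ((hreg w⁻¹).smono.mono hsub_rs) hwisign hwir ⟨hqrs.1.le, hq_lt_s⟩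
    have hcr : ρ c r = r := by
      have hseqW : Tendsto (fun n => (ρ w⁻¹)^[n] q) atTop (𝓝[Icc (0:ℝ) 1] r) := by
        apply tendsto_nhdsWithin_of_tendsto_nhds_of_eventually_within _ hbot
        exact Eventually.of_forall fun n => hsub_rs ((hwimaps_rs.iterate n) ⟨hqrs.1.le, hq_lt_s.le⟩)
      have hA : Tendsto (fun n => ρ c ((ρ w⁻¹)^[n] q)) atTop (𝓝 (ρ c r)) :=
        ((hreg c).cont r hrI).tendsto.comp hseqW
      have hB : Tendsto (fun n => ρ c ((ρ w⁻¹)^[n] q)) atTop (𝓝 r) := by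
        rw [show (fun n => ρ c ((ρ w⁻¹)^[n] q)) = fun n => (ρ w⁻¹)^[n] q from funext hcifixiter]
        exact hbot
      exact tendsto_nhds_unique hA hB
    -- Kopell on [r,s] : c must be the identity there, contradiction at x₀
    have hcmaps_rs : MapsTo (ρ c) (Icc r s) (Icc r s) :=
      (hreg c).mapsTo_of_fix hrI hsI hrs.le hcr hcs
    have hkop := kopellIcc hrs ((hreg w).restrict h0r hs1 hwmaps_rs) hwr hws hwfpf
      ((hreg c).restrict h0r hs1 hcmaps_rs) hcr hcs
      (fun x hx => (hcommc w (hsub_rs hx)).symm) hqrs hcq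
    have hx₀rs : x₀ ∈ Icc r s := ⟨by linarith [hx₀pq.1], by linarith [hx₀pq.2]⟩
    exact hx₀ (hkop x₀ hx₀rs)
  -- Claim A : every element fixes p and q
  have claimA : ∀ g : G, ρ g p = p ∧ ρ g q = q := by
    intro g
    have hgp_cases : ρ g p ≤ p ∨ q ≤ ρ g p := by
      by_contra hcon2
      push_neg at hcon2
      exact hfpf _ ⟨hcon2.1, hcon2.2⟩ (hfixptc g hpI hcp)
    have hgq_cases : ρ g q ≤ p ∨ q ≤ ρ g q := by
      by_contra hcon2
      push_neg at hcon2
      exact hfpf _ ⟨hcon2.1, hcon2.2⟩ (hfixptc g hqI hcq)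
    rcases hgp_cases with hgp | hgp
    · rcases hgq_cases with hgq | hgq
      · exfalso
        apply hmove g⁻¹
        have h1 : ρ g⁻¹ (ρ g q) ≤ ρ g⁻¹ p :=
          (hreg g⁻¹).smono.monotoneOn (hmemI g hqI) hpI hgq
        rwa [hinvl g hqI] at h1
      · -- g fixes both p and q
        have hginvp_ge : p ≤ ρ g⁻¹ p := by
          have h1 : ρ g⁻¹ (ρ g p) ≤ ρ g⁻¹ p :=
            (hreg g⁻¹).smono.monotoneOn (hmemI g hpI) hpI hgp
          rwa [hinvl g hpI] at h1
        have hginvp_le : ρ g⁻¹ p ≤ q := by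
          have h1 : ρ g⁻¹ p ≤ ρ g⁻¹ (ρ g q) :=
            (hreg g⁻¹).smono.monotoneOn hpI (hmemI g hqI) (le_trans hpq.le hgq)
          rwa [hinvl g hqI] at h1
        have hgp_eq : ρ g p = p := by
          have hginvp : ρ g⁻¹ p = p := by
            rcases eq_or_lt_of_le hginvp_ge with h1 | h1
            · exact h1.symm
            rcases eq_or_lt_of_le hginvp_le with h2 | h2
            · exfalso
              have h3 := congrArg (ρ g) h2
              rw [hinvr g hpI] at h3
              linarith [hgq, h3 ▸ hgq]
            · exact ((hfpf _ ⟨h1, h2⟩) (hfixptc g⁻¹ hpI hcp)).elim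
          have h4 := congrArg (ρ g) hginvp
          rw [hinvr g hpI] at h4
          exact h4.symm
        have hgq_eq : ρ g q = q := by
          have hginvq_le : ρ g⁻¹ q ≤ q := by
            have h1 : ρ g⁻¹ (ρ g q) ≥ ρ g⁻¹ q :=
              (hreg g⁻¹).smono.monotoneOn hqI (hmemI g hqI) hgq
            rwa [hinvl g hqI] at h1
          have hginvq_ge : p ≤ ρ g⁻¹ q := by
            have h1 : ρ g⁻¹ p ≤ ρ g⁻¹ q :=
              (hreg g⁻¹).smono.monotoneOn hpI hqI hpq.le
            have h2 : ρ g⁻¹ p = p := by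
              have h3 := congrArg (ρ g⁻¹) hgp_eq.symm
              rw [← hmul g⁻¹ g p hpI, inv_mul_cancel, hone p hpI] at h3
              -- h3 : p = ρ g⁻¹ p
              exact h3
            rwa [h2] at h1
          have hginvq : ρ g⁻¹ q = q := by
            rcases eq_or_lt_of_le hginvq_le with h1 | h1
            · exact h1
            rcases eq_or_lt_of_le hginvq_ge with h2 | h2
            · exfalso
              have h3 := congrArg (ρ g) h2
              rw [hinvr g hqI] at h3
              -- h3 : ρ g p = q, but ρ g p = p
              rw [hgp_eq] at h3
              linarith
            · exact ((hfpf _ ⟨h2, h1⟩) (hfixptc g⁻¹ hqI hcq)).elim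
          have h4 := congrArg (ρ g) hginvq
          rw [hinvr g hqI] at h4
          exact h4.symm
        exact ⟨hgp_eq, hgq_eq⟩
    · exact (hmove g hgp).elim
  have hfixp : ∀ g : G, ρ g p = p := fun g => (claimA g).1
  have hfixq : ∀ g : G, ρ g q = q := fun g => (claimA g).2
  have hmaps_pq : ∀ g : G, MapsTo (ρ g) (Icc p q) (Icc p q) :=
    fun g => (hreg g).mapsTo_of_fix hpI hqI hpq.le (hfixp g) (hfixq g)
  have hreg_pq : ∀ g : G, PTReg p q (ρ g) (derivWithin (ρ g) (Icc 0 1)) :=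
    fun g => (hreg g).restrict h0p hq1 (hmaps_pq g)
  have hIoo_pq : ∀ (g : G) {y : ℝ}, y ∈ Ioo p q → ρ g y ∈ Ioo p q := by
    intro g y hy
    have hyI : y ∈ Icc (0:ℝ) 1 := hsub_pq (Ioo_subset_Icc_self hy)
    constructor
    · have h1 : ρ g p < ρ g y := (hreg g).smono hpI hyI hy.1
      rwa [hfixp g] at h1
    · have h1 : ρ g y < ρ g q := (hreg g).smono hyI hqI hy.2
      rwa [hfixq g] at h1
  have kopell_pq : ∀ g : G, (∃ z ∈ Ioo p q, ρ g z = z) → ∀ x ∈ Icc p q, ρ g x = x := by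
    rintro g ⟨z, hz, hgz⟩
    exact kopellIcc hpq (hreg_pq c) hcp hcq hfpf (hreg_pq g) (hfixp g) (hfixq g)
      (fun x hx => hcommc g (hsub_pq hx)) hz hgz
  have signA : ∀ g : G, (∀ y ∈ Ioo p q, y ≤ ρ g y) ∨ (∀ y ∈ Ioo p q, ρ g y ≤ y) := by
    intro g
    by_cases hex : ∃ z ∈ Ioo p q, ρ g z = z
    · left
      intro y hy
      rw [kopell_pq g hex y (Ioo_subset_Icc_self hy)]
    · push_neg at hex
      rcases PT.sign_const ((hreg g).cont.mono hsub_pq) hex with h | h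
      · right; exact fun y hy => (h y hy).le
      · left; exact fun y hy => (h y hy).le
  -- normalize c so that it moves points to the right on (p,q)
  obtain ⟨cp, hcp4, hcplus⟩ : ∃ cp : G, (c = cp ∨ c = cp⁻¹) ∧ ∀ y ∈ Ioo p q, y < ρ cp y := by
    rcases PT.sign_const ((hreg c).cont.mono hsub_pq) hfpf with hlt | hgt
    · refine ⟨c⁻¹, Or.inr (by group), ?_⟩
      intro y hy
      have h1 := hIoo_pq c⁻¹ hy
      have h2 := hlt _ h1
      rwa [hinvr c (hsub_pq (Ioo_subset_Icc_self hy))] at h2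
    · exact ⟨c, Or.inl rfl, hgt⟩
  -- the quasi-morphism machinery
  set ψ : ℤ → ℝ := fun k => ρ (cp ^ k) x₀ with hψdef
  have hψIoo : ∀ k, ψ k ∈ Ioo p q := fun k => hIoo_pq _ hx₀pq
  have hψI : ∀ k, ψ k ∈ Icc (0:ℝ) 1 := fun k => hsub_pq (Ioo_subset_Icc_self (hψIoo k))
  have hψ_succ : ∀ k : ℤ, ψ (k+1) = ρ cp (ψ k) := by
    intro k
    show ρ (cp ^ (k+1)) x₀ = ρ cp (ρ (cp ^ k) x₀)
    rw [show cp^(k+1) = cp * cp^k by rw [add_comm, zpow_add, zpow_one], hmul cp (cp^k) x₀ hx₀I]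
  have hψmono : StrictMono ψ := strictMono_int_of_lt_succ fun k => by
    rw [hψ_succ k]; exact hcplus _ (hψIoo k)
  have hcpinv_lt : ∀ y ∈ Ioo p q, ρ cp⁻¹ y < y := by
    intro y hy
    have h1 := hIoo_pq cp⁻¹ hy
    have h2 := hcplus _ h1
    rwa [hinvr cp (hsub_pq (Ioo_subset_Icc_self hy))] at h2
  have htopcp : Tendsto (fun n => (ρ cp)^[n] x₀) atTop (𝓝 q) :=
    PT.tendsto_iterate_top ((hreg cp).cont.mono hsub_pq) (hmaps_pq cp)
      ((hreg cp).smono.mono hsub_pq) hcplus (hfixq cp) ⟨hx₀pq.1, hx₀pq.2.le⟩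
  have hbotcp : Tendsto (fun n => (ρ cp⁻¹)^[n] x₀) atTop (𝓝 p) :=
    PT.tendsto_iterate_bot ((hreg cp⁻¹).cont.mono hsub_pq) (hmaps_pq cp⁻¹)
      ((hreg cp⁻¹).smono.mono hsub_pq) hcpinv_lt (hfixp cp⁻¹) ⟨hx₀pq.1.le, hx₀pq.2⟩
  have hψnat : ∀ n : ℕ, ψ (n : ℤ) = (ρ cp)^[n] x₀ := by
    intro n
    show ρ (cp ^ ((n:ℤ))) x₀ = _
    rw [zpow_natCast, hiterpow cp n x₀ hx₀I]
  have hψneg : ∀ n : ℕ, ψ (-(n:ℤ)) = (ρ cp⁻¹)^[n] x₀ := by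
    intro n
    show ρ (cp ^ (-(n:ℤ))) x₀ = _
    rw [show cp ^ (-(n:ℤ)) = (cp⁻¹) ^ n by rw [zpow_neg, ← inv_zpow, zpow_natCast],
      hiterpow cp⁻¹ n x₀ hx₀I]
  have hphi : ∀ g : G, ∃ k : ℤ, ψ k ≤ ρ g x₀ ∧ ρ g x₀ < ψ (k+1) := by
    intro g
    have hgx : ρ g x₀ ∈ Ioo p q := hIoo_pq g hx₀pq
    obtain ⟨n₀, hn₀⟩ : ∃ n : ℕ, ρ g x₀ < ψ (n:ℤ) := by
      obtain ⟨n, hn⟩ := (htopcp.eventually (eventually_gt_nhds hgx.2)).exists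
      exact ⟨n, by rw [hψnat n]; exact hn⟩
    obtain ⟨n₁, hn₁⟩ : ∃ n : ℕ, ψ (-(n:ℤ)) < ρ g x₀ := by
      obtain ⟨n, hn⟩ := (hbotcp.eventually (eventually_lt_nhds hgx.1)).exists
      exact ⟨n, by rw [hψneg n]; exact hn⟩
    obtain ⟨k, hk1, hk2⟩ := Int.exists_greatest_of_bdd
      (P := fun k => ψ k ≤ ρ g x₀)
      ⟨(n₀ : ℤ), fun z hz => le_of_lt (hψmono.lt_iff_lt.mp (lt_of_le_of_lt hz hn₀))⟩
      ⟨-(n₁:ℤ), hn₁.le⟩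
    refine ⟨k, hk1, ?_⟩
    by_contra hcon2
    push_neg at hcon2
    have := hk2 (k+1) hcon2
    omega
  have hge_all : ∀ w : G, x₀ ≤ ρ w x₀ → ∀ y ∈ Ioo p q, y ≤ ρ w y := by
    intro w hw
    rcases signA w with h | h
    · exact h
    · have heq : ρ w x₀ = x₀ := le_antisymm (h x₀ hx₀pq) hw
      intro y hy
      rw [kopell_pq w ⟨x₀, hx₀pq, heq⟩ y (Ioo_subset_Icc_self hy)]
  have low : ∀ (g : G) (k : ℤ), ψ k ≤ ρ g x₀ → ∀ y ∈ Ioo p q, ρ (cp^k) y ≤ ρ g y := by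
    intro g k hk y hy
    have hyI : y ∈ Icc (0:ℝ) 1 := hsub_pq (Ioo_subset_Icc_self hy)
    have hwx : x₀ ≤ ρ (cp^(-k) * g) x₀ := by
      have h1 : ρ (cp^(-k) * g) x₀ = ρ (cp^(-k)) (ρ g x₀) := hmul _ _ x₀ hx₀I
      have h2 : ρ (cp^(-k)) (ψ k) ≤ ρ (cp^(-k)) (ρ g x₀) :=
        (hreg _).smono.monotoneOn (hψI k) (hmemI g hx₀I) hk
      have h3 : ρ (cp^(-k)) (ψ k) = x₀ := by
        show ρ (cp^(-k)) (ρ (cp^k) x₀) = x₀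
        rw [← hmul _ _ x₀ hx₀I, show cp^(-k) * cp^k = 1 by group, hone x₀ hx₀I]
      rw [h1]
      calc x₀ = ρ (cp^(-k)) (ψ k) := h3.symm
        _ ≤ ρ (cp^(-k)) (ρ g x₀) := h2
    have hge := hge_all _ hwx y hy
    rw [hmul _ _ y hyI] at hge
    have h5 := (hreg (cp^k)).smono.monotoneOn hyI (hmemI _ (hmemI g hyI)) hge
    have h6 : ρ (cp^k) (ρ (cp^(-k)) (ρ g y)) = ρ g y := by
      rw [show (cp^(-k) : G) = (cp^k)⁻¹ from zpow_neg cp k]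
      exact hinvr (cp^k) (hmemI g hyI)
    rwa [h6] at h5
  have high : ∀ (g : G) (k : ℤ), ρ g x₀ < ψ (k+1) → ∀ y ∈ Ioo p q, ρ g y ≤ ρ (cp^(k+1)) y := by
    intro g k hk y hy
    have hyI : y ∈ Icc (0:ℝ) 1 := hsub_pq (Ioo_subset_Icc_self hy)
    have hwx : x₀ ≤ ρ (g⁻¹ * cp^(k+1)) x₀ := by
      have h1 : ρ (g⁻¹ * cp^(k+1)) x₀ = ρ g⁻¹ (ψ (k+1)) := hmul _ _ x₀ hx₀I
      have h2 : ρ g⁻¹ (ρ g x₀) ≤ ρ g⁻¹ (ψ (k+1)) :=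
        (hreg g⁻¹).smono.monotoneOn (hmemI g hx₀I) (hψI (k+1)) hk.le
      rw [hinvl g hx₀I] at h2
      rw [h1]; exact h2
    have hge := hge_all _ hwx y hy
    rw [hmul _ _ y hyI] at hge
    have h5 := (hreg g).smono.monotoneOn hyI (hmemI g⁻¹ (hmemI _ hyI)) hge
    rwa [hinvr g (hmemI _ hyI)] at h5
  have hψadd : ∀ (j k : ℤ), ρ (cp^j) (ψ k) = ψ (j + k) := by
    intro j k
    show ρ (cp^j) (ρ (cp^k) x₀) = ρ (cp^(j+k)) x₀
    rw [← hmul _ _ x₀ hx₀I, ← zpow_add]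
  -- the group identity a²b² = c⁴ b²a²
  have hab1 : a * b = c * (b * a) := by rw [← hcab]; group
  have hpow1 : ∀ n : ℕ, a^n * b = c^n * (b * a^n) := by
    intro n
    induction n with
    | zero => simp
    | succ n ih =>
        have hcn : c^n * a = a * c^n := (Commute.pow_left (hcent a) n).eq
        calc a^(n+1) * b = a * (a^n * b) := by group
          _ = a * (c^n * (b * a^n)) := by rw [ih]
          _ = (a * c^n) * (b * a^n) := by group
          _ = (c^n * a) * (b * a^n) := by rw [← hcn]
          _ = c^n * ((a * b) * a^n) := by group
          _ = c^n * ((c * (b * a)) * a^n) := by rw [hab1]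
          _ = c^(n+1) * (b * a^(n+1)) := by group
  have hbc2 : b * c^2 = c^2 * b := ((Commute.pow_left (hcent b) 2).symm).eq
  have key4 : a^2 * b^2 = c^4 * (b^2 * a^2) := by
    have h2 := hpow1 2
    have hstep1 : a^2 * b^2 = (a^2 * b) * b := by
      simp only [pow_two, mul_assoc]
    calc a^2 * b^2 = (a^2 * b) * b := hstep1
      _ = (c^2 * (b * a^2)) * b := by rw [h2]
      _ = c^2 * (b * (a^2 * b)) := by
        simp only [pow_two, mul_assoc]
      _ = c^2 * (b * (c^2 * (b * a^2))) := by rw [h2]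
      _ = c^2 * ((b * c^2) * (b * a^2)) := by
        simp only [pow_two, mul_assoc]
      _ = c^2 * ((c^2 * b) * (b * a^2)) := by rw [hbc2]
      _ = c^4 * (b^2 * a^2) := by
        simp only [show (4:ℕ) = 2+2 from rfl, pow_add, pow_two, mul_assoc]
  -- extract φ values and conclude
  obtain ⟨kA, hkA1, hkA2⟩ := hphi (a^2)
  obtain ⟨kB, hkB1, hkB2⟩ := hphi (b^2)
  have hprod_low : ∀ (g h : G) (kg kh : ℤ), ψ kg ≤ ρ g x₀ → ψ kh ≤ ρ h x₀ →
      ψ (kg + kh) ≤ ρ (g * h) x₀ := by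
    intro g h kg kh hg hh
    have h1 : ρ (g*h) x₀ = ρ g (ρ h x₀) := hmul g h x₀ hx₀I
    have h2 : ρ (cp^kg) (ρ h x₀) ≤ ρ g (ρ h x₀) := low g kg hg _ (hIoo_pq h hx₀pq)
    have h3 : ρ (cp^kg) (ψ kh) ≤ ρ (cp^kg) (ρ h x₀) :=
      (hreg _).smono.monotoneOn (hψI kh) (hmemI h hx₀I) hh
    rw [hψadd kg kh] at h3
    linarith
  have hprod_high : ∀ (g h : G) (kg kh : ℤ), ρ g x₀ < ψ (kg+1) → ρ h x₀ < ψ (kh+1) →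
      ρ (g * h) x₀ < ψ (kg + kh + 2) := by
    intro g h kg kh hg hh
    have h1 : ρ (g*h) x₀ = ρ g (ρ h x₀) := hmul g h x₀ hx₀I
    have h2 : ρ g (ρ h x₀) ≤ ρ (cp^(kg+1)) (ρ h x₀) := high g kg hg _ (hIoo_pq h hx₀pq)
    have h3 : ρ (cp^(kg+1)) (ρ h x₀) < ρ (cp^(kg+1)) (ψ (kh+1)) :=
      (hreg _).smono (hmemI h hx₀I) (hψI (kh+1)) hh
    rw [hψadd] at h3
    have h4 : kg + 1 + (kh + 1) = kg + kh + 2 := by ring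
    rw [h4] at h3
    linarith
  rcases hcp4 with hcc | hcc
  · -- c = cp
    have hc4 : (c:G)^4 = cp^(4:ℤ) := by rw [hcc]; group
    have hkey : ρ (a^2*b^2) x₀ = ρ (cp^(4:ℤ)) (ρ (b^2*a^2) x₀) := by
      rw [show a^2*b^2 = cp^(4:ℤ) * (b^2*a^2) by rw [← hc4]; exact key4]
      exact hmul _ _ x₀ hx₀I
    have hBA_low : ψ (kB + kA) ≤ ρ (b^2*a^2) x₀ := hprod_low _ _ _ _ hkB1 hkA1
    have h5 : ρ (cp^(4:ℤ)) (ψ (kB+kA)) ≤ ρ (cp^(4:ℤ)) (ρ (b^2*a^2) x₀) :=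
      (hreg _).smono.monotoneOn (hψI _) (hmemI _ hx₀I) hBA_low
    rw [hψadd] at h5
    have hAB_high : ρ (a^2*b^2) x₀ < ψ (kA + kB + 2) := hprod_high _ _ _ _ hkA2 hkB2
    have h6 : ψ (4 + (kB + kA)) < ψ (kA + kB + 2) := by
      rw [hkey] at hAB_high
      linarith
    have := hψmono.lt_iff_lt.mp h6
    omega
  · -- c = cp⁻¹
    have hkey0 : b^2*a^2 = cp^(4:ℤ) * (a^2*b^2) := by
      rw [key4, hcc]; group
    have hkey : ρ (b^2*a^2) x₀ = ρ (cp^(4:ℤ)) (ρ (a^2*b^2) x₀) := by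
      rw [hkey0]; exact hmul _ _ x₀ hx₀I
    have hAB_low : ψ (kA + kB) ≤ ρ (a^2*b^2) x₀ := hprod_low _ _ _ _ hkA1 hkB1
    have h5 : ρ (cp^(4:ℤ)) (ψ (kA+kB)) ≤ ρ (cp^(4:ℤ)) (ρ (a^2*b^2) x₀) :=
      (hreg _).smono.monotoneOn (hψI _) (hmemI _ hx₀I) hAB_low
    rw [hψadd] at h5
    have hBA_high : ρ (b^2*a^2) x₀ < ψ (kB + kA + 2) := hprod_high _ _ _ _ hkB2 hkA2
    have h6 : ψ (4 + (kA + kB)) < ψ (kB + kA + 2) := by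
      rw [hkey] at hBA_high
      linarith
    have := hψmono.lt_iff_lt.mp h6
    omega

/-- Any nilpotent group of orientation-preserving `C²` diffeomorphisms of the
closed interval `[0,1]` is abelian.  The group of diffeomorphisms is encoded
as an abstract nilpotent group `G` together with a faithful action `ρ` of `G`
on `[0,1]` by orientation-preserving `C²` diffeomorphisms. -/
theorem abelian_of_nilpotent_C2_diffeos_Icc
    {G : Type*} [Group G] [Group.IsNilpotent G] (ρ : G → ℝ → ℝ)
    (hmul : ∀ g h : G, ∀ x ∈ Icc (0:ℝ) 1, ρ (g * h) x = ρ g (ρ h x))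
    (hone : ∀ x ∈ Icc (0:ℝ) 1, ρ 1 x = x)
    (hdiff : ∀ g : G, IsDiffeoOn 2 (Icc (0:ℝ) 1) (ρ g))
    (hfaithful : ∀ g : G, (∀ x ∈ Icc (0:ℝ) 1, ρ g x = x) → g = 1) :
    ∀ a b : G, a * b = b * a := by
  have hcentral : ∀ c : G, (∀ g : G, c * g = g * c) →
      (∃ a b : G, a * b * a⁻¹ * b⁻¹ = c) → c = 1 := by
    rintro c hcent ⟨a, b, hcab⟩
    exact hfaithful c (PT.main_aux ρ hmul hone hdiff c hcent a b hcab)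
  have hstep : ∀ k : ℕ, (⊤ : Subgroup G).lowerCentralSeries (k+2) = ⊥ →
      (⊤ : Subgroup G).lowerCentralSeries (k+1) = ⊥ := by
    intro k hk
    have hcen : ∀ x ∈ (⊤ : Subgroup G).lowerCentralSeries (k+1), ∀ g : G, x * g = g * x := by
      intro x hx g
      have h1 : x * g * x⁻¹ * g⁻¹ ∈ (⊤ : Subgroup G).lowerCentralSeries (k+2) := by
        rw [Subgroup.lowerCentralSeries_succ, Subgroup.commutator_def]
        exact Subgroup.subset_closure ⟨x, hx, g, Subgroup.mem_top g, rfl⟩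
      rw [hk] at h1
      have h2 : x * g * x⁻¹ * g⁻¹ = 1 := Subgroup.mem_bot.mp h1
      have h3 : ⁅x, g⁆ = 1 := h2
      exact (commutatorElement_eq_one_iff_commute.mp h3).eq
    rw [Subgroup.lowerCentralSeries_succ, Subgroup.commutator_def, Subgroup.closure_eq_bot_iff]
    rintro x ⟨f, hf, g, -, rfl⟩
    have hxmem : f * g * f⁻¹ * g⁻¹ ∈ (⊤ : Subgroup G).lowerCentralSeries (k+1) := by
      rw [Subgroup.lowerCentralSeries_succ, Subgroup.commutator_def]
      exact Subgroup.subset_closure ⟨f, hf, g, Subgroup.mem_top g, rfl⟩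
    have := hcentral (f * g * f⁻¹ * g⁻¹) (hcen _ hxmem) ⟨f, g, rfl⟩
    exact this
  have hdown : ∀ n : ℕ, (⊤ : Subgroup G).lowerCentralSeries n = ⊥ → (⊤ : Subgroup G).lowerCentralSeries 1 = ⊥ := by
    intro n
    induction n with
    | zero =>
        intro h
        have htriv : ∀ x : G, x = 1 := by
          intro x
          have : x ∈ (⊤ : Subgroup G).lowerCentralSeries 0 := by
            rw [Subgroup.lowerCentralSeries_zero]; exact Subgroup.mem_top x
          rw [h] at this
          exact Subgroup.mem_bot.mp this
        rw [eq_bot_iff]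
        intro x _
        exact Subgroup.mem_bot.mpr (htriv x)
    | succ n ih =>
        intro h
        rcases Nat.eq_zero_or_pos n with h0 | h0
        · subst h0; exact h
        · obtain ⟨k, rfl⟩ : ∃ k, n = k + 1 := ⟨n - 1, by omega⟩
          exact ih (hstep k h)
  obtain ⟨n, hn⟩ := Subgroup.nilpotent_iff_lowerCentralSeries.mp ‹Group.IsNilpotent G›
  have hbot := hdown n hn
  intro a b
  have h1 : a * b * a⁻¹ * b⁻¹ ∈ (⊤ : Subgroup G).lowerCentralSeries 1 := by
    rw [Subgroup.lowerCentralSeries_succ, Subgroup.commutator_def]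
    exact Subgroup.subset_closure ⟨a, by rw [Subgroup.lowerCentralSeries_zero]; exact Subgroup.mem_top a,
      b, Subgroup.mem_top b, rfl⟩
  rw [hbot] at h1
  have h2 : ⁅a, b⁆ = 1 := Subgroup.mem_bot.mp h1
  exact (commutatorElement_eq_one_iff_commute.mp h2).eq
end Builder
end

section
/- For every positive integer n, the group of orientation-preserving C^∞ diffeomorphisms of the real line ℝ contains a nilpotent subgroup whose nilpotency class is exactly n. -/
open scoped ContDiff

/-- `f` is an orientation-preserving `C^n` diffeomorphism of `ℝ`: a `C^n`
bijection of `ℝ` with everywhere positive derivative (its inverse is then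
automatically `C^n`). -/
def IsDiffeoR (n : WithTop ℕ∞) (f : ℝ → ℝ) : Prop :=
  Function.Bijective f ∧ ContDiff ℝ n f ∧ ∀ x : ℝ, 0 < deriv f x


noncomputable section
namespace NilDiffeo
open scoped commutatorElement

/-- smooth bump supported in `(1/4, 3/4)` -/
def bump (x : ℝ) : ℝ := expNegInvGlue (x - 4⁻¹) * expNegInvGlue (4⁻¹*3 - x)

theorem bump_contDiff : ContDiff ℝ ∞ bump := by
  apply ContDiff.mul
  · exact expNegInvGlue.contDiff.comp (contDiff_id.sub contDiff_const)
  · exact expNegInvGlue.contDiff.comp (contDiff_const.sub contDiff_id)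

theorem bump_nonneg (x : ℝ) : 0 ≤ bump x :=
  mul_nonneg (expNegInvGlue.nonneg _) (expNegInvGlue.nonneg _)

theorem bump_pos_half : 0 < bump (2⁻¹ : ℝ) := by
  apply mul_pos <;> apply expNegInvGlue.pos_of_pos <;> norm_num

theorem bump_eq_zero {x : ℝ} (hx : x ∉ Set.Ioo (4⁻¹ : ℝ) (4⁻¹*3)) : bump x = 0 := by
  rcases not_and_or.1 hx with h | h
  · push_neg at h
    rw [bump, expNegInvGlue.zero_of_nonpos (by linarith), zero_mul]
  · push_neg at h
    rw [bump, expNegInvGlue.zero_of_nonpos (show 4⁻¹*3 - x ≤ 0 by linarith), mul_zero]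

theorem one_le_inf : (∞ : WithTop ℕ∞) ≠ 0 := by simp

theorem bump_hasCompactSupport : HasCompactSupport bump := by
  apply HasCompactSupport.intro (isCompact_Icc (a := (4⁻¹:ℝ)) (b := 4⁻¹*3))
  intro x hx
  exact bump_eq_zero (fun h => hx ⟨h.1.le, h.2.le⟩)

theorem exists_deriv_bound : ∃ M : ℝ, ∀ x, |deriv bump x| ≤ M := by
  have hc : Continuous fun x => |deriv bump x| :=
    (bump_contDiff.continuous_deriv (by exact_mod_cast le_top)).abs
  have hs : HasCompactSupport fun x => |deriv bump x| :=
    (bump_hasCompactSupport.deriv).abs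
  obtain ⟨x₀, hx₀⟩ := hc.exists_forall_ge_of_hasCompactSupport hs
  exact ⟨_, hx₀⟩

/-- a positive scale such that `eps * |bump'| ≤ 1/2` everywhere -/
def eps : ℝ := min 1 (2⁻¹ / (Classical.choose exists_deriv_bound + 1))

theorem Mnonneg : 0 ≤ Classical.choose exists_deriv_bound :=
  le_trans (abs_nonneg _) (Classical.choose_spec exists_deriv_bound 0)

theorem eps_pos : 0 < eps := by
  have := Mnonneg
  exact lt_min one_pos (by positivity)

theorem eps_le_one : eps ≤ 1 := min_le_left _ _

theorem eps_deriv_bound (x : ℝ) : eps * |deriv bump x| ≤ 2⁻¹ := by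
  set M := Classical.choose exists_deriv_bound with hM
  have h1 : |deriv bump x| ≤ M := Classical.choose_spec exists_deriv_bound x
  have hM0 : 0 ≤ M := Mnonneg
  have h2 : eps ≤ 2⁻¹ / (M + 1) := min_le_right _ _
  calc eps * |deriv bump x| ≤ (2⁻¹ / (M+1)) * M := by
        apply mul_le_mul h2 h1 (abs_nonneg _) (by positivity)
    _ ≤ 2⁻¹ := by
        rw [div_mul_eq_mul_div, div_le_iff₀ (by positivity)]
        nlinarith

/-- the basic diffeomorphism: identity plus a small bump -/
def phifun (x : ℝ) : ℝ := x + eps * bump x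

theorem phifun_contDiff : ContDiff ℝ ∞ phifun :=
  contDiff_id.add (contDiff_const.mul bump_contDiff)

theorem phifun_hasDerivAt (x : ℝ) :
    HasDerivAt phifun (1 + eps * deriv bump x) x := by
  have hb : HasDerivAt bump (deriv bump x) x :=
    (bump_contDiff.differentiable one_le_inf).differentiableAt.hasDerivAt
  exact (hasDerivAt_id x).add ((hb.const_mul eps))

theorem phifun_deriv_pos (x : ℝ) : 0 < deriv phifun x := by
  rw [(phifun_hasDerivAt x).deriv]
  have := eps_deriv_bound x
  have := neg_abs_le (deriv bump x)
  have he := eps_pos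
  nlinarith [abs_nonneg (deriv bump x), eps_deriv_bound x,
    mul_le_mul_of_nonneg_left (neg_abs_le (deriv bump x)) he.le]

theorem phifun_strictMono : StrictMono phifun :=
  strictMono_of_deriv_pos phifun_deriv_pos

theorem phifun_eq_self {x : ℝ} (hx : x ∉ Set.Ioo (4⁻¹:ℝ) (4⁻¹*3)) : phifun x = x := by
  rw [phifun, bump_eq_zero hx, mul_zero, add_zero]

theorem phifun_le (x : ℝ) : x ≤ phifun x := by
  have := mul_nonneg eps_pos.le (bump_nonneg x); rw [phifun]; linarith

theorem phifun_surjective : Function.Surjective phifun := by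
  intro y
  have hc : Continuous phifun := phifun_contDiff.continuous
  have h1 : phifun (min y 4⁻¹) = min y 4⁻¹ := by
    apply phifun_eq_self
    simp only [Set.mem_Ioo, not_and_or]
    left
    push_neg
    exact min_le_right _ _
  have h2 : phifun (max y (4⁻¹*3)) = max y (4⁻¹*3) := by
    apply phifun_eq_self
    simp only [Set.mem_Ioo, not_and_or]
    right
    push_neg
    exact le_max_right _ _
  have hle : min y (4⁻¹:ℝ) ≤ max y (4⁻¹*3) :=
    le_trans (min_le_left _ _) (le_max_left _ _)
  have : y ∈ Set.Icc (phifun (min y 4⁻¹)) (phifun (max y (4⁻¹*3))) := by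
    rw [h1, h2]; exact ⟨min_le_left _ _, le_max_left _ _⟩
  obtain ⟨x, _, hx⟩ := intermediate_value_Icc hle hc.continuousOn this
  exact ⟨x, hx⟩

theorem phifun_bijective : Function.Bijective phifun :=
  ⟨phifun_strictMono.injective, phifun_surjective⟩

/-- the basic diffeomorphism as a permutation of `ℝ` -/
def phi : Equiv.Perm ℝ := Equiv.ofBijective phifun phifun_bijective

@[simp] theorem phi_apply (x : ℝ) : phi x = phifun x := rfl

theorem phi_symm_contDiffAt (y : ℝ) : ContDiffAt ℝ ∞ (⇑phi.symm) y := by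
  set a := phi.symm y with ha
  have hy : y = phifun a := (phi.apply_symm_apply y).symm
  have hF : ContDiffAt ℝ ∞ phifun a := phifun_contDiff.contDiffAt
  set d := 1 + eps * deriv bump a with hd
  have hda : HasDerivAt phifun d a := phifun_hasDerivAt a
  have hd0 : d ≠ 0 := by
    have := phifun_deriv_pos a; rw [hda.deriv] at this; exact ne_of_gt this
  set f' : ℝ ≃L[ℝ] ℝ := ContinuousLinearEquiv.unitsEquivAut ℝ (Units.mk0 d hd0) with hf'def
  have hcoe : (f' : ℝ →L[ℝ] ℝ) = ContinuousLinearMap.smulRight (1 : ℝ →L[ℝ] ℝ) d := by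
    ext x
    simp [hf'def, ContinuousLinearEquiv.unitsEquivAut, mul_comm]
  have hf' : HasFDerivAt phifun (f' : ℝ →L[ℝ] ℝ) a := by
    rw [hcoe]; exact hda.hasFDerivAt
  have hg : ContDiffAt ℝ ∞ (hF.localInverse hf' one_le_inf) (phifun a) :=
    hF.to_localInverse hf' one_le_inf
  have hgr : ∀ᶠ z in nhds (phifun a), phifun (hF.localInverse hf' one_le_inf z) = z :=
    HasStrictFDerivAt.eventually_right_inverse (hF.hasStrictFDerivAt' hf' one_le_inf)
  have heq : (⇑phi.symm) =ᶠ[nhds (phifun a)] hF.localInverse hf' one_le_inf := by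
    filter_upwards [hgr] with z hz
    have : phi (hF.localInverse hf' one_le_inf z) = phi (phi.symm z) := by
      rw [phi.apply_symm_apply]; exact hz
    exact (phi.injective this).symm
  rw [hy]
  exact hg.congr_of_eventuallyEq heq

theorem phi_symm_contDiff : ContDiff ℝ ∞ (⇑phi.symm) :=
  contDiff_iff_contDiffAt.2 phi_symm_contDiffAt

theorem phi_symm_deriv_pos (y : ℝ) : 0 < deriv (⇑phi.symm) y := by
  set a := phi.symm y with ha
  set d := 1 + eps * deriv bump a with hd
  have hda : HasDerivAt phifun d a := phifun_hasDerivAt a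
  have hdpos : 0 < d := by
    have := phifun_deriv_pos a; rwa [hda.deriv] at this
  have hdiff : DifferentiableAt ℝ (⇑phi.symm) y :=
    (phi_symm_contDiffAt y).differentiableAt one_le_inf
  have hsymm : HasDerivAt (⇑phi.symm) (deriv (⇑phi.symm) y) y := hdiff.hasDerivAt
  have hcomp : HasDerivAt (phifun ∘ ⇑phi.symm) (d * deriv (⇑phi.symm) y) y :=
    HasDerivAt.comp y hda hsymm
  have hid : phifun ∘ ⇑phi.symm = id := by
    funext z; exact phi.apply_symm_apply z
  rw [hid] at hcomp
  have h1 : d * deriv (⇑phi.symm) y = 1 := hcomp.unique (hasDerivAt_id y)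
  nlinarith [hdpos]

/-- the subgroup of permutations of `ℝ` that are orientation-preserving smooth
diffeomorphisms -/
def diffeoGroup : Subgroup (Equiv.Perm ℝ) where
  carrier := {e | ContDiff ℝ ∞ ⇑e ∧ ContDiff ℝ ∞ ⇑e.symm ∧
    (∀ x, 0 < deriv (⇑e) x) ∧ (∀ x, 0 < deriv (⇑e.symm) x)}
  one_mem' := by
    have h1 : (1 : Equiv.Perm ℝ).symm = 1 := rfl
    have h2 : ⇑(1 : Equiv.Perm ℝ) = id := rfl
    refine ⟨?_, ?_, ?_, ?_⟩ <;> simp only [h1, h2] <;>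
    first
      | exact contDiff_id
      | (intro x; simp)
  mul_mem' := by
    rintro a b ⟨ha1, ha2, ha3, ha4⟩ ⟨hb1, hb2, hb3, hb4⟩
    have hco : ⇑(a * b) = ⇑a ∘ ⇑b := rfl
    have hco2 : ⇑(a * b).symm = ⇑b.symm ∘ ⇑a.symm := rfl
    refine ⟨?_, ?_, ?_, ?_⟩
    · rw [hco]; exact ha1.comp hb1
    · rw [hco2]; exact hb2.comp ha2
    · intro x
      rw [hco, deriv_comp x (ha1.differentiable one_le_inf _)
        (hb1.differentiable one_le_inf _)]
      exact mul_pos (ha3 _) (hb3 _)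
    · intro x
      rw [hco2, deriv_comp x (hb2.differentiable one_le_inf _)
        (ha2.differentiable one_le_inf _)]
      exact mul_pos (hb4 _) (ha4 _)
  inv_mem' := by
    rintro a ⟨ha1, ha2, ha3, ha4⟩
    exact ⟨ha2, by simpa [Equiv.Perm.inv_def] using ha1, ha4, by simpa [Equiv.Perm.inv_def] using ha3⟩

theorem mem_diffeoGroup {e : Equiv.Perm ℝ} :
    e ∈ diffeoGroup ↔ ContDiff ℝ ∞ ⇑e ∧ ContDiff ℝ ∞ ⇑e.symm ∧
      (∀ x, 0 < deriv (⇑e) x) ∧ (∀ x, 0 < deriv (⇑e.symm) x) := Iff.rfl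

theorem phi_mem_diffeoGroup : phi ∈ diffeoGroup :=
  mem_diffeoGroup.2 ⟨phifun_contDiff, phi_symm_contDiff, phifun_deriv_pos, phi_symm_deriv_pos⟩

theorem zpow_phi_mem (j : ℤ) : phi ^ j ∈ diffeoGroup :=
  Subgroup.zpow_mem _ phi_mem_diffeoGroup j

/-- the subgroup of permutations fixing everything outside `(1/4, 3/4)` -/
def suppGroup : Subgroup (Equiv.Perm ℝ) where
  carrier := {e | ∀ x, x ∉ Set.Ioo (4⁻¹:ℝ) (4⁻¹*3) → e x = x}
  one_mem' := fun x _ => rfl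
  mul_mem' := by
    intro a b ha hb x hx
    have : (a * b) x = a (b x) := rfl
    rw [this, hb x hx, ha x hx]
  inv_mem' := by
    intro a ha x hx
    have h1 : a x = x := ha x hx
    have : a⁻¹ (a x) = a⁻¹ x := congrArg _ h1
    rw [Equiv.Perm.inv_def, Equiv.symm_apply_apply] at this
    exact this.symm

theorem phi_mem_suppGroup : phi ∈ suppGroup := fun _ hx => phifun_eq_self hx

theorem zpow_phi_mem_supp (j : ℤ) : phi ^ j ∈ suppGroup :=
  Subgroup.zpow_mem _ phi_mem_suppGroup j

theorem suppGroup_maps_Ioo {e : Equiv.Perm ℝ} (he : e ∈ suppGroup)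
    {x : ℝ} (hx : x ∈ Set.Ioo (4⁻¹:ℝ) (4⁻¹*3)) : e x ∈ Set.Ioo (4⁻¹:ℝ) (4⁻¹*3) := by
  by_contra h
  have h1 : e⁻¹ (e x) = e x := (suppGroup.inv_mem he) (e x) h
  rw [Equiv.Perm.inv_def, Equiv.symm_apply_apply] at h1
  rw [← h1] at h
  exact h hx

theorem suppGroup_maps_Ico {e : Equiv.Perm ℝ} (he : e ∈ suppGroup)
    {x : ℝ} (hx : x ∈ Set.Ico (0:ℝ) 1) : e x ∈ Set.Ico (0:ℝ) 1 := by
  by_cases h : x ∈ Set.Ioo (4⁻¹:ℝ) (4⁻¹*3)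
  · have := suppGroup_maps_Ioo he h
    constructor <;> [linarith [this.1]; linarith [this.2]]
  · rw [he x h]; exact hx
/-! ### the block maps -/

theorem phi_zpow_fix {j : ℤ} {x : ℝ} (hx : x ∉ Set.Ioo (4⁻¹:ℝ) (4⁻¹*3)) :
    (phi ^ j) x = x := zpow_phi_mem_supp j x hx

theorem phi_zpow_maps_Ico (j : ℤ) {x : ℝ} (hx : x ∈ Set.Ico (0:ℝ) 1) :
    (phi ^ j) x ∈ Set.Ico (0:ℝ) 1 := suppGroup_maps_Ico (zpow_phi_mem_supp j) hx

theorem phi_zpow_zero (j : ℤ) : (phi ^ j) 0 = 0 :=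
  phi_zpow_fix (by norm_num)

/-- the map acting as `phi ^ f k` on each interval `[k, k+1)` -/
def hfun (f : ℤ → ℤ) (x : ℝ) : ℝ := ↑⌊x⌋ + (phi ^ f ⌊x⌋) (x - ↑⌊x⌋)

theorem fract_mem (x : ℝ) : x - ↑⌊x⌋ ∈ Set.Ico (0:ℝ) 1 :=
  ⟨by linarith [Int.floor_le x], by linarith [Int.lt_floor_add_one x]⟩

theorem floor_hfun (f : ℤ → ℤ) (x : ℝ) : ⌊hfun f x⌋ = ⌊x⌋ := by
  have h := phi_zpow_maps_Ico (f ⌊x⌋) (fract_mem x)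
  rw [Int.floor_eq_iff]
  constructor
  · simp only [hfun]; linarith [h.1]
  · simp only [hfun]; push_cast; linarith [h.2]

theorem hfun_add (f g : ℤ → ℤ) (x : ℝ) : hfun f (hfun g x) = hfun (f + g) x := by
  have key : hfun f (hfun g x)
      = ↑⌊x⌋ + (phi ^ (f ⌊x⌋)) ((phi ^ (g ⌊x⌋)) (x - ↑⌊x⌋)) := by
    rw [show hfun f (hfun g x)
        = ↑⌊hfun g x⌋ + (phi ^ f ⌊hfun g x⌋) (hfun g x - ↑⌊hfun g x⌋) from rfl,
      floor_hfun]
    congr 2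
    rw [show hfun g x = ↑⌊x⌋ + (phi ^ g ⌊x⌋) (x - ↑⌊x⌋) from rfl]
    ring
  rw [key, show hfun (f+g) x = ↑⌊x⌋ + (phi ^ (f ⌊x⌋ + g ⌊x⌋)) (x - ↑⌊x⌋) from rfl,
    zpow_add]
  rfl

theorem hfun_zero (x : ℝ) : hfun 0 x = x := by
  simp only [hfun, Pi.zero_apply, zpow_zero]
  simp

/-- the block map as a permutation -/
def hperm (f : ℤ → ℤ) : Equiv.Perm ℝ where
  toFun := hfun f
  invFun := hfun (-f)
  left_inv := fun x => by rw [hfun_add, neg_add_cancel, hfun_zero]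
  right_inv := fun x => by rw [hfun_add, add_neg_cancel, hfun_zero]

@[simp] theorem hperm_apply (f : ℤ → ℤ) (x : ℝ) : hperm f x = hfun f x := rfl
@[simp] theorem hperm_symm_apply (f : ℤ → ℤ) (x : ℝ) :
    (hperm f).symm x = hfun (-f) x := rfl

/-- local model for `hfun` away from integers -/
def model (k j : ℤ) (y : ℝ) : ℝ := ↑k + (phi ^ j) (y - ↑k)

theorem model_contDiff (k j : ℤ) : ContDiff ℝ ∞ (model k j) :=
  contDiff_const.add ((zpow_phi_mem j).1.comp (contDiff_id.sub contDiff_const))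

theorem model_hasDerivAt (k j : ℤ) (y : ℝ) :
    HasDerivAt (model k j) (deriv (⇑(phi ^ j)) (y - ↑k)) y := by
  have hd : HasDerivAt (⇑(phi ^ j)) (deriv (⇑(phi ^ j)) (y - ↑k)) (y - ↑k) :=
    (((zpow_phi_mem j).1.differentiable one_le_inf) _).hasDerivAt
  have := HasDerivAt.comp y hd ((hasDerivAt_id y).sub_const (↑k : ℝ))
  rw [show model k j = fun y => ↑k + (phi ^ j) (y - ↑k) from rfl]
  simpa [model, Function.comp] using this.const_add (↑k : ℝ)

theorem hfun_eqOn_not_int (f : ℤ → ℤ) {x : ℝ} (hx : (↑⌊x⌋ : ℝ) ≠ x) :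
    ∀ y ∈ Set.Ioo (↑⌊x⌋ : ℝ) (↑⌊x⌋ + 1), hfun f y = model ⌊x⌋ (f ⌊x⌋) y := by
  intro y hy
  have hfl : ⌊y⌋ = ⌊x⌋ := by
    rw [Int.floor_eq_iff]
    exact ⟨hy.1.le, by push_cast; exact hy.2⟩
  simp only [hfun, model, hfl]

theorem hfun_eqOn_int (f : ℤ → ℤ) (m : ℤ) :
    ∀ y ∈ Set.Ioo ((m:ℝ) - 4⁻¹) ((m:ℝ) + 4⁻¹), hfun f y = y := by
  intro y hy
  rcases le_or_gt (m:ℝ) y with h | h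
  · have hfl : ⌊y⌋ = m := by
      rw [Int.floor_eq_iff]
      exact ⟨h, by push_cast; linarith [hy.2]⟩
    have : y - (m:ℝ) ∉ Set.Ioo (4⁻¹:ℝ) (4⁻¹*3) := by
      simp only [Set.mem_Ioo, not_and_or]
      left; push_neg; linarith [hy.2]
    simp only [hfun, hfl, phi_zpow_fix this]
    ring_nf
  · have hfl : ⌊y⌋ = m - 1 := by
      rw [Int.floor_eq_iff]
      push_cast
      exact ⟨by linarith [hy.1], by linarith⟩
    have : y - ((m:ℝ) - 1) ∉ Set.Ioo (4⁻¹:ℝ) (4⁻¹*3) := by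
      simp only [Set.mem_Ioo, not_and_or]
      right; push_neg; linarith [hy.1]
    simp only [hfun, hfl]
    push_cast
    rw [phi_zpow_fix this]
    ring

theorem hfun_contDiffAt (f : ℤ → ℤ) (x : ℝ) : ContDiffAt ℝ ∞ (hfun f) x := by
  by_cases hx : (↑⌊x⌋ : ℝ) = x
  · -- x is an integer
    have hU : Set.Ioo (x - 4⁻¹) (x + 4⁻¹) ∈ nhds x :=
      (isOpen_Ioo).mem_nhds (by constructor <;> norm_num)
    have heq : hfun f =ᶠ[nhds x] id := by
      apply Filter.eventuallyEq_of_mem hU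
      intro y hy
      rw [← hx] at hy
      exact hfun_eqOn_int f ⌊x⌋ y hy
    exact contDiff_id.contDiffAt.congr_of_eventuallyEq heq
  · have h1 : (↑⌊x⌋ : ℝ) < x := lt_of_le_of_ne (Int.floor_le x) hx
    have hU : Set.Ioo (↑⌊x⌋ : ℝ) (↑⌊x⌋ + 1) ∈ nhds x :=
      (isOpen_Ioo).mem_nhds ⟨h1, Int.lt_floor_add_one x⟩
    have heq : hfun f =ᶠ[nhds x] model ⌊x⌋ (f ⌊x⌋) :=
      Filter.eventuallyEq_of_mem hU (hfun_eqOn_not_int f hx)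
    exact (model_contDiff _ _).contDiffAt.congr_of_eventuallyEq heq

theorem hfun_contDiff (f : ℤ → ℤ) : ContDiff ℝ ∞ (hfun f) :=
  contDiff_iff_contDiffAt.2 (hfun_contDiffAt f)

theorem hfun_deriv_pos (f : ℤ → ℤ) (x : ℝ) : 0 < deriv (hfun f) x := by
  by_cases hx : (↑⌊x⌋ : ℝ) = x
  · have hU : Set.Ioo (x - 4⁻¹) (x + 4⁻¹) ∈ nhds x :=
      (isOpen_Ioo).mem_nhds (by constructor <;> norm_num)
    have heq : hfun f =ᶠ[nhds x] id := by
      apply Filter.eventuallyEq_of_mem hU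
      intro y hy
      rw [← hx] at hy
      exact hfun_eqOn_int f ⌊x⌋ y hy
    rw [heq.deriv_eq, deriv_id]
    norm_num
  · have h1 : (↑⌊x⌋ : ℝ) < x := lt_of_le_of_ne (Int.floor_le x) hx
    have hU : Set.Ioo (↑⌊x⌋ : ℝ) (↑⌊x⌋ + 1) ∈ nhds x :=
      (isOpen_Ioo).mem_nhds ⟨h1, Int.lt_floor_add_one x⟩
    have heq : hfun f =ᶠ[nhds x] model ⌊x⌋ (f ⌊x⌋) :=
      Filter.eventuallyEq_of_mem hU (hfun_eqOn_not_int f hx)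
    rw [heq.deriv_eq, (model_hasDerivAt ⌊x⌋ (f ⌊x⌋) x).deriv]
    exact (zpow_phi_mem (f ⌊x⌋)).2.2.1 _

theorem hfun_add_int (u : ℤ → ℤ) (b : ℤ) (y : ℝ) :
    hfun u (y + ↑b) = hfun (fun k => u (k + b)) y + ↑b := by
  rw [show hfun u (y + ↑b)
      = ↑⌊y + (b:ℝ)⌋ + (phi ^ u ⌊y + (b:ℝ)⌋) (y + ↑b - ↑⌊y + (b:ℝ)⌋) from rfl,
    Int.floor_add_intCast]
  rw [show hfun (fun k => u (k+b)) y
      = ↑⌊y⌋ + (phi ^ u (⌊y⌋ + b)) (y - ↑⌊y⌋) from rfl]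
  push_cast
  rw [show y + ↑b - (↑⌊y⌋ + ↑b) = y - ↑⌊y⌋ by ring]
  ring
/-! ### nontriviality of powers of `phi` at `1/2` -/

theorem le_phi_pow (m : ℕ) (x : ℝ) : x ≤ (phi ^ m) x := by
  induction m generalizing x with
  | zero => simp
  | succ k ih =>
    rw [pow_succ, Equiv.Perm.mul_apply]
    exact le_trans (phifun_le x) (ih (phi x))

theorem phi_pow_half_gt {m : ℕ} (hm : 1 ≤ m) : 2⁻¹ < (phi ^ m) (2⁻¹:ℝ) := by
  obtain ⟨k, rfl⟩ := Nat.exists_eq_add_of_le hm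
  rw [add_comm, pow_succ, Equiv.Perm.mul_apply]
  have h1 : (2⁻¹:ℝ) < phi 2⁻¹ := by
    have := mul_pos eps_pos bump_pos_half
    simp only [phi_apply, phifun]
    linarith
  exact lt_of_lt_of_le h1 (le_phi_pow k _)

theorem phi_zpow_half {j : ℤ} (hj : (phi ^ j) (2⁻¹:ℝ) = 2⁻¹) : j = 0 := by
  rcases lt_trichotomy j 0 with h | h | h
  · exfalso
    have h2 : (phi ^ (-j)) ((phi ^ j) (2⁻¹:ℝ)) = 2⁻¹ := by
      rw [← Equiv.Perm.mul_apply, ← zpow_add, neg_add_cancel, zpow_zero]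
      rfl
    rw [hj] at h2
    have h3 : phi ^ (-j) = phi ^ ((-j).toNat) := by
      rw [← zpow_natCast, Int.toNat_of_nonneg (by omega)]
    rw [h3] at h2
    have := phi_pow_half_gt (m := (-j).toNat) (by omega)
    rw [h2] at this
    exact lt_irrefl _ this
  · exact h
  · exfalso
    have h3 : phi ^ j = phi ^ (j.toNat) := by
      rw [← zpow_natCast, Int.toNat_of_nonneg (by omega)]
    rw [h3] at hj
    have := phi_pow_half_gt (m := j.toNat) (by omega)
    rw [hj] at this
    exact lt_irrefl _ this

/-! ### the abstract group -/

/-- elements `(m, a)` representing the diffeomorphism `T^m ∘ h_a` -/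
@[ext]
structure GG where
  m : ℤ
  a : ℤ → ℤ

namespace GG

instance : One GG := ⟨⟨0, 0⟩⟩
instance : Mul GG := ⟨fun g h => ⟨g.m + h.m, fun k => g.a (k + h.m) + h.a k⟩⟩
instance : Inv GG := ⟨fun g => ⟨-g.m, fun k => -g.a (k - g.m)⟩⟩

@[simp] theorem one_m : (1 : GG).m = 0 := rfl
@[simp] theorem one_a : (1 : GG).a = 0 := rfl
@[simp] theorem mul_m (g h : GG) : (g * h).m = g.m + h.m := rfl
@[simp] theorem mul_a (g h : GG) : (g * h).a = fun k => g.a (k + h.m) + h.a k := rfl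
@[simp] theorem inv_m (g : GG) : (g⁻¹).m = -g.m := rfl
@[simp] theorem inv_a (g : GG) : (g⁻¹).a = fun k => -g.a (k - g.m) := rfl

instance : Group GG := by
  apply Group.ofLeftAxioms
  · intro g h w
    refine GG.ext (by simp; ring) ?_
    funext k
    simp only [mul_m, mul_a]
    have h1 : k + w.m + h.m = k + (h.m + w.m) := by ring
    rw [h1]
    ring
  · intro g
    refine GG.ext (by simp) ?_
    funext k
    simp
  · intro g
    refine GG.ext (by simp) ?_
    funext k
    simp only [mul_m, mul_a, inv_m, inv_a, one_a, Pi.zero_apply]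
    have h1 : k + g.m - g.m = k := by ring
    rw [h1]
    ring

end GG

/-! ### difference calculus -/

/-- forward difference operator -/
def dlt (f : ℤ → ℤ) : ℤ → ℤ := fun k => f (k + 1) - f k

theorem dlt_add (f g : ℤ → ℤ) : dlt (f + g) = dlt f + dlt g := by
  funext k; simp [dlt]; ring

theorem dlt_shift (f : ℤ → ℤ) (b : ℤ) :
    dlt (fun k => f (k + b)) = fun k => dlt f (k + b) := by
  funext k; simp only [dlt]
  have : k + b + 1 = k + 1 + b := by ring
  rw [this]

theorem dlt_iter_add (d : ℕ) (f g : ℤ → ℤ) :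
    dlt^[d] (f + g) = dlt^[d] f + dlt^[d] g := by
  induction d generalizing f g with
  | zero => rfl
  | succ d ih => rw [Function.iterate_succ_apply, Function.iterate_succ_apply,
      Function.iterate_succ_apply, dlt_add, ih]

theorem dlt_iter_shift (d : ℕ) (f : ℤ → ℤ) (b : ℤ) :
    dlt^[d] (fun k => f (k + b)) = fun k => dlt^[d] f (k + b) := by
  induction d generalizing f with
  | zero => rfl
  | succ d ih => rw [Function.iterate_succ_apply, Function.iterate_succ_apply,
      dlt_shift, ih]

theorem dlt_iter_const_mul (d : ℕ) (c : ℤ) (f : ℤ → ℤ) :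
    dlt^[d] (fun k => c * f k) = fun k => c * dlt^[d] f k := by
  induction d generalizing f with
  | zero => rfl
  | succ d ih =>
    rw [Function.iterate_succ_apply, Function.iterate_succ_apply]
    have : dlt (fun k => c * f k) = fun k => c * dlt f k := by
      funext k; simp [dlt]; ring
    rw [this, ih]

theorem dlt_zero_fun : dlt 0 = 0 := by funext k; simp [dlt]

theorem dlt_iter_zero (d : ℕ) : dlt^[d] 0 = 0 :=
  Function.iterate_fixed dlt_zero_fun d

theorem const_of_dlt_zero {f : ℤ → ℤ} (h : dlt f = 0) (k : ℤ) : f k = f 0 := by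
  induction k using Int.induction_on with
  | zero => rfl
  | succ i ih =>
    have := congrFun h i
    simp only [dlt, Pi.zero_apply, sub_eq_zero] at this
    rw [this, ih]
  | pred i ih =>
    have := congrFun h (-(i:ℤ) - 1)
    simp only [dlt, Pi.zero_apply, sub_eq_zero] at this
    rw [show -(i:ℤ) - 1 + 1 = -(i:ℤ) by ring] at this
    rw [← this, ih]

/-- key vanishing lemma: a difference of two shifts of `f` loses one `dlt`-degree -/
theorem dlt_iter_sub_shift {f : ℤ → ℤ} {d : ℕ} (h : dlt^[d+1] f = 0) (b c : ℤ) :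
    dlt^[d] (fun k => f (k + b) - f (k + c)) = 0 := by
  have hconst : ∀ k, dlt^[d] f k = dlt^[d] f 0 := by
    intro k
    exact const_of_dlt_zero ((Function.iterate_succ_apply' dlt d f).symm.trans h) k
  have : (fun k => f (k + b) - f (k + c))
      = (fun k => f (k + b)) + (fun k => (-1) * f (k + c)) := by
    funext k; simp; ring
  rw [this, dlt_iter_add, dlt_iter_const_mul, dlt_iter_shift, dlt_iter_shift]
  funext k
  simp only [Pi.add_apply, Pi.zero_apply]
  rw [hconst (k + b), hconst (k + c)]
  ring
/-! ### the subgroup of polynomial elements -/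

/-- the subgroup of `GG` whose second component is a polynomial of degree `< n` -/
def Gsub (n : ℕ) : Subgroup GG where
  carrier := {g | dlt^[n] g.a = 0}
  one_mem' := by simp only [Set.mem_setOf_eq, GG.one_a, dlt_iter_zero]
  mul_mem' := by
    intro g h hg hh
    simp only [Set.mem_setOf_eq, GG.mul_a] at *
    have : (fun k => g.a (k + h.m) + h.a k)
        = (fun k => g.a (k + h.m)) + h.a := rfl
    rw [this, dlt_iter_add, dlt_iter_shift]
    funext k
    simp only [Pi.add_apply, Pi.zero_apply]
    rw [hg, hh]
    simp
  inv_mem' := by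
    intro g hg
    simp only [Set.mem_setOf_eq, GG.inv_a] at *
    have : (fun k => -g.a (k - g.m)) = fun k => (-1) * g.a (k + (-g.m)) := by
      funext k; rw [sub_eq_add_neg]; ring
    rw [this, dlt_iter_const_mul, dlt_iter_shift]
    funext k
    simp only [Pi.zero_apply]
    rw [hg]
    simp

theorem mem_Gsub {n : ℕ} {g : GG} : g ∈ Gsub n ↔ dlt^[n] g.a = 0 := Iff.rfl

/-- commutators in `GG`: first component vanishes -/
theorem comm_m (g h : GG) : (⁅g, h⁆ : GG).m = 0 := by
  simp only [commutatorElement_def, GG.mul_m, GG.inv_m]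
  ring

/-- commutators in `GG`: formula for the second component -/
theorem comm_a (g h : GG) : (⁅g, h⁆ : GG).a
    = (fun k => g.a (k + (-g.m)) - g.a (k + (-g.m - h.m)))
      + fun k => h.a (k + (-h.m - g.m)) - h.a (k + (-h.m)) := by
  funext k
  simp only [commutatorElement_def, GG.mul_a, GG.mul_m, GG.inv_a, GG.inv_m, Pi.add_apply]
  have e1 : k + -h.m + -g.m + h.m = k + -g.m := by ring
  have e2 : k + -h.m - g.m = k + (-g.m - h.m) := by ring
  have e3 : k + -h.m + -g.m = k + (-h.m - g.m) := by ring
  have e4 : k - h.m = k + -h.m := by ring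
  rw [e1, e2, e3, e4]
  ring

/-- the filtration subgroups measuring polynomial degree -/
def Ksub (n d : ℕ) : Subgroup ↥(Gsub n) where
  carrier := {g | (g : GG).m = 0 ∧ dlt^[d] (g : GG).a = 0}
  one_mem' := by
    constructor
    · rfl
    · show dlt^[d] (1 : GG).a = 0
      simp [dlt_iter_zero]
  mul_mem' := by
    intro g h hg hh
    constructor
    · show ((g : GG) * (h : GG)).m = 0
      simp [hg.1, hh.1]
    · show dlt^[d] ((g : GG) * (h : GG)).a = 0
      simp only [GG.mul_a, hh.1]
      have : (fun k => (g:GG).a (k + 0) + (h:GG).a k)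
          = (fun k => (g:GG).a (k + 0)) + (h:GG).a := rfl
      rw [this, dlt_iter_add, dlt_iter_shift]
      funext k
      simp only [Pi.add_apply, Pi.zero_apply]
      rw [hg.2, hh.2]
      simp
  inv_mem' := by
    intro g hg
    constructor
    · show (-(g:GG).m) = 0
      simp [hg.1]
    · show dlt^[d] (fun k => -(g:GG).a (k - (g:GG).m)) = 0
      simp only [hg.1]
      have : (fun k => -(g:GG).a (k - 0)) = fun k => (-1) * (g:GG).a (k + 0) := by
        funext k; rw [sub_zero, add_zero]; ring
      rw [this, dlt_iter_const_mul, dlt_iter_shift]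
      funext k
      simp only [Pi.zero_apply]
      rw [hg.2]
      simp
theorem mem_Ksub {n d : ℕ} {g : ↥(Gsub n)} :
    g ∈ Ksub n d ↔ (g : GG).m = 0 ∧ dlt^[d] (g : GG).a = 0 := Iff.rfl

theorem coe_commutator {n : ℕ} (g h : ↥(Gsub n)) :
    (↑⁅g, h⁆ : GG) = ⁅(g : GG), (h : GG)⁆ := by
  simp [commutatorElement_def]

theorem lcs_le_Ksub (n : ℕ) : ∀ j : ℕ, j < n →
    (⊤ : Subgroup ↥(Gsub n)).lowerCentralSeries (j+1) ≤ Ksub n (n - 1 - j) := by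
  intro j
  induction j with
  | zero =>
    intro hn0
    rw [Subgroup.lowerCentralSeries_succ, Subgroup.commutator_def, Subgroup.closure_le]
    rintro x ⟨g, -, h, -, rfl⟩
    show (⁅g, h⁆ : ↥(Gsub n)) ∈ Ksub n (n - 1 - 0)
    rw [mem_Ksub, coe_commutator]
    refine ⟨comm_m _ _, ?_⟩
    rw [comm_a, dlt_iter_add]
    have hg : dlt^[n] (g:GG).a = 0 := g.2
    have hh : dlt^[n] (h:GG).a = 0 := h.2
    have hn1 : n - 1 - 0 + 1 = n := by omega
    rw [dlt_iter_sub_shift (by rw [hn1]; exact hg),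
      dlt_iter_sub_shift (by rw [hn1]; exact hh)]
    simp
  | succ j ih =>
    intro hjn
    rw [Subgroup.lowerCentralSeries_succ, Subgroup.commutator_def, Subgroup.closure_le]
    rintro x ⟨g, hg, h, -, rfl⟩
    obtain ⟨hgm, hga⟩ := mem_Ksub.1 (ih (by omega) hg)
    show (⁅g, h⁆ : ↥(Gsub n)) ∈ Ksub n (n - 1 - (j+1))
    rw [mem_Ksub, coe_commutator]
    refine ⟨comm_m _ _, ?_⟩
    rw [comm_a, dlt_iter_add]
    have harith : n - 1 - j = (n - 1 - (j+1)) + 1 := by omega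
    rw [dlt_iter_sub_shift (by rw [← harith]; exact hga)]
    have hzero : (fun k => (h:GG).a (k + (-(h:GG).m - (g:GG).m))
        - (h:GG).a (k + (-(h:GG).m))) = (0 : ℤ → ℤ) := by
      funext k
      rw [hgm]
      simp
    rw [hzero, dlt_iter_zero]
    simp

theorem lcs_n_eq_bot (n : ℕ) (hn : 0 < n) :
    (⊤ : Subgroup ↥(Gsub n)).lowerCentralSeries n = ⊥ := by
  apply le_antisymm _ bot_le
  have h1 := lcs_le_Ksub n (n-1) (by omega)
  rw [show n - 1 + 1 = n by omega] at h1
  refine le_trans h1 ?_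
  intro g hg
  obtain ⟨h2, h3⟩ := mem_Ksub.1 hg
  have h4 : (g : GG).a = 0 := by simpa using h3
  rw [Subgroup.mem_bot]
  exact Subtype.ext (GG.ext h2 h4)

/-! ### the falling factorial witness -/

/-- falling factorial -/
def fall (m : ℕ) : ℤ → ℤ := fun k => ∏ i ∈ Finset.range m, (k - (i:ℤ))

theorem dlt_fall (m : ℕ) : dlt (fall (m+1)) = fun k => ((m:ℤ)+1) * fall m k := by
  funext k
  simp only [dlt, fall]
  rw [Finset.prod_range_succ' (fun i => k + 1 - (i:ℤ)) m]
  rw [Finset.prod_range_succ (fun i => k - (i:ℤ)) m]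
  have h1 : (∏ x ∈ Finset.range m, (k + 1 - ((x+1 : ℕ) : ℤ)))
      = ∏ x ∈ Finset.range m, (k - (x:ℤ)) :=
    Finset.prod_congr rfl (fun i _ => by push_cast; ring)
  rw [h1]
  push_cast
  ring

theorem dlt_iter_fall (m : ℕ) : dlt^[m] (fall m) = fun _ => (m.factorial : ℤ) := by
  induction m with
  | zero =>
    funext k
    simp [fall]
  | succ m ih =>
    rw [Function.iterate_succ_apply, dlt_fall, dlt_iter_const_mul, ih]
    funext k
    push_cast [Nat.factorial_succ]
    ring

theorem dlt_iter_fall_succ (m : ℕ) : dlt^[m+1] (fall m) = 0 := by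
  rw [Function.iterate_succ_apply', dlt_iter_fall]
  funext k
  simp [dlt]

/-- backwards difference -/
def efun (f : ℤ → ℤ) : ℤ → ℤ := fun k => f k - f (k - 1)

theorem efun_iter (j : ℕ) (f : ℤ → ℤ) :
    efun^[j] f = fun k => dlt^[j] f (k - (j:ℤ)) := by
  induction j generalizing f with
  | zero => simp
  | succ j ih =>
    have h1 : efun f = fun k => dlt f (k + (-1)) := by
      funext k
      simp only [efun, dlt]
      rw [show k + (-1) + 1 = k by ring, show k + (-1) = k - 1 by ring]
    calc efun^[j+1] f = efun^[j] (efun f) := Function.iterate_succ_apply efun j f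
      _ = fun k => dlt^[j] (efun f) (k - (j:ℤ)) := ih _
      _ = fun k => dlt^[j] (fun k' => dlt f (k' + (-1))) (k - (j:ℤ)) := by rw [h1]
      _ = fun k => dlt^[j] (dlt f) (k - (j:ℤ) + (-1)) := by rw [dlt_iter_shift]
      _ = fun k => dlt^[j+1] f (k - ((j+1 : ℕ) : ℤ)) := by
          have h3 : dlt^[j+1] f = dlt^[j] (dlt f) := Function.iterate_succ_apply dlt j f
          rw [h3]
          funext k
          congr 1
          push_cast
          ring_nf

/-- the distinguished translation element -/
def tee (n : ℕ) : ↥(Gsub n) := ⟨⟨1, 0⟩, by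
  show dlt^[n] (0 : ℤ → ℤ) = 0
  exact dlt_iter_zero n⟩

theorem comm_tee_a {n : ℕ} (g : ↥(Gsub n)) (hgm : (g:GG).m = 0) :
    (↑⁅g, tee n⁆ : GG).a = efun (g:GG).a := by
  rw [coe_commutator, comm_a]
  funext k
  have h1 : ((tee n : GG)).m = 1 := rfl
  have h2 : ((tee n : GG)).a = 0 := rfl
  simp only [h1, h2, hgm, Pi.add_apply, Pi.zero_apply, efun]
  rw [show k + (-0 : ℤ) = k by ring, show k + (-0 - 1 : ℤ) = k - 1 by ring]
  simp

theorem lcs_witness (n : ℕ) (hn : 0 < n) :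
    ∃ g ∈ (⊤ : Subgroup ↥(Gsub n)).lowerCentralSeries (n-1), g ≠ 1 := by
  have claim : ∀ j : ℕ, j ≤ n - 1 →
      ∃ g ∈ (⊤ : Subgroup ↥(Gsub n)).lowerCentralSeries j,
        (g:GG).m = 0 ∧ (g:GG).a = efun^[j] (fall (n-1)) := by
    intro j
    induction j with
    | zero =>
      intro _
      refine ⟨⟨⟨0, fall (n-1)⟩, ?_⟩, Subgroup.mem_top _, rfl, rfl⟩
      show dlt^[n] (fall (n-1)) = 0
      rw [show n = (n-1) + 1 by omega]
      exact dlt_iter_fall_succ (n-1)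
    | succ j ih =>
      intro hj
      obtain ⟨g, hgmem, hgm, hga⟩ := ih (by omega)
      refine ⟨⁅g, tee n⁆, ?_, ?_, ?_⟩
      · rw [Subgroup.lowerCentralSeries_succ]
        exact Subgroup.commutator_mem_commutator hgmem (Subgroup.mem_top _)
      · rw [coe_commutator]
        exact comm_m _ _
      · rw [comm_tee_a g hgm, hga]
        exact (Function.iterate_succ_apply' efun j _).symm
  obtain ⟨g, hgmem, hgm, hga⟩ := claim (n-1) le_rfl
  refine ⟨g, hgmem, ?_⟩
  intro hg1
  have : (g:GG).a = 0 := by rw [hg1]; rfl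
  rw [hga, efun_iter, dlt_iter_fall] at this
  have h0 := congrFun this 0
  simp only [Pi.zero_apply] at h0
  have := Nat.factorial_pos (n-1)
  exact absurd h0 (by positivity)

theorem lcs_pred_ne_bot (n : ℕ) (hn : 0 < n) :
    (⊤ : Subgroup ↥(Gsub n)).lowerCentralSeries (n-1) ≠ ⊥ := by
  obtain ⟨g, hgmem, hg1⟩ := lcs_witness n hn
  intro hbot
  rw [hbot, Subgroup.mem_bot] at hgmem
  exact hg1 hgmem
/-! ### the realization as diffeomorphisms -/

/-- the action of the group on `ℝ` -/
def rho (n : ℕ) (g : ↥(Gsub n)) : ℝ → ℝ :=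
  fun x => hfun (g : GG).a x + ((g : GG).m : ℝ)

theorem rho_mul (n : ℕ) (g h : ↥(Gsub n)) :
    rho n (g * h) = rho n g ∘ rho n h := by
  funext x
  have hcoe : ((g * h : ↥(Gsub n)) : GG) = (g : GG) * (h : GG) := rfl
  simp only [rho, Function.comp_apply, hcoe, GG.mul_a, GG.mul_m]
  rw [hfun_add_int (g:GG).a (h:GG).m]
  rw [hfun_add]
  have : ((fun k => (g:GG).a (k + (h:GG).m)) + (h:GG).a)
      = fun k => (g:GG).a (k + (h:GG).m) + (h:GG).a k := rfl
  rw [this]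
  push_cast
  ring

theorem rho_one (n : ℕ) : rho n 1 = id := by
  funext x
  have hcoe : ((1 : ↥(Gsub n)) : GG) = 1 := rfl
  simp only [rho, hcoe, GG.one_a, GG.one_m, hfun_zero]
  simp

theorem rho_isDiffeo (n : ℕ) (g : ↥(Gsub n)) : IsDiffeoR ∞ (rho n g) := by
  refine ⟨?_, ?_, ?_⟩
  · have : rho n g = (fun y => y + ((g:GG).m : ℝ)) ∘ (hperm (g:GG).a) := rfl
    rw [this]
    exact (Equiv.addRight ((g:GG).m : ℝ)).bijective.comp (hperm (g:GG).a).bijective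
  · exact (hfun_contDiff _).add contDiff_const
  · intro x
    have : rho n g = fun x => hfun (g:GG).a x + ((g:GG).m : ℝ) := rfl
    rw [this, deriv_add_const]
    exact hfun_deriv_pos _ x

theorem rho_faithful (n : ℕ) (g : ↥(Gsub n)) (h : rho n g = id) : g = 1 := by
  have h0 := congrFun h 0
  have hfl0 : ⌊(0:ℝ)⌋ = 0 := Int.floor_zero
  have hzero : hfun (g:GG).a 0 = 0 := by
    simp only [hfun, hfl0, Int.cast_zero, sub_zero, zero_add, phi_zpow_zero]
  rw [rho, id_eq, hzero, zero_add] at h0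
  have hm : (g:GG).m = 0 := by exact_mod_cast h0
  have ha : ∀ k : ℤ, (g:GG).a k = 0 := by
    intro k
    have hk := congrFun h ((k:ℝ) + 2⁻¹)
    have hfl : ⌊(k:ℝ) + 2⁻¹⌋ = k := by
      rw [Int.floor_eq_iff]
      constructor
      · linarith
      · push_cast
        linarith
    have harg : (k:ℝ) + 2⁻¹ - (k:ℝ) = 2⁻¹ := by ring
    rw [rho, id_eq, hm] at hk
    simp only [hfun, hfl, harg, Int.cast_zero, add_zero] at hk
    have : (phi ^ (g:GG).a k) (2⁻¹:ℝ) = 2⁻¹ := by linarith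
    exact phi_zpow_half this
  exact Subtype.ext (GG.ext hm (funext ha))

end NilDiffeo

/-- For every positive integer `n`, the group of orientation-preserving `C^∞`
diffeomorphisms of `ℝ` contains a nilpotent subgroup whose nilpotency class is
exactly `n`: there is a group `G`, acting faithfully on `ℝ` by
orientation-preserving `C^∞` diffeomorphisms, whose lower central series (with
`γ₁ = G`) satisfies `γ_{n+1} = 1` and `γ_n ≠ 1`. -/
theorem smooth_diffeos_R_contains_nilpotent_of_every_class
    (n : ℕ) (hn : 0 < n) :
    ∃ (G : Type) (_ : Group G) (ρ : G → ℝ → ℝ),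
      (∀ g h : G, ρ (g * h) = ρ g ∘ ρ h) ∧
      (ρ 1 = id) ∧
      (∀ g : G, IsDiffeoR ∞ (ρ g)) ∧
      (∀ g : G, ρ g = id → g = 1) ∧
      Subgroup.lowerCentralSeries (⊤ : Subgroup G) n = ⊥ ∧ Subgroup.lowerCentralSeries (⊤ : Subgroup G) (n - 1) ≠ ⊥ := by
  exact ⟨↥(NilDiffeo.Gsub n), inferInstance, NilDiffeo.rho n,
    NilDiffeo.rho_mul n, NilDiffeo.rho_one n, NilDiffeo.rho_isDiffeo n,
    NilDiffeo.rho_faithful n, NilDiffeo.lcs_n_eq_bot n hn,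
    NilDiffeo.lcs_pred_ne_bot n hn⟩
end
end

section
/- If N is a nilpotent group of orientation-preserving C² diffeomorphisms of the real line ℝ and every element of N has at least one fixed point, then N is abelian. -/
variable {f g : ℝ → ℝ}

theorem IsDiffeoR.differentiable (hf : IsDiffeoR 2 f) : Differentiable ℝ f :=
  hf.2.1.differentiable (by norm_num)

theorem IsDiffeoR.strictMono (hf : IsDiffeoR 2 f) : StrictMono f :=
  strictMono_of_deriv_pos hf.2.2

theorem IsDiffeoR.continuous (hf : IsDiffeoR 2 f) : Continuous f :=
  hf.2.1.continuous

theorem IsDiffeoR.hasDerivAt (hf : IsDiffeoR 2 f) (x : ℝ) :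
    HasDerivAt f (deriv f x) x :=
  (hf.differentiable x).hasDerivAt

theorem IsDiffeoR.contDiff_deriv (hf : IsDiffeoR 2 f) : ContDiff ℝ 1 (deriv f) := by
  have h2 : ContDiff ℝ (1 + 1 : ℕ) f := by exact_mod_cast hf.2.1
  rw [show ((1+1:ℕ) : WithTop ℕ∞) = (1 : WithTop ℕ∞) + 1 by norm_num, contDiff_succ_iff_deriv] at h2
  exact h2.2.2

theorem IsDiffeoR.continuous_deriv (hf : IsDiffeoR 2 f) : Continuous (deriv f) :=
  hf.contDiff_deriv.continuous

namespace KopellProof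
/-- mirror of a function -/
def mir (f : ℝ → ℝ) : ℝ → ℝ := fun x => -(f (-x))

theorem mir_comp (f g : ℝ → ℝ) (x : ℝ) : mir f (mir g x) = -(f (g (-x))) := by
  simp [mir]

theorem IsDiffeoR_mir (hf : IsDiffeoR 2 f) : IsDiffeoR 2 (KopellProof.mir f) := by
  obtain ⟨hbij, hcd, hpos⟩ := hf
  refine ⟨?_, ?_, ?_⟩
  · have : KopellProof.mir f = (fun x => -x) ∘ f ∘ (fun x => -x) := rfl
    rw [this]
    exact (neg_involutive.bijective).comp (hbij.comp neg_involutive.bijective)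
  · have : KopellProof.mir f = (fun x => -x) ∘ f ∘ (fun x => -x) := rfl
    rw [this]
    exact (contDiff_neg).comp (hcd.comp contDiff_neg)
  · intro x
    have h1 : HasDerivAt (fun x : ℝ => f (-x)) (deriv f (-x) * (-1)) x :=
      ((hcd.differentiable (by norm_num) (-x)).hasDerivAt).comp x (hasDerivAt_neg x)
    have h2 : HasDerivAt (KopellProof.mir f) (-(deriv f (-x) * (-1))) x := h1.neg
    rw [h2.deriv]
    have := hpos (-x); nlinarith


/-- Sign constancy: a continuous function with no zero on the segment between
`t` and `x₀`, positive at `x₀`, is positive at `t`. -/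
theorem pos_of_ne (φ : ℝ → ℝ) (hc : Continuous φ) (t x₀ : ℝ)
    (hne : ∀ s ∈ Set.uIcc t x₀, φ s ≠ 0) (h₀ : 0 < φ x₀) : 0 < φ t := by
  by_contra h
  push_neg at h
  have ht : φ t < 0 := lt_of_le_of_ne h (hne t Set.left_mem_uIcc)
  have h0 : (0:ℝ) ∈ Set.uIcc (φ t) (φ x₀) := by
    rw [Set.mem_uIcc]; left; exact ⟨le_of_lt ht, le_of_lt h₀⟩
  obtain ⟨s, hs, hs0⟩ := intermediate_value_uIcc (f := φ) (hc.continuousOn) h0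
  exact hne s hs hs0

/-- limit of a monotone bounded recursively-defined sequence is a fixed point -/
theorem exists_fixed_limit (φ : ℝ → ℝ) (hφ : Continuous φ) (s : ℕ → ℝ) (B : ℝ)
    (hs : ∀ n, s (n + 1) = φ (s n)) (hmono : Monotone s) (hb : ∀ n, s n ≤ B) :
    ∃ L, φ L = L ∧ (∀ n, s n ≤ L) ∧ L ≤ B ∧
      Filter.Tendsto s Filter.atTop (nhds L) := by
  have hbdd : BddAbove (Set.range s) := ⟨B, by rintro x ⟨n, rfl⟩; exact hb n⟩
  set L := ⨆ n, s n with hL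
  have htend : Filter.Tendsto s Filter.atTop (nhds L) := tendsto_atTop_ciSup hmono hbdd
  have htend2 : Filter.Tendsto (fun n => s (n + 1)) Filter.atTop (nhds L) :=
    htend.comp (Filter.tendsto_add_atTop_nat 1)
  have htend3 : Filter.Tendsto (fun n => φ (s n)) Filter.atTop (nhds (φ L)) :=
    (hφ.tendsto L).comp htend
  have heq : φ L = L := by
    apply tendsto_nhds_unique (htend3.congr (fun n => (hs n).symm)) htend2
  exact ⟨L, heq, fun n => le_ciSup hbdd n, ciSup_le hb, htend⟩

theorem exists_fixed_limit_anti (φ : ℝ → ℝ) (hφ : Continuous φ) (s : ℕ → ℝ) (B : ℝ)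
    (hs : ∀ n, s (n + 1) = φ (s n)) (hmono : Antitone s) (hb : ∀ n, B ≤ s n) :
    ∃ L, φ L = L ∧ (∀ n, L ≤ s n) ∧ B ≤ L ∧
      Filter.Tendsto s Filter.atTop (nhds L) := by
  obtain ⟨L, h1, h2, h3, h4⟩ := exists_fixed_limit (mir φ) (by
      have : mir φ = (fun x => -x) ∘ φ ∘ (fun x => -x) := rfl
      rw [this]; exact continuous_neg.comp (hφ.comp continuous_neg))
    (fun n => -(s n)) (-B) (fun n => by simp [mir, hs n])
    (fun m n h => by simp [hmono h]) (fun n => by simp [hb n])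
  refine ⟨-L, ?_, fun n => by linarith [h2 n], by linarith, ?_⟩
  · have h1' : -(φ (-L)) = L := h1
    linarith
  · have := h4.neg
    simpa using this

theorem log_sub_log_le {m₀ a b : ℝ} (hm : 0 < m₀) (ha : m₀ ≤ a) (hb : m₀ ≤ b) :
    Real.log a - Real.log b ≤ |a - b| / m₀ := by
  rcases le_total a b with h | h
  · have h1 : Real.log a ≤ Real.log b := Real.log_le_log (lt_of_lt_of_le hm ha) h
    have h2 : 0 ≤ |a - b| / m₀ := div_nonneg (abs_nonneg _) hm.le
    linarith
  · have hb0 : 0 < b := lt_of_lt_of_le hm hb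
    have ha0 : 0 < a := lt_of_lt_of_le hm ha
    have h1 : Real.log a - Real.log b = Real.log (a / b) :=
      (Real.log_div ha0.ne' hb0.ne').symm
    have h2 : Real.log (a / b) ≤ a / b - 1 := Real.log_le_sub_one_of_pos (div_pos ha0 hb0)
    have h3 : a / b - 1 = (a - b) / b := by field_simp
    have h4 : (a - b) / b ≤ (a - b) / m₀ := by gcongr
    have h5 : (a - b) / m₀ ≤ |a - b| / m₀ := by gcongr; exact le_abs_self _
    linarith

theorem log_lip {m₀ a b : ℝ} (hm : 0 < m₀) (ha : m₀ ≤ a) (hb : m₀ ≤ b) :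
    |Real.log a - Real.log b| ≤ |a - b| / m₀ := by
  rw [abs_sub_le_iff]
  refine ⟨log_sub_log_le hm ha hb, ?_⟩
  rw [abs_sub_comm]
  exact log_sub_log_le hm hb ha

theorem kopell_aux (f G : ℝ → ℝ)
    (hf : IsDiffeoR 2 f) (hG : IsDiffeoR 2 G)
    (hcomm : ∀ x, f (G x) = G (f x))
    (u y₀ : ℝ) (huy : u < y₀)
    (hfu : f u = u) (hGu : G u = u) (hGy : G y₀ = y₀)
    (hcontr : ∀ x, u < x → x ≤ y₀ → f x < x) :
    ∀ z, f y₀ ≤ z → z ≤ y₀ → ¬ (z < G z) := by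
  have smf := hf.strictMono
  have smG := hG.strictMono
  have hFC : Function.Commute f G := hcomm
  have hin : ∀ x, u < x → x ≤ y₀ → ∀ n, u < f^[n] x ∧ f^[n] x ≤ y₀ := by
    intro x hx1 hx2 n
    induction n with
    | zero => exact ⟨hx1, hx2⟩
    | succ n ih =>
      rw [Function.iterate_succ_apply']
      constructor
      · calc u = f u := hfu.symm
          _ < f (f^[n] x) := smf ih.1
      · exact le_of_lt (lt_of_lt_of_le (hcontr _ ih.1 ih.2) ih.2)
  have horbit : ∀ x, u < x → x ≤ y₀ →
      Filter.Tendsto (fun n => f^[n] x) Filter.atTop (nhds u) := by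
    intro x hx1 hx2
    have hanti : Antitone (fun n => f^[n] x) := by
      apply antitone_nat_of_succ_le
      intro n
      rw [Function.iterate_succ_apply']
      exact le_of_lt (hcontr _ (hin x hx1 hx2 n).1 (hin x hx1 hx2 n).2)
    obtain ⟨L, hL1, hL2, hL3, hL4⟩ := exists_fixed_limit_anti f hf.continuous
      (fun n => f^[n] x) u (fun n => Function.iterate_succ_apply' f n x) hanti
      (fun n => le_of_lt (hin x hx1 hx2 n).1)
    have hLu : L = u := by
      by_contra hne
      have hLgt : u < L := lt_of_le_of_ne hL3 (Ne.symm hne)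
      have : f L < L := hcontr L hLgt (le_trans (hL2 0) hx2)
      rw [hL1] at this; exact lt_irrefl _ this
    rwa [hLu] at hL4
  set d := deriv f with hd
  set dG := deriv G with hdG
  have hDn : ∀ (n : ℕ) (x : ℝ),
      HasDerivAt (f^[n]) (∏ i ∈ Finset.range n, d (f^[i] x)) x := by
    intro n x
    induction n with
    | zero => simpa using hasDerivAt_id x
    | succ n ih =>
      rw [Function.iterate_succ']
      have h := (hf.hasDerivAt (f^[n] x)).comp x ih
      rw [Finset.prod_range_succ]
      exact h.congr_deriv (mul_comm _ _)
  have hDG : ∀ (m : ℕ) (x : ℝ),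
      HasDerivAt (G^[m]) (∏ i ∈ Finset.range m, dG (G^[i] x)) x := by
    intro m x
    induction m with
    | zero => simpa using hasDerivAt_id x
    | succ m ih =>
      rw [Function.iterate_succ']
      have h := (hG.hasDerivAt (G^[m] x)).comp x ih
      rw [Finset.prod_range_succ]
      exact h.congr_deriv (mul_comm _ _)
  have hdpos : ∀ x, 0 < d x := hf.2.2
  have hdGpos : ∀ x, 0 < dG x := hG.2.2
  have hDnpos : ∀ n x, 0 < ∏ i ∈ Finset.range n, d (f^[i] x) := by
    intro n x; exact Finset.prod_pos (fun i _ => hdpos _)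
  -- Lipschitz data on J = Icc u y₀
  have hJne : (Set.Icc u y₀).Nonempty := Set.nonempty_Icc.2 (le_of_lt huy)
  obtain ⟨zmin, hzmin, hzminOn⟩ := isCompact_Icc.exists_isMinOn hJne
    hf.continuous_deriv.continuousOn
  set m₀ := d zmin with hm₀
  have hm₀pos : 0 < m₀ := hdpos zmin
  have hm₀le : ∀ x ∈ Set.Icc u y₀, m₀ ≤ d x := fun x hx => hzminOn hx
  have hd1 : ContDiff ℝ 1 d := hf.contDiff_deriv
  have hd'cont : Continuous (deriv d) := (contDiff_one_iff_deriv.mp hd1).2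
  obtain ⟨M₁, hM₁⟩ := isCompact_Icc.exists_bound_of_continuousOn
    (f := deriv d) hd'cont.continuousOn
  have hM₁0 : 0 ≤ M₁ := le_trans (norm_nonneg _) (hM₁ u (Set.left_mem_Icc.2 (le_of_lt huy)))
  have hdlip : ∀ x ∈ Set.Icc u y₀, ∀ y ∈ Set.Icc u y₀, |d x - d y| ≤ M₁ * |x - y| := by
    intro x hx y hy
    have hderiv : ∀ z ∈ Set.Icc u y₀, HasDerivWithinAt d (deriv d z) (Set.Icc u y₀) z :=
      fun z _ => ((hd1.differentiable one_ne_zero z).hasDerivAt).hasDerivWithinAt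
    have h := Convex.norm_image_sub_le_of_norm_hasDerivWithin_le hderiv
      (fun z hz => hM₁ z hz) (convex_Icc u y₀) hy hx
    simpa [Real.norm_eq_abs] using h
  have hloglip : ∀ x ∈ Set.Icc u y₀, ∀ y ∈ Set.Icc u y₀,
      |Real.log (d x) - Real.log (d y)| ≤ (M₁ / m₀) * |x - y| := by
    intro x hx y hy
    calc |Real.log (d x) - Real.log (d y)| ≤ |d x - d y| / m₀ :=
          log_lip hm₀pos (hm₀le x hx) (hm₀le y hy)
      _ ≤ (M₁ * |x - y|) / m₀ := by gcongr; exact hdlip x hx y hy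
      _ = (M₁ / m₀) * |x - y| := by ring
  -- fundamental domain
  have hfy0 : u < f y₀ := by
    calc u = f u := hfu.symm
      _ < f y₀ := smf huy
  have hfyy : f y₀ < y₀ := hcontr y₀ huy le_rfl
  have hty : ∀ i : ℕ, u < f^[i] y₀ ∧ f^[i] y₀ ≤ y₀ := hin y₀ huy le_rfl
  have hDiter : ∀ x, f y₀ ≤ x → x ≤ y₀ → ∀ i : ℕ,
      f^[i+1] y₀ ≤ f^[i] x ∧ f^[i] x ≤ f^[i] y₀ := by
    intro x hx1 hx2 i
    constructor
    · have h := (smf.iterate i).monotone hx1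
      rwa [← Function.iterate_succ_apply] at h
    · exact (smf.iterate i).monotone hx2
  have hdist : ∀ (n : ℕ), ∀ x, f y₀ ≤ x → x ≤ y₀ → ∀ y, f y₀ ≤ y → y ≤ y₀ →
      |Real.log (∏ i ∈ Finset.range n, d (f^[i] x)) -
       Real.log (∏ i ∈ Finset.range n, d (f^[i] y))| ≤ (M₁ / m₀) * (y₀ - u) := by
    intro n x hx1 hx2 y hy1 hy2
    rw [Real.log_prod (fun i _ => (hdpos _).ne'),
        Real.log_prod (fun i _ => (hdpos _).ne'), ← Finset.sum_sub_distrib]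
    have hmem : ∀ w, f y₀ ≤ w → w ≤ y₀ → ∀ i : ℕ, f^[i] w ∈ Set.Icc u y₀ := by
      intro w hw1 hw2 i
      exact ⟨le_of_lt (lt_of_lt_of_le (hty (i+1)).1 (hDiter w hw1 hw2 i).1),
        le_trans (hDiter w hw1 hw2 i).2 (hty i).2⟩
    calc |∑ i ∈ Finset.range n, (Real.log (d (f^[i] x)) - Real.log (d (f^[i] y)))|
        ≤ ∑ i ∈ Finset.range n, |Real.log (d (f^[i] x)) - Real.log (d (f^[i] y))| :=
          Finset.abs_sum_le_sum_abs _ _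
      _ ≤ ∑ i ∈ Finset.range n, (M₁ / m₀) * (f^[i] y₀ - f^[i+1] y₀) := by
          apply Finset.sum_le_sum
          intro i _
          have hxi := hDiter x hx1 hx2 i
          have hyi := hDiter y hy1 hy2 i
          calc |Real.log (d (f^[i] x)) - Real.log (d (f^[i] y))|
              ≤ (M₁ / m₀) * |f^[i] x - f^[i] y| :=
                hloglip _ (hmem x hx1 hx2 i) _ (hmem y hy1 hy2 i)
            _ ≤ (M₁ / m₀) * (f^[i] y₀ - f^[i+1] y₀) := by
                apply mul_le_mul_of_nonneg_left _ (div_nonneg hM₁0 hm₀pos.le)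
                rw [abs_le]
                constructor <;> [linarith [hxi.1, hyi.2]; linarith [hxi.2, hyi.1]]
      _ = (M₁ / m₀) * ∑ i ∈ Finset.range n, (f^[i] y₀ - f^[i+1] y₀) := by
          rw [Finset.mul_sum]
      _ ≤ (M₁ / m₀) * (y₀ - u) := by
          have hsum : ∑ i ∈ Finset.range n, (f^[i] y₀ - f^[i+1] y₀) = y₀ - f^[n] y₀ := by
            have h := Finset.sum_range_sub' (f := fun i => f^[i] y₀) (n := n)
            simpa using h
          rw [hsum]
          apply mul_le_mul_of_nonneg_left _ (div_nonneg hM₁0 hm₀pos.le)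
          linarith [(hty n).1]
  set K := (M₁ / m₀) * (y₀ - u) with hK
  -- G fixes f y₀ and u, preserves D
  have hGfy : G (f y₀) = f y₀ := by rw [← hcomm, hGy]
  have hGit : ∀ m, G^[m] (f y₀) = f y₀ := fun m => Function.iterate_fixed hGfy m
  have hGity : ∀ m, G^[m] y₀ = y₀ := fun m => Function.iterate_fixed hGy m
  have hGD : ∀ m x, f y₀ ≤ x → x ≤ y₀ → f y₀ ≤ G^[m] x ∧ G^[m] x ≤ y₀ := by
    intro m x hx1 hx2
    constructor
    · calc f y₀ = G^[m] (f y₀) := (hGit m).symm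
        _ ≤ G^[m] x := (smG.iterate m).monotone hx1
    · calc G^[m] x ≤ G^[m] y₀ := (smG.iterate m).monotone hx2
        _ = y₀ := hGity m
  have hGu_it : ∀ m, G^[m] u = u := fun m => Function.iterate_fixed hGu m
  -- derivative of G at u is 1
  have hdGu : dG u = 1 := by
    have hseq : Filter.Tendsto (fun n => f^[n] y₀) Filter.atTop (nhds u) :=
      horbit y₀ huy le_rfl
    have hne : ∀ n : ℕ, f^[n] y₀ ≠ u := fun n => (hty n).1.ne'
    have hseq' : Filter.Tendsto (fun n => f^[n] y₀) Filter.atTop (nhdsWithin u {u}ᶜ) := by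
      apply tendsto_nhdsWithin_of_tendsto_nhds_of_eventually_within _ hseq
      exact Filter.Eventually.of_forall (fun n => hne n)
    have hslope := (hasDerivAt_iff_tendsto_slope.mp (hG.hasDerivAt u)).comp hseq'
    have hGfix : ∀ n : ℕ, G (f^[n] y₀) = f^[n] y₀ := by
      intro n
      have h := (hFC.iterate_left n) y₀
      calc G (f^[n] y₀) = f^[n] (G y₀) := (h ▸ rfl : f^[n] (G y₀) = G (f^[n] y₀)).symm
        _ = f^[n] y₀ := by rw [hGy]
    have hconst : ∀ n : ℕ, slope G u (f^[n] y₀) = 1 := by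
      intro n
      rw [slope_def_field, hGfix n, hGu]
      exact div_self (sub_ne_zero.2 (hne n))
    have h1 : Filter.Tendsto (fun _ : ℕ => (1:ℝ)) Filter.atTop (nhds (dG u)) := by
      have := hslope.congr (fun n => by
        show slope G u (f^[n] y₀) = 1
        exact hconst n)
      exact this
    exact tendsto_nhds_unique h1 tendsto_const_nhds
  have hDGu : ∀ m, (∏ i ∈ Finset.range m, dG (G^[i] u)) = 1 := by
    intro m
    apply Finset.prod_eq_one
    intro i _
    rw [Function.iterate_fixed hGu i, hdGu]
  -- exchange identity
  have hexch : ∀ (m n : ℕ) (x : ℝ),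
      (∏ i ∈ Finset.range m, dG (G^[i] (f^[n] x))) * (∏ i ∈ Finset.range n, d (f^[i] x))
      = (∏ i ∈ Finset.range n, d (f^[i] (G^[m] x))) * (∏ i ∈ Finset.range m, dG (G^[i] x)) := by
    intro m n x
    have h1 : HasDerivAt (G^[m] ∘ f^[n])
        ((∏ i ∈ Finset.range m, dG (G^[i] (f^[n] x))) * (∏ i ∈ Finset.range n, d (f^[i] x))) x :=
      (hDG m (f^[n] x)).comp x (hDn n x)
    have h2 : HasDerivAt (f^[n] ∘ G^[m])
        ((∏ i ∈ Finset.range n, d (f^[i] (G^[m] x))) * (∏ i ∈ Finset.range m, dG (G^[i] x))) x :=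
      (hDn n (G^[m] x)).comp x (hDG m x)
    have hfun : f^[n] ∘ G^[m] = G^[m] ∘ f^[n] :=
      funext fun y => ((hFC.iterate_left n).iterate_right m) y
    rw [hfun] at h2
    exact h1.unique h2
  -- step 2: uniform derivative bounds for iterates of G on D
  have hbound : ∀ (m : ℕ) (x : ℝ), f y₀ ≤ x → x ≤ y₀ →
      Real.exp (-K) ≤ (∏ i ∈ Finset.range m, dG (G^[i] x)) := by
    intro m x hx1 hx2
    set DGx := ∏ i ∈ Finset.range m, dG (G^[i] x) with hDGx
    have hxu : u < x := lt_of_lt_of_le hfy0 hx1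
    have horb := horbit x hxu hx2
    set A := fun n : ℕ => (∏ i ∈ Finset.range n, d (f^[i] x)) /
      (∏ i ∈ Finset.range n, d (f^[i] (G^[m] x))) with hA
    have hGmx := hGD m x hx1 hx2
    have hAlow : ∀ n, Real.exp (-K) ≤ A n := by
      intro n
      have h := hdist n x hx1 hx2 (G^[m] x) hGmx.1 hGmx.2
      have hpx := hDnpos n x
      have hpy := hDnpos n (G^[m] x)
      have hlog : |Real.log (A n)| ≤ K := by
        rw [hA]
        simp only []
        rw [Real.log_div hpx.ne' hpy.ne']
        exact h
      have h1 : -K ≤ Real.log (A n) := neg_le_of_abs_le hlog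
      calc Real.exp (-K) ≤ Real.exp (Real.log (A n)) := Real.exp_le_exp.2 h1
        _ = A n := Real.exp_log (div_pos hpx hpy)
    have hAeq : ∀ n, A n = DGx / (∏ i ∈ Finset.range m, dG (G^[i] (f^[n] x))) := by
      intro n
      have h := hexch m n x
      have hp1 := hDnpos n x
      have hp2 := hDnpos n (G^[m] x)
      have hp3 : 0 < ∏ i ∈ Finset.range m, dG (G^[i] (f^[n] x)) :=
        Finset.prod_pos (fun i _ => hdGpos _)
      rw [hA]
      simp only []
      rw [div_eq_div_iff hp2.ne' hp3.ne']
      linarith [h]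
    have hcontDG : Continuous (fun y => ∏ i ∈ Finset.range m, dG (G^[i] y)) := by
      apply continuous_finset_prod
      intro i _
      exact hG.continuous_deriv.comp (hG.continuous.iterate i)
    have hlim1 : Filter.Tendsto (fun n => (∏ i ∈ Finset.range m, dG (G^[i] (f^[n] x))))
        Filter.atTop (nhds 1) := by
      have h := (hcontDG.tendsto u).comp horb
      rwa [hDGu m] at h
    have hlimA : Filter.Tendsto A Filter.atTop (nhds DGx) := by
      have h1 : Filter.Tendsto
          (fun n => DGx / (∏ i ∈ Finset.range m, dG (G^[i] (f^[n] x))))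
          Filter.atTop (nhds (DGx / 1)) :=
        Filter.Tendsto.div tendsto_const_nhds hlim1 one_ne_zero
      rw [div_one] at h1
      exact h1.congr (fun n => (hAeq n).symm)
    exact ge_of_tendsto hlimA (Filter.Eventually.of_forall hAlow)
  -- step 3
  intro z hz1 hz2 hzG
  set zs := fun m : ℕ => G^[m] z with hzs
  have hzsmono : ∀ m, zs m < zs (m+1) := by
    intro m
    have h := (smG.iterate m) hzG
    rw [hzs]
    simp only []
    rw [Function.iterate_succ_apply]
    exact h
  have hzsmono' : Monotone zs := monotone_nat_of_le_succ (fun m => (hzsmono m).le)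
  have hzsD : ∀ m, f y₀ ≤ zs m ∧ zs m ≤ y₀ := fun m => hGD m z hz1 hz2
  have hsum : ∀ M : ℕ, ∑ m ∈ Finset.range M, (zs (m+1) - zs m) = zs M - z := by
    intro M
    have h := Finset.sum_range_sub (f := zs) (n := M)
    simpa [hzs] using h
  set δ := Real.exp (-K) * (G z - z) with hδ
  have hδpos : 0 < δ := mul_pos (Real.exp_pos _) (by linarith)
  have hterm : ∃ m, zs (m+1) - zs m < δ := by
    by_contra hc
    push_neg at hc
    obtain ⟨M, hM⟩ := exists_nat_gt ((y₀ - z) / δ)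
    have h1 : (M : ℝ) * δ ≤ ∑ m ∈ Finset.range M, (zs (m+1) - zs m) := by
      calc (M : ℝ) * δ = ∑ _m ∈ Finset.range M, δ := by
            rw [Finset.sum_const, Finset.card_range, nsmul_eq_mul]
        _ ≤ ∑ m ∈ Finset.range M, (zs (m+1) - zs m) :=
            Finset.sum_le_sum (fun m _ => hc m)
    rw [hsum M] at h1
    have h2 : zs M - z ≤ y₀ - z := by linarith [(hzsD M).2]
    have h3 : (M : ℝ) * δ ≤ y₀ - z := le_trans h1 h2
    have h4 : (y₀ - z) / δ < (M : ℝ) := hM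
    rw [div_lt_iff₀ hδpos] at h4
    linarith
  obtain ⟨m, hm⟩ := hterm
  obtain ⟨ξ, hξ, hξe⟩ := exists_hasDerivAt_eq_slope (f := G^[m])
    (f' := fun y => ∏ i ∈ Finset.range m, dG (G^[i] y)) hzG
    (Continuous.continuousOn (hG.continuous.iterate m)) (fun y _ => hDG m y)
  have hGzy : G z ≤ y₀ := by
    calc G z ≤ G y₀ := smG.monotone hz2
      _ = y₀ := hGy
  have hξD1 : f y₀ ≤ ξ := le_trans hz1 hξ.1.le
  have hξD2 : ξ ≤ y₀ := le_trans hξ.2.le hGzy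
  have hlow := hbound m ξ hξD1 hξD2
  have hnum : G^[m] (G z) - G^[m] z = zs (m+1) - zs m := by
    rw [hzs]
    simp only []
    rw [Function.iterate_succ_apply]
  rw [hnum] at hξe
  have hval : (zs (m+1) - zs m) / (G z - z) < Real.exp (-K) := by
    rw [div_lt_iff₀ (by linarith)]
    calc zs (m+1) - zs m < δ := hm
      _ = Real.exp (-K) * (G z - z) := rfl
  rw [hξe] at hlow
  linarith

theorem kopell_core (f fi g gi : ℝ → ℝ)
    (hf : IsDiffeoR 2 f) (hfi : IsDiffeoR 2 fi) (hg : IsDiffeoR 2 g) (hgi : IsDiffeoR 2 gi)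
    (hffi : ∀ x, f (fi x) = x) (hfif : ∀ x, fi (f x) = x)
    (hggi : ∀ x, g (gi x) = x) (hgig : ∀ x, gi (g x) = x)
    (hcomm : ∀ x, f (g x) = g (f x))
    (u y₀ : ℝ) (huy : u < y₀)
    (hfu : f u = u) (hgu : g u = u) (hgy : g y₀ = y₀)
    (hcontr : ∀ x, u < x → x ≤ y₀ → f x < x) :
    ∀ x, u < x → x ≤ y₀ → g x = x := by
  classical
  have smgi := hgi.strictMono
  have hsmfi := hfi.strictMono
  have hFC : Function.Commute f g := hcomm
  have hgiu : gi u = u := by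
    calc gi u = gi (g u) := by rw [hgu]
      _ = u := hgig u
  have hgiy : gi y₀ = y₀ := by
    calc gi y₀ = gi (g y₀) := by rw [hgy]
      _ = y₀ := hgig y₀
  have hcommgi : ∀ x, f (gi x) = gi (f x) := by
    intro x
    calc f (gi x) = gi (g (f (gi x))) := (hgig _).symm
      _ = gi (f (g (gi x))) := by rw [hcomm]
      _ = gi (f x) := by rw [hggi]
  have hD : ∀ z, f y₀ ≤ z → z ≤ y₀ → g z = z := by
    intro z h1 h2
    rcases lt_trichotomy z (g z) with h | h | h
    · exact absurd h (kopell_aux f g hf hg hcomm u y₀ huy hfu hgu hgy hcontr z h1 h2)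
    · exact h.symm
    · have h' : z < gi z := by
        have hh := smgi h
        rwa [hgig] at hh
      exact absurd h' (kopell_aux f gi hf hgi hcommgi u y₀ huy hfu hgiu hgiy hcontr z h1 h2)
  intro x hx1 hx2
  have hfiu : fi u = u := by
    calc fi u = fi (f u) := by rw [hfu]
      _ = u := hfif u
  have hfi_gt : ∀ t, u < t → t ≤ y₀ → t < fi t := by
    intro t ht1 ht2
    by_contra hle
    push_neg at hle
    have hfit_u : u < fi t := by
      calc u = fi u := hfiu.symm
        _ < fi t := hsmfi ht1
    have h := hcontr (fi t) hfit_u (le_trans hle ht2)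
    rw [hffi] at h
    linarith
  have hfyy : f y₀ < y₀ := hcontr y₀ huy le_rfl
  have hex : ∃ n : ℕ, f y₀ < fi^[n] x := by
    by_contra hc
    push_neg at hc
    have hinc : ∀ n, u < fi^[n] x ∧ fi^[n] x ≤ f y₀ := by
      intro n
      induction n with
      | zero => exact ⟨hx1, hc 0⟩
      | succ n ih =>
        refine ⟨?_, hc (n+1)⟩
        rw [Function.iterate_succ_apply']
        calc u = fi u := hfiu.symm
          _ < fi (fi^[n] x) := hsmfi ih.1
    have hmono : Monotone (fun n => fi^[n] x) := by
      apply monotone_nat_of_le_succ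
      intro n
      rw [Function.iterate_succ_apply']
      exact (hfi_gt _ (hinc n).1 (le_trans (hinc n).2 hfyy.le)).le
    obtain ⟨L, hL1, hL2, hL3, _⟩ := exists_fixed_limit fi hfi.continuous
      (fun n => fi^[n] x) (f y₀) (fun n => Function.iterate_succ_apply' fi n x) hmono
      (fun n => (hinc n).2)
    have hLu : u < L := lt_of_lt_of_le (hinc 0).1 (hL2 0)
    have hfL : f L = L := by
      conv_lhs => rw [← hL1]
      exact hffi L
    have h := hcontr L hLu (le_trans hL3 hfyy.le)
    rw [hfL] at h
    exact lt_irrefl _ h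
  set n := Nat.find hex with hn_def
  have hn : f y₀ < fi^[n] x := Nat.find_spec hex
  have hnle : fi^[n] x ≤ y₀ := by
    rcases Nat.eq_zero_or_pos n with h0 | hpos
    · rw [h0]; simpa using hx2
    · obtain ⟨n', hn'⟩ := Nat.exists_eq_succ_of_ne_zero hpos.ne'
      have hprev : ¬ f y₀ < fi^[n'] x := by
        have hlt : n' < n := by omega
        rw [hn_def] at hlt
        exact Nat.find_min hex hlt
      push_neg at hprev
      rw [hn', Function.iterate_succ_apply']
      calc fi (fi^[n'] x) ≤ fi (f y₀) := hsmfi.monotone hprev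
        _ = y₀ := hfif y₀
  have hgfix : g (fi^[n] x) = fi^[n] x := hD _ hn.le hnle
  have hffi_li : Function.LeftInverse f fi := hffi
  have hback : f^[n] (fi^[n] x) = x := (hffi_li.iterate n) x
  calc g x = g (f^[n] (fi^[n] x)) := by rw [hback]
    _ = f^[n] (g (fi^[n] x)) := ((hFC.iterate_left n) _).symm
    _ = f^[n] (fi^[n] x) := by rw [hgfix]
    _ = x := hback

theorem fix_isClosed (D : ℝ → ℝ) (hD : Continuous D) : IsClosed {x : ℝ | D x = x} :=
  isClosed_eq hD continuous_id

theorem MKC (C Ci D Di : ℝ → ℝ)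
    (hC : IsDiffeoR 2 C) (hCi : IsDiffeoR 2 Ci) (hD : IsDiffeoR 2 D) (hDi : IsDiffeoR 2 Di)
    (hCCi : ∀ x, C (Ci x) = x) (hCiC : ∀ x, Ci (C x) = x)
    (hDDi : ∀ x, D (Di x) = x) (hDiD : ∀ x, Di (D x) = x)
    (hcomm : ∀ x, C (D x) = D (C x))
    (u v : ℝ) (huv : u < v) (hCu : C u = u) (hCv : C v = v)
    (hfree : ∀ t, u < t → t < v → C t ≠ t)
    (hDu : u < D u) (hDfix : ∃ x, D x = x) : False := by
  have smC := hC.strictMono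
  have smCi := hCi.strictMono
  have smD := hD.strictMono
  have smDi := hDi.strictMono
  have hCiu : Ci u = u := by
    calc Ci u = Ci (C u) := by rw [hCu]
      _ = u := hCiC u
  have hcommDi : ∀ x, C (Di x) = Di (C x) := by
    intro x
    calc C (Di x) = Di (D (C (Di x))) := (hDiD _).symm
      _ = Di (C (D (Di x))) := by rw [hcomm]
      _ = Di (C x) := by rw [hDDi]
  have hcommCi : ∀ x, Ci (D x) = D (Ci x) := by
    intro x
    calc Ci (D x) = Ci (D (C (Ci x))) := by rw [hCCi]
      _ = Ci (C (D (Ci x))) := by rw [hcomm]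
      _ = D (Ci x) := by rw [hCiC]
  have hfixC : ∀ t, D t = t → D (C t) = C t := by
    intro t ht
    calc D (C t) = C (D t) := (hcomm t).symm
      _ = C t := by rw [ht]
  have hfixCi : ∀ t, D t = t → D (Ci t) = Ci t := by
    intro t ht
    calc D (Ci t) = Ci (D t) := (hcommCi t).symm
      _ = Ci t := by rw [ht]
  have hclosed : IsClosed {x : ℝ | D x = x} := fix_isClosed D hD.continuous
  by_cases hP : ({x : ℝ | D x = x} ∩ Set.Ici u).Nonempty
  · -- minimal fixed point of D above u
    set P := {x : ℝ | D x = x} ∩ Set.Ici u with hPdef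
    have hPclosed : IsClosed P := hclosed.inter isClosed_Ici
    have hPbdd : BddBelow P := ⟨u, fun x hx => hx.2⟩
    set p := sInf P with hpdef
    have hpP : p ∈ P := hPclosed.csInf_mem hP hPbdd
    have hpu : u < p := lt_of_le_of_ne hpP.2 (by
      intro h
      have h1 : D p = p := hpP.1
      rw [← h] at h1
      exact hDu.ne' h1)
    have hDgt : ∀ t, u ≤ t → t < p → t < D t := by
      intro t ht1 ht2
      have h := pos_of_ne (fun s => D s - s) (hD.continuous.sub continuous_id) t u
        (by
          intro s hs
          rw [Set.mem_uIcc] at hs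
          have hsu : u ≤ s ∧ s < p := by
            rcases hs with h | h
            · exact ⟨le_trans ht1 h.1, lt_of_le_of_lt h.2 hpu⟩
            · exact ⟨h.1, lt_of_le_of_lt h.2 ht2⟩
          intro hzero
          have h0 : D s - s = 0 := hzero
          have : s ∈ P := ⟨show D s = s by linarith, hsu.1⟩
          exact absurd (csInf_le hPbdd this) (not_le.2 hsu.2))
        (by simpa using hDu)
      simpa using h
    have hCp : C p = p := by
      have h1 : C p ∈ P := ⟨hfixC p hpP.1, by
        calc u = C u := hCu.symm
          _ ≤ C p := smC.monotone hpP.2⟩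
      have h2 : Ci p ∈ P := ⟨hfixCi p hpP.1, by
        calc u = Ci u := hCiu.symm
          _ ≤ Ci p := smCi.monotone hpP.2⟩
      have h3 : p ≤ C p := csInf_le hPbdd h1
      have h4 : p ≤ Ci p := csInf_le hPbdd h2
      have h5 : C p ≤ C (Ci p) := smC.monotone h4
      rw [hCCi] at h5
      linarith
    have hconc := kopell_core (mir D) (mir Di) (mir C) (mir Ci)
      (IsDiffeoR_mir hD) (IsDiffeoR_mir hDi) (IsDiffeoR_mir hC) (IsDiffeoR_mir hCi)
      (by intro x; simp [mir, hDDi]) (by intro x; simp [mir, hDiD])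
      (by intro x; simp [mir, hCCi]) (by intro x; simp [mir, hCiC])
      (by intro x; simp [mir, hcomm]) (-p) (-u) (by linarith)
      (by have h1 : D p = p := hpP.1; simp [mir, h1]) (by simp [mir, hCp]) (by simp [mir, hCu])
      (by
        intro x hx1 hx2
        have h1 : u ≤ -x := by linarith
        have h2 : -x < p := by linarith
        have := hDgt (-x) h1 h2
        simp only [mir]
        linarith)
    set t₀ := (u + min p v) / 2 with ht₀
    have ht₀u : u < t₀ := by
      have : u < min p v := lt_min hpu huv
      simp only [ht₀]; linarith
    have ht₀p : t₀ < p := by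
      have : min p v ≤ p := min_le_left _ _
      simp only [ht₀]; linarith
    have ht₀v : t₀ < v := by
      have : min p v ≤ v := min_le_right _ _
      simp only [ht₀]; linarith
    have h := hconc (-t₀) (by linarith) (by linarith)
    simp only [mir, neg_neg] at h
    have hCt : C t₀ = t₀ := by linarith
    exact hfree t₀ ht₀u ht₀v hCt
  · -- all fixed points of D are below u
    obtain ⟨x₁, hx₁⟩ := hDfix
    set Q := {x : ℝ | D x = x} with hQdef
    have hQne : Q.Nonempty := ⟨x₁, hx₁⟩
    have hQbdd : BddAbove Q := by
      refine ⟨u, fun x hx => ?_⟩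
      by_contra hgt
      push_neg at hgt
      exact hP ⟨x, hx, le_of_lt hgt⟩
    set q := sSup Q with hqdef
    have hqQ : q ∈ Q := hclosed.csSup_mem hQne hQbdd
    have hqu : q < u := by
      have h1 : q ≤ u := csSup_le hQne (fun x hx => by
        by_contra hgt
        push_neg at hgt
        exact hP ⟨x, hx, le_of_lt hgt⟩)
      rcases lt_or_eq_of_le h1 with h | h
      · exact h
      · exfalso
        rw [h] at hqQ
        exact hDu.ne' hqQ
    have hDgt : ∀ t, q < t → t < D t := by
      intro t ht
      have h := pos_of_ne (fun s => D s - s) (hD.continuous.sub continuous_id) t u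
        (by
          intro s hs
          rw [Set.mem_uIcc] at hs
          have hsq : q < s := by
            rcases hs with h | h
            · exact lt_of_lt_of_le ht h.1
            · exact lt_of_lt_of_le hqu h.1
          intro hzero
          have h0 : D s - s = 0 := hzero
          have : s ∈ Q := show D s = s by linarith
          exact absurd (le_csSup hQbdd this) (not_le.2 hsq))
        (by simpa using hDu)
      simpa using h
    have hDiq : Di q = q := by
      calc Di q = Di (D q) := by rw [hqQ]
        _ = q := hDiD q
    have hDi_lt : ∀ t, q < t → Di t < t := by
      intro t ht
      have hq' : q < Di t := by
        calc q = Di q := hDiq.symm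
          _ < Di t := smDi ht
      have h := hDgt (Di t) hq'
      rwa [hDDi] at h
    have hCq : C q = q := by
      have h1 : C q ∈ Q := hfixC q hqQ
      have h2 : Ci q ∈ Q := hfixCi q hqQ
      have h3 : C q ≤ q := le_csSup hQbdd h1
      have h4 : Ci q ≤ q := le_csSup hQbdd h2
      have h5 : C (Ci q) ≤ C q := smC.monotone h4
      rw [hCCi] at h5
      linarith
    have hcommDiC : ∀ x, Di (C x) = C (Di x) := fun x => (hcommDi x).symm
    have hconc := kopell_core Di D C Ci hDi hD hC hCi
      hDiD hDDi hCCi hCiC hcommDiC q v (by linarith) hDiq hCq hCv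
      (fun x hx _ => hDi_lt x hx)
    set t₀ := (u + v) / 2 with ht₀
    have h := hconc t₀ (by simp only [ht₀]; linarith) (by simp only [ht₀]; linarith)
    exact hfree t₀ (by simp only [ht₀]; linarith) (by simp only [ht₀]; linarith) h

theorem exists_comm_central {N : Type*} [Group N] [Group.IsNilpotent N]
    (h : ∃ a b : N, a * b ≠ b * a) :
    ∃ a b : N, a * b * a⁻¹ * b⁻¹ ≠ 1 ∧ ∀ g : N, (a * b * a⁻¹ * b⁻¹) * g = g * (a * b * a⁻¹ * b⁻¹) := by
  obtain ⟨x, y, hxy⟩ := h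
  have hcen_ne : Subgroup.center N ≠ ⊤ := by
    intro htop
    apply hxy
    have hx : x ∈ Subgroup.center N := htop ▸ Subgroup.mem_top x
    exact (Subgroup.mem_center_iff.mp hx y).symm
  -- there is an element of the second upper central series not in the center
  have hstab : ∀ n : ℕ, Subgroup.upperCentralSeries N 1 = Subgroup.upperCentralSeries N 2 →
      Subgroup.upperCentralSeries N (n + 1) = Subgroup.upperCentralSeries N 1 := by
    intro n h12
    induction n with
    | zero => rfl
    | succ n ih =>
      ext z
      rw [mem_upperCentralSeries_succ_iff]
      constructor
      · intro hz
        rw [h12]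
        rw [mem_upperCentralSeries_succ_iff]
        intro yy
        rw [← ih]
        exact hz yy
      · intro hz yy
        rw [ih]
        rw [h12] at hz
        rw [mem_upperCentralSeries_succ_iff] at hz
        exact hz yy
  have hne12 : Subgroup.upperCentralSeries N 1 ≠ Subgroup.upperCentralSeries N 2 := by
    intro h12
    obtain ⟨n, hn⟩ := Group.IsNilpotent.nilpotent (G := N)
    rcases n with _ | n
    · -- Subgroup.upperCentralSeries N 0 = ⊤ means the group is trivial
      apply hcen_ne
      rw [eq_top_iff, ← hn, ← upperCentralSeries_one]
      exact upperCentralSeries_mono N (Nat.zero_le 1)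
    · apply hcen_ne
      rw [← upperCentralSeries_one]
      rw [← hstab n h12]
      exact hn
  have hsub : Subgroup.upperCentralSeries N 1 ≤ Subgroup.upperCentralSeries N 2 :=
    upperCentralSeries_mono N (by norm_num)
  have : ∃ a : N, a ∈ Subgroup.upperCentralSeries N 2 ∧ a ∉ Subgroup.upperCentralSeries N 1 := by
    by_contra hc
    push_neg at hc
    apply hne12
    exact le_antisymm hsub (fun z hz => hc z hz)
  obtain ⟨a, ha2, ha1⟩ := this
  rw [upperCentralSeries_one] at ha1
  have hb : ∃ b : N, a * b ≠ b * a := by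
    by_contra hc
    push_neg at hc
    apply ha1
    rw [Subgroup.mem_center_iff]
    intro g
    exact (hc g).symm
  obtain ⟨b, hab⟩ := hb
  refine ⟨a, b, ?_, ?_⟩
  · intro h1
    apply hab
    have : a * b * a⁻¹ * b⁻¹ * (b * a) = 1 * (b * a) := by rw [h1]
    group at this
    rw [this]
  · have hcen : a * b * a⁻¹ * b⁻¹ ∈ Subgroup.center N := by
      have h2 := mem_upperCentralSeries_succ_iff.mp (by exact_mod_cast ha2 : a ∈ Subgroup.upperCentralSeries N (1 + 1))
      have h3 := h2 b
      rw [upperCentralSeries_one] at h3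
      exact h3
    intro g
    exact (Subgroup.mem_center_iff.mp hcen g).symm

theorem comm_identity {N : Type*} [Group N] (a b c : N) (hc : c = a * b * a⁻¹ * b⁻¹)
    (hcen : ∀ g : N, c * g = g * c) :
    (a * a) * (b * b) = c ^ (4 : ℤ) * ((b * b) * (a * a)) := by
  have hca : ∀ w : N, a * (c * w) = c * (a * w) := by
    intro w
    rw [← mul_assoc, ← hcen a, mul_assoc]
  have hcb : ∀ w : N, b * (c * w) = c * (b * w) := by
    intro w
    rw [← mul_assoc, ← hcen b, mul_assoc]
  have h1 : ∀ w : N, a * (b * w) = c * (b * (a * w)) := by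
    intro w
    rw [hc]
    group
  have hgen : a * (a * (b * (b * (1 : N)))) =
      c * (c * (c * (c * (b * (b * (a * (a * (1 : N)))))))) := by
    rw [h1, hca, h1, h1, hca, hcb, h1, hcb]
  calc (a * a) * (b * b) = a * (a * (b * (b * (1 : N)))) := by group
    _ = c * (c * (c * (c * (b * (b * (a * (a * (1 : N)))))))) := hgen
    _ = c ^ (4 : ℕ) * ((b * b) * (a * a)) := by
        rw [pow_succ, pow_succ, pow_succ, pow_one]
        group
    _ = c ^ (4 : ℤ) * ((b * b) * (a * a)) := by
        norm_cast

theorem tau_contra {N : Type*} [Group N] (ρ : N → ℝ → ℝ)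
    (hmul : ∀ g h : N, ρ (g * h) = ρ g ∘ ρ h) (hone : ρ 1 = id)
    (hmono : ∀ g : N, StrictMono (ρ g))
    (a b c : N) (hc : c = a * b * a⁻¹ * b⁻¹)
    (hcen : ∀ g : N, c * g = g * c)
    (x₀ : ℝ) (R : Set ℝ)
    (hx₀ : x₀ ∈ R)
    (hmapsa : Set.MapsTo (ρ a) R R) (hmapsb : Set.MapsTo (ρ b) R R)
    (hmapsc : Set.MapsTo (ρ c) R R) (hmapsci : Set.MapsTo (ρ c⁻¹) R R)
    (hsign : ∀ x ∈ R, x < ρ c x)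
    (hup : ∀ w ∈ R, ∃ k : ℤ, w < ρ (c ^ k) x₀)
    (hdown : ∀ w ∈ R, ∃ k : ℤ, ρ (c ^ k) x₀ ≤ w) : False := by
  have happ : ∀ (g h : N) (x : ℝ), ρ (g * h) x = ρ g (ρ h x) := by
    intro g h x
    rw [hmul]
    rfl
  set S : ℤ → ℝ := fun k => ρ (c ^ k) x₀ with hS
  have hSsucc : ∀ k : ℤ, S (k + 1) = ρ c (S k) := by
    intro k
    have h : c ^ (k + 1) = c * c ^ k := by
      rw [add_comm, zpow_add, zpow_one]
    rw [hS]
    simp only []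
    rw [h, happ]
  have hSpred : ∀ k : ℤ, S (k - 1) = ρ c⁻¹ (S k) := by
    intro k
    have h : c ^ (k - 1) = c⁻¹ * c ^ k := by
      rw [sub_eq_add_neg, add_comm, zpow_add, zpow_neg_one]
    rw [hS]
    simp only []
    rw [h, happ]
  have hSR : ∀ k : ℤ, S k ∈ R := by
    intro k
    induction k using Int.induction_on with
    | zero => simpa [hS, hone] using hx₀
    | succ k ih =>
      rw [show ((k : ℤ) + 1) = (k + 1 : ℤ) from rfl, hSsucc]
      exact hmapsc ih
    | pred k ih =>
      rw [show (-(k : ℤ) - 1) = (-(k : ℤ)) - 1 from rfl, hSpred]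
      exact hmapsci ih
  have hSlt : ∀ k : ℤ, S k < S (k + 1) := by
    intro k
    rw [hSsucc]
    exact hsign _ (hSR k)
  have hSmono : StrictMono S := strictMono_int_of_lt_succ hSlt
  -- index function
  have hidx : ∀ w ∈ R, ∃ i : ℤ, S i ≤ w ∧ w < S (i + 1) := by
    intro w hw
    obtain ⟨k₁, hk₁⟩ := hup w hw
    obtain ⟨k₀, hk₀⟩ := hdown w hw
    have hbdd : ∃ bb : ℤ, ∀ z : ℤ, S z ≤ w → z ≤ bb := by
      refine ⟨k₁, fun z hz => ?_⟩
      by_contra hgt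
      push_neg at hgt
      have := hSmono.monotone hgt.le
      linarith
    obtain ⟨i, hi1, hi2⟩ := Int.exists_greatest_of_bdd
      (P := fun z => S z ≤ w) hbdd ⟨k₀, hk₀⟩
    refine ⟨i, hi1, ?_⟩
    by_contra hge
    push_neg at hge
    have := hi2 (i + 1) hge
    omega
  -- commutation of ρ g with powers of c
  have hcompow : ∀ (g : N) (k : ℤ) (x : ℝ), ρ g (ρ (c ^ k) x) = ρ (c ^ k) (ρ g x) := by
    intro g k x
    have hcg : Commute c g := hcen g
    have h : g * c ^ k = c ^ k * g := ((hcg.zpow_left k).symm).eq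
    rw [← happ, h, happ]
  have hSadd : ∀ i j : ℤ, ρ (c ^ j) (S i) = S (i + j) := by
    intro i j
    rw [hS]
    simp only []
    rw [← happ, ← zpow_add, add_comm j i]
  have key : ∀ (g : N), Set.MapsTo (ρ g) R R → ∀ i j : ℤ,
      S i ≤ ρ g x₀ → ρ g x₀ < S (i + 1) → ∀ w ∈ R, S j ≤ w → w < S (j + 1) →
      S (i + j) ≤ ρ g w ∧ ρ g w < S (i + j + 2) := by
    intro g _ i j hgi1 hgi2 w hw hwj1 hwj2
    constructor
    · calc S (i + j) = ρ (c ^ j) (S i) := (hSadd i j).symm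
        _ ≤ ρ (c ^ j) (ρ g x₀) := (hmono (c ^ j)).monotone hgi1
        _ = ρ g (ρ (c ^ j) x₀) := (hcompow g j x₀).symm
        _ = ρ g (S j) := rfl
        _ ≤ ρ g w := (hmono g).monotone hwj1
    · calc ρ g w < ρ g (S (j + 1)) := hmono g hwj2
        _ = ρ g (ρ (c ^ (j + 1)) x₀) := rfl
        _ = ρ (c ^ (j + 1)) (ρ g x₀) := hcompow g (j + 1) x₀
        _ < ρ (c ^ (j + 1)) (S (i + 1)) := hmono (c ^ (j + 1)) hgi2
        _ = S (i + 1 + (j + 1)) := hSadd (i + 1) (j + 1)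
        _ = S (i + j + 2) := by ring_nf
  -- apply to a², b²
  have hwa : ρ (a * a) x₀ ∈ R := by
    rw [happ]
    exact hmapsa (hmapsa hx₀)
  have hwb : ρ (b * b) x₀ ∈ R := by
    rw [happ]
    exact hmapsb (hmapsb hx₀)
  have hmapsaa : Set.MapsTo (ρ (a * a)) R R := by
    intro x hx
    rw [happ]
    exact hmapsa (hmapsa hx)
  have hmapsbb : Set.MapsTo (ρ (b * b)) R R := by
    intro x hx
    rw [happ]
    exact hmapsb (hmapsb hx)
  obtain ⟨i, hi1, hi2⟩ := hidx (ρ (a * a) x₀) hwa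
  obtain ⟨j, hj1, hj2⟩ := hidx (ρ (b * b) x₀) hwb
  have hP := key (a * a) hmapsaa i j hi1 hi2 (ρ (b * b) x₀) hwb hj1 hj2
  have hQ := key (b * b) hmapsbb j i hj1 hj2 (ρ (a * a) x₀) hwa hi1 hi2
  -- the central identity
  have hid : (a * a) * (b * b) = c ^ (4 : ℤ) * ((b * b) * (a * a)) :=
    comm_identity a b c hc hcen
  have hPQ : ρ (a * a) (ρ (b * b) x₀) = ρ (c ^ (4 : ℤ)) (ρ (b * b) (ρ (a * a) x₀)) := by
    calc ρ (a * a) (ρ (b * b) x₀) = ρ ((a * a) * (b * b)) x₀ := (happ _ _ _).symm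
      _ = ρ (c ^ (4 : ℤ) * ((b * b) * (a * a))) x₀ := by rw [hid]
      _ = ρ (c ^ (4 : ℤ)) (ρ ((b * b) * (a * a)) x₀) := happ _ _ _
      _ = ρ (c ^ (4 : ℤ)) (ρ (b * b) (ρ (a * a) x₀)) := by rw [happ]
  have h1 : S (j + i) ≤ ρ (b * b) (ρ (a * a) x₀) := hQ.1
  have h2 : ρ (a * a) (ρ (b * b) x₀) < S (i + j + 2) := hP.2
  have h3 : ρ (c ^ (4 : ℤ)) (S (j + i)) ≤ ρ (c ^ (4 : ℤ)) (ρ (b * b) (ρ (a * a) x₀)) :=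
    (hmono (c ^ (4 : ℤ))).monotone h1
  have h4 : ρ (c ^ (4 : ℤ)) (S (j + i)) = S (j + i + 4) := hSadd (j + i) 4
  have h5 : S (i + j + 2) < S (j + i + 4) := hSmono (by omega)
  rw [hPQ] at h2
  rw [h4] at h3
  linarith

theorem endpoint_fixed (C Ci D Di : ℝ → ℝ)
    (hC : IsDiffeoR 2 C) (hCi : IsDiffeoR 2 Ci) (hD : IsDiffeoR 2 D) (hDi : IsDiffeoR 2 Di)
    (hCCi : ∀ x, C (Ci x) = x) (hCiC : ∀ x, Ci (C x) = x)
    (hDDi : ∀ x, D (Di x) = x) (hDiD : ∀ x, Di (D x) = x)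
    (hcomm : ∀ x, C (D x) = D (C x))
    (u v : ℝ) (huv : u < v) (hCu : C u = u) (hCv : C v = v)
    (hfree : ∀ t, u < t → t < v → C t ≠ t)
    (hDfix : ∃ x, D x = x) : D u = u ∧ D v = v := by
  have hcommDi : ∀ x, C (Di x) = Di (C x) := by
    intro x
    calc C (Di x) = Di (D (C (Di x))) := (hDiD _).symm
      _ = Di (C (D (Di x))) := by rw [hcomm]
      _ = Di (C x) := by rw [hDDi]
  have hDifix : ∃ x, Di x = x := by
    obtain ⟨x, hx⟩ := hDfix
    refine ⟨x, ?_⟩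
    calc Di x = Di (D x) := by rw [hx]
      _ = x := hDiD x
  constructor
  · by_contra hne
    rcases lt_or_gt_of_ne (Ne.symm hne) with h | h
    · -- u < D u
      exact MKC C Ci D Di hC hCi hD hDi hCCi hCiC hDDi hDiD hcomm u v huv hCu hCv hfree h hDfix
    · -- D u < u, so u < Di u
      have h' : u < Di u := by
        have := hDi.strictMono h
        rwa [hDiD] at this
      exact MKC C Ci Di D hC hCi hDi hD hCCi hCiC hDiD hDDi hcommDi u v huv hCu hCv hfree h' hDifix
  · by_contra hne
    have hmfree : ∀ t, -v < t → t < -u → mir C t ≠ t := by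
      intro t h1 h2 heq
      have : C (-t) = -t := by
        have h3 : -(C (-t)) = t := heq
        linarith
      exact hfree (-t) (by linarith) (by linarith) this
    have hmC := IsDiffeoR_mir hC
    have hmCi := IsDiffeoR_mir hCi
    have hmD := IsDiffeoR_mir hD
    have hmDi := IsDiffeoR_mir hDi
    have hmCCi : ∀ x, mir C (mir Ci x) = x := by intro x; simp [mir, hCCi]
    have hmCiC : ∀ x, mir Ci (mir C x) = x := by intro x; simp [mir, hCiC]
    have hmDDi : ∀ x, mir D (mir Di x) = x := by intro x; simp [mir, hDDi]
    have hmDiD : ∀ x, mir Di (mir D x) = x := by intro x; simp [mir, hDiD]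
    have hmcomm : ∀ x, mir C (mir D x) = mir D (mir C x) := by
      intro x; simp [mir, hcomm]
    have hmcommDi : ∀ x, mir C (mir Di x) = mir Di (mir C x) := by
      intro x; simp [mir, hcommDi]
    have hmCu : mir C (-v) = -v := by simp [mir, hCv]
    have hmCv : mir C (-u) = -u := by simp [mir, hCu]
    have hmDfix : ∃ x, mir D x = x := by
      obtain ⟨x, hx⟩ := hDfix
      exact ⟨-x, by simp [mir, hx]⟩
    have hmDifix : ∃ x, mir Di x = x := by
      obtain ⟨x, hx⟩ := hDifix
      exact ⟨-x, by simp [mir, hx]⟩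
    rcases lt_or_gt_of_ne (Ne.symm hne) with h | h
    · -- v < D v : use mir Di since Di v < v, i.e. -v < mir Di (-v)
      have h' : Di v < v := by
        have := hDi.strictMono h
        rwa [hDiD] at this
      have h'' : -v < mir Di (-v) := by simp [mir]; linarith
      exact MKC (mir C) (mir Ci) (mir Di) (mir D) hmC hmCi hmDi hmD hmCCi hmCiC
        hmDiD hmDDi hmcommDi (-v) (-u) (by linarith) hmCu hmCv hmfree h'' hmDifix
    · -- D v < v
      have h'' : -v < mir D (-v) := by simp [mir]; linarith
      exact MKC (mir C) (mir Ci) (mir D) (mir Di) hmC hmCi hmD hmDi hmCCi hmCiC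
        hmDDi hmDiD hmcomm (-v) (-u) (by linarith) hmCu hmCv hmfree h'' hmDfix

theorem tau_contra' {N : Type*} [Group N] (ρ : N → ℝ → ℝ)
    (hmul : ∀ g h : N, ρ (g * h) = ρ g ∘ ρ h) (hone : ρ 1 = id)
    (hmono : ∀ g : N, StrictMono (ρ g)) (hcont : ∀ g : N, Continuous (ρ g))
    (a b c : N) (hc : c = a * b * a⁻¹ * b⁻¹)
    (hcen : ∀ g : N, c * g = g * c)
    (x₀ : ℝ) (R : Set ℝ)
    (hx₀ : x₀ ∈ R)
    (hmapsa : Set.MapsTo (ρ a) R R) (hmapsb : Set.MapsTo (ρ b) R R)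
    (hmapsc : Set.MapsTo (ρ c) R R) (hmapsci : Set.MapsTo (ρ c⁻¹) R R)
    (hsign : ∀ x ∈ R, x < ρ c x)
    (hconv : ∀ x ∈ R, ∀ y ∈ R, ∀ z : ℝ, x ≤ z → z ≤ y → z ∈ R) : False := by
  have happ : ∀ (g h : N) (x : ℝ), ρ (g * h) x = ρ g (ρ h x) := by
    intro g h x; rw [hmul]; rfl
  have hup : ∀ w ∈ R, ∃ k : ℤ, w < ρ (c ^ k) x₀ := by
    intro w hw
    by_contra hcu
    push_neg at hcu
    set s : ℕ → ℝ := fun n => ρ (c ^ (n : ℤ)) x₀ with hsdef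
    have hs0 : s 0 = x₀ := by
      have : c ^ ((0 : ℕ) : ℤ) = 1 := by norm_num
      rw [hsdef]; simp only []; rw [this, hone]; rfl
    have hrec : ∀ n, s (n + 1) = ρ c (s n) := by
      intro n
      have h : c ^ (((n : ℕ) + 1 : ℕ) : ℤ) = c * c ^ ((n : ℕ) : ℤ) := by
        push_cast
        rw [add_comm, zpow_add, zpow_one]
      rw [hsdef]; simp only []; rw [h, happ]
    have hsR : ∀ n, s n ∈ R := by
      intro n
      induction n with
      | zero => rw [hs0]; exact hx₀
      | succ n ih => rw [hrec]; exact hmapsc ih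
    have hmonos : Monotone s :=
      monotone_nat_of_le_succ (fun n => by rw [hrec]; exact (hsign _ (hsR n)).le)
    obtain ⟨L, hL1, hL2, hL3, _⟩ := exists_fixed_limit (ρ c) (hcont c) s w hrec hmonos
      (fun n => hcu ((n : ℕ) : ℤ))
    have hLR : L ∈ R := hconv x₀ hx₀ w hw L (by rw [← hs0]; exact hL2 0) hL3
    have := hsign L hLR
    rw [hL1] at this
    exact lt_irrefl _ this
  have hdown : ∀ w ∈ R, ∃ k : ℤ, ρ (c ^ k) x₀ ≤ w := by
    intro w hw
    by_contra hcu
    push_neg at hcu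
    set s : ℕ → ℝ := fun n => ρ (c ^ (-(n : ℤ))) x₀ with hsdef
    have hs0 : s 0 = x₀ := by
      have : c ^ (-((0 : ℕ) : ℤ)) = 1 := by norm_num
      rw [hsdef]; simp only []; rw [this, hone]; rfl
    have hrec : ∀ n, s (n + 1) = ρ c⁻¹ (s n) := by
      intro n
      have h : c ^ (-(((n : ℕ) + 1 : ℕ) : ℤ)) = c⁻¹ * c ^ (-((n : ℕ) : ℤ)) := by
        push_cast
        rw [neg_add, add_comm, zpow_add]
        norm_num
      rw [hsdef]; simp only []; rw [h, happ]
    have hsR : ∀ n, s n ∈ R := by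
      intro n
      induction n with
      | zero => rw [hs0]; exact hx₀
      | succ n ih => rw [hrec]; exact hmapsci ih
    have hanti : Antitone s := by
      apply antitone_nat_of_succ_le
      intro n
      rw [hrec]
      have h1 := hsign _ (hmapsci (hsR n))
      -- ρ c⁻¹ (s n) ∈ R and ρ c (ρ c⁻¹ (s n)) = s n
      have h2 : ρ c (ρ c⁻¹ (s n)) = s n := by
        rw [← happ, mul_inv_cancel, hone]; rfl
      rw [h2] at h1
      exact h1.le
    obtain ⟨L, hL1, hL2, hL3, _⟩ := exists_fixed_limit_anti (ρ c⁻¹) (hcont c⁻¹) s w hrec hanti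
      (fun n => (hcu (-(n : ℕ) : ℤ)).le)
    have hLR : L ∈ R := hconv w hw x₀ hx₀ L hL3 (by rw [← hs0]; exact hL2 0)
    have hCL : ρ c L = L := by
      conv_lhs => rw [← hL1]
      rw [← happ, mul_inv_cancel, hone]; rfl
    have := hsign L hLR
    rw [hCL] at this
    exact lt_irrefl _ this
  exact tau_contra ρ hmul hone hmono a b c hc hcen x₀ R hx₀ hmapsa hmapsb hmapsc hmapsci
    hsign hup hdown

theorem main_core {N : Type*} [Group N] (ρ : N → ℝ → ℝ)
    (hmul : ∀ g h : N, ρ (g * h) = ρ g ∘ ρ h) (hone : ρ 1 = id)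
    (hdiff : ∀ g : N, IsDiffeoR 2 (ρ g))
    (hfix : ∀ g : N, ∃ x : ℝ, ρ g x = x)
    (a b : N) (hcen : ∀ g : N, (a * b * a⁻¹ * b⁻¹) * g = g * (a * b * a⁻¹ * b⁻¹))
    (x₀ : ℝ) (hgt : x₀ < ρ (a * b * a⁻¹ * b⁻¹) x₀) : False := by
  set c := a * b * a⁻¹ * b⁻¹ with hc
  have happ : ∀ (g h : N) (x : ℝ), ρ (g * h) x = ρ g (ρ h x) := fun g h x => by rw [hmul]; rfl
  have hmono : ∀ g : N, StrictMono (ρ g) := fun g => (hdiff g).strictMono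
  have hcont : ∀ g : N, Continuous (ρ g) := fun g => (hdiff g).continuous
  have hinv1 : ∀ (g : N) (x : ℝ), ρ g (ρ g⁻¹ x) = x := by
    intro g x
    rw [← happ, mul_inv_cancel, hone]; rfl
  have hinv2 : ∀ (g : N) (x : ℝ), ρ g⁻¹ (ρ g x) = x := by
    intro g x
    rw [← happ, inv_mul_cancel, hone]; rfl
  have hcomm : ∀ (g : N) (x : ℝ), ρ c (ρ g x) = ρ g (ρ c x) := by
    intro g x
    rw [← happ, hcen g, happ]
  set S := {x : ℝ | ρ c x = x} with hSdef
  have hSclosed : IsClosed S := fix_isClosed _ (hcont c)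
  have hSne : S.Nonempty := hfix c
  have hx₀S : x₀ ∉ S := by
    intro h
    have h' : ρ c x₀ = x₀ := h
    linarith
  have hSinv : ∀ (g : N), ∀ s ∈ S, ρ g s ∈ S := by
    intro g s hs
    show ρ c (ρ g s) = ρ g s
    rw [hcomm g s, show ρ c s = s from hs]
  have hsign_of : ∀ t : ℝ, (∀ z ∈ Set.uIcc t x₀, ρ c z ≠ z) → t < ρ c t := by
    intro t ht
    have h := pos_of_ne (fun z => ρ c z - z) ((hcont c).sub continuous_id) t x₀
      (fun z hz h0 => ht z hz (by
        have h0' : ρ c z - z = 0 := h0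
        linarith)) (by
          show (0:ℝ) < ρ c x₀ - x₀
          linarith)
    have h' : 0 < ρ c t - t := h
    linarith
  by_cases hSL : (S ∩ Set.Iio x₀).Nonempty
  · have hbddL : BddAbove (S ∩ Set.Iio x₀) := ⟨x₀, fun z hz => le_of_lt hz.2⟩
    set u := sSup (S ∩ Set.Iio x₀) with hu
    have huS : u ∈ S := by
      have h1 : u ∈ closure (S ∩ Set.Iio x₀) := csSup_mem_closure hSL hbddL
      have h2 : closure (S ∩ Set.Iio x₀) ⊆ closure S := closure_mono Set.inter_subset_left
      rw [hSclosed.closure_eq] at h2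
      exact h2 h1
    have hux : u < x₀ := by
      have h1 : u ≤ x₀ := csSup_le hSL (fun z hz => le_of_lt hz.2)
      rcases lt_or_eq_of_le h1 with h | h
      · exact h
      · exact absurd (h ▸ huS) hx₀S
    have hfreeL : ∀ t, u < t → t ≤ x₀ → ρ c t ≠ t := by
      intro t h1 h2 hfixt
      have ht : t ∈ S ∩ Set.Iio x₀ :=
        ⟨hfixt, lt_of_le_of_ne h2 (fun he => hx₀S (he ▸ hfixt))⟩
      exact absurd (le_csSup hbddL ht) (not_le.2 h1)
    have hCu : ρ c u = u := huS
    have hCiu : ρ c⁻¹ u = u := by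
      calc ρ c⁻¹ u = ρ c⁻¹ (ρ c u) := by rw [hCu]
        _ = u := hinv2 c u
    by_cases hSR : (S ∩ Set.Ioi x₀).Nonempty
    · -- both endpoints exist
      have hbddR : BddBelow (S ∩ Set.Ioi x₀) := ⟨x₀, fun z hz => le_of_lt hz.2⟩
      set v := sInf (S ∩ Set.Ioi x₀) with hv
      have hvS : v ∈ S := by
        have h1 : v ∈ closure (S ∩ Set.Ioi x₀) := csInf_mem_closure hSR hbddR
        have h2 : closure (S ∩ Set.Ioi x₀) ⊆ closure S := closure_mono Set.inter_subset_left
        rw [hSclosed.closure_eq] at h2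
        exact h2 h1
      have hxv : x₀ < v := by
        have h1 : x₀ ≤ v := le_csInf hSR (fun z hz => le_of_lt hz.2)
        rcases lt_or_eq_of_le h1 with h | h
        · exact h
        · exact absurd (h.symm ▸ hvS) hx₀S
      have hfreeR : ∀ t, x₀ ≤ t → t < v → ρ c t ≠ t := by
        intro t h1 h2 hfixt
        have ht : t ∈ S ∩ Set.Ioi x₀ :=
          ⟨hfixt, lt_of_le_of_ne h1 (fun he => hx₀S (he.symm ▸ hfixt))⟩
        exact absurd (csInf_le hbddR ht) (not_le.2 h2)
      have hCv : ρ c v = v := hvS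
      have hCiv : ρ c⁻¹ v = v := by
        calc ρ c⁻¹ v = ρ c⁻¹ (ρ c v) := by rw [hCv]
          _ = v := hinv2 c v
      have huv : u < v := lt_trans hux hxv
      have hfree : ∀ t, u < t → t < v → ρ c t ≠ t := by
        intro t h1 h2
        rcases le_total t x₀ with h | h
        · exact hfreeL t h1 h
        · exact hfreeR t h h2
      have hepa := endpoint_fixed (ρ c) (ρ c⁻¹) (ρ a) (ρ a⁻¹)
        (hdiff c) (hdiff c⁻¹) (hdiff a) (hdiff a⁻¹)
        (hinv1 c) (hinv2 c) (hinv1 a) (hinv2 a) (hcomm a)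
        u v huv hCu hCv hfree (hfix a)
      have hepb := endpoint_fixed (ρ c) (ρ c⁻¹) (ρ b) (ρ b⁻¹)
        (hdiff c) (hdiff c⁻¹) (hdiff b) (hdiff b⁻¹)
        (hinv1 c) (hinv2 c) (hinv1 b) (hinv2 b) (hcomm b)
        u v huv hCu hCv hfree (hfix b)
      have hmapsg : ∀ g : N, ρ g u = u → ρ g v = v → Set.MapsTo (ρ g) (Set.Ioo u v) (Set.Ioo u v) := by
        intro g hgu hgv x hx
        constructor
        · calc u = ρ g u := hgu.symm
            _ < ρ g x := hmono g hx.1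
        · calc ρ g x < ρ g v := hmono g hx.2
            _ = v := hgv
      apply tau_contra' ρ hmul hone hmono hcont a b c hc hcen x₀ (Set.Ioo u v)
        ⟨hux, hxv⟩ (hmapsg a hepa.1 hepa.2) (hmapsg b hepb.1 hepb.2)
        (hmapsg c hCu hCv) (hmapsg c⁻¹ hCiu hCiv)
      · intro x hx
        apply hsign_of
        intro z hz
        rw [Set.mem_uIcc] at hz
        have hzin : u < z ∧ z < v := by
          rcases hz with h | h
          · exact ⟨lt_of_lt_of_le hx.1 h.1, lt_of_le_of_lt h.2 hxv⟩
          · exact ⟨lt_of_lt_of_le hux h.1, lt_of_le_of_lt h.2 hx.2⟩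
        exact hfree z hzin.1 hzin.2
      · intro x hx y hy z h1 h2
        exact ⟨lt_of_lt_of_le hx.1 h1, lt_of_le_of_lt h2 hy.2⟩
    · -- only left endpoint: all fixed points below x₀
      have hSbelow : ∀ s ∈ S, s < x₀ := by
        intro s hs
        rcases lt_trichotomy s x₀ with h | h | h
        · exact h
        · exact absurd (h ▸ hs) hx₀S
        · exact absurd ⟨hs, h⟩ (fun hh => hSR ⟨s, hh⟩)
      have hfixu : ∀ g : N, ρ g u = u := by
        intro g
        have h1 : ρ g u ∈ S := hSinv g u huS
        have h2 : ρ g⁻¹ u ∈ S := hSinv g⁻¹ u huS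
        have h3 : ρ g u ≤ u := le_csSup hbddL ⟨h1, hSbelow _ h1⟩
        have h4 : ρ g⁻¹ u ≤ u := le_csSup hbddL ⟨h2, hSbelow _ h2⟩
        have h5 : u ≤ ρ g u := by
          have h6 := (hmono g).monotone h4
          rwa [hinv1] at h6
        linarith
      have hfreeU : ∀ t, u < t → ρ c t ≠ t := by
        intro t h1 hfixt
        exact absurd (le_csSup hbddL ⟨hfixt, hSbelow t hfixt⟩) (not_le.2 h1)
      have hmapsg : ∀ g : N, Set.MapsTo (ρ g) (Set.Ioi u) (Set.Ioi u) := by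
        intro g x hx
        show u < ρ g x
        calc u = ρ g u := (hfixu g).symm
          _ < ρ g x := hmono g hx
      apply tau_contra' ρ hmul hone hmono hcont a b c hc hcen x₀ (Set.Ioi u)
        hux (hmapsg a) (hmapsg b) (hmapsg c) (hmapsg c⁻¹)
      · intro x hx
        apply hsign_of
        intro z hz
        rw [Set.mem_uIcc] at hz
        have hzin : u < z := by
          rcases hz with h | h
          · exact lt_of_lt_of_le hx h.1
          · exact lt_of_lt_of_le hux h.1
        exact hfreeU z hzin
      · intro x hx y _ z h1 _
        exact lt_of_lt_of_le hx h1
  · -- no fixed points below x₀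
    have hSR : (S ∩ Set.Ioi x₀).Nonempty := by
      obtain ⟨s, hs⟩ := hSne
      rcases lt_trichotomy s x₀ with h | h | h
      · exact absurd ⟨s, hs, h⟩ hSL
      · exact absurd (h ▸ hs) hx₀S
      · exact ⟨s, hs, h⟩
    have hbddR : BddBelow (S ∩ Set.Ioi x₀) := ⟨x₀, fun z hz => le_of_lt hz.2⟩
    set v := sInf (S ∩ Set.Ioi x₀) with hv
    have hvS : v ∈ S := by
      have h1 : v ∈ closure (S ∩ Set.Ioi x₀) := csInf_mem_closure hSR hbddR
      have h2 : closure (S ∩ Set.Ioi x₀) ⊆ closure S := closure_mono Set.inter_subset_left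
      rw [hSclosed.closure_eq] at h2
      exact h2 h1
    have hxv : x₀ < v := by
      have h1 : x₀ ≤ v := le_csInf hSR (fun z hz => le_of_lt hz.2)
      rcases lt_or_eq_of_le h1 with h | h
      · exact h
      · exact absurd (h.symm ▸ hvS) hx₀S
    have hSabove : ∀ s ∈ S, x₀ < s := by
      intro s hs
      rcases lt_trichotomy s x₀ with h | h | h
      · exact absurd ⟨s, hs, h⟩ hSL
      · exact absurd (h ▸ hs) hx₀S
      · exact h
    have hfixv : ∀ g : N, ρ g v = v := by
      intro g
      have h1 : ρ g v ∈ S := hSinv g v hvS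
      have h2 : ρ g⁻¹ v ∈ S := hSinv g⁻¹ v hvS
      have h3 : v ≤ ρ g v := csInf_le hbddR ⟨h1, hSabove _ h1⟩
      have h4 : v ≤ ρ g⁻¹ v := csInf_le hbddR ⟨h2, hSabove _ h2⟩
      have h5 : ρ g v ≤ v := by
        have h6 := (hmono g).monotone h4
        rwa [hinv1] at h6
      linarith
    have hfreeV : ∀ t, t < v → ρ c t ≠ t := by
      intro t h1 hfixt
      exact absurd (csInf_le hbddR ⟨hfixt, hSabove t hfixt⟩) (not_le.2 h1)
    have hmapsg : ∀ g : N, Set.MapsTo (ρ g) (Set.Iio v) (Set.Iio v) := by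
      intro g x hx
      show ρ g x < v
      calc ρ g x < ρ g v := hmono g hx
        _ = v := hfixv g
    apply tau_contra' ρ hmul hone hmono hcont a b c hc hcen x₀ (Set.Iio v)
      hxv (hmapsg a) (hmapsg b) (hmapsg c) (hmapsg c⁻¹)
    · intro x hx
      apply hsign_of
      intro z hz
      rw [Set.mem_uIcc] at hz
      have hzin : z < v := by
        rcases hz with h | h
        · exact lt_of_le_of_lt h.2 hxv
        · exact lt_of_le_of_lt h.2 hx
      exact hfreeV z hzin
    · intro x _ y hy z _ h2
      exact lt_of_le_of_lt h2 hy

end KopellProof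

/-- If `N` is a nilpotent group of orientation-preserving `C²` diffeomorphisms
of `ℝ` and every element of `N` has a fixed point, then `N` is abelian.  The
group is encoded as an abstract nilpotent group `N` with a faithful action `ρ`
on `ℝ` by orientation-preserving `C²` diffeomorphisms. -/
theorem abelian_of_nilpotent_C2_diffeos_R_with_fixed_points
    {N : Type*} [Group N] [Group.IsNilpotent N] (ρ : N → ℝ → ℝ)
    (hmul : ∀ g h : N, ρ (g * h) = ρ g ∘ ρ h)
    (hone : ρ 1 = id)
    (hdiff : ∀ g : N, IsDiffeoR 2 (ρ g))
    (hfaithful : ∀ g : N, ρ g = id → g = 1)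
    (hfix : ∀ g : N, ∃ x : ℝ, ρ g x = x) :
    ∀ a b : N, a * b = b * a := by
  intro x y
  by_contra hxy
  obtain ⟨a, b, hcne, hcen⟩ := KopellProof.exists_comm_central ⟨x, y, hxy⟩
  have hne : ∃ p : ℝ, ρ (a * b * a⁻¹ * b⁻¹) p ≠ p := by
    by_contra h
    push_neg at h
    exact hcne (hfaithful _ (funext h))
  obtain ⟨p, hp⟩ := hne
  rcases lt_or_gt_of_ne hp with hlt | hgt
  · have hcc : b * a * b⁻¹ * a⁻¹ = (a * b * a⁻¹ * b⁻¹)⁻¹ := by group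
    have hcen' : ∀ g : N, (b * a * b⁻¹ * a⁻¹) * g = g * (b * a * b⁻¹ * a⁻¹) := by
      intro g
      rw [hcc]
      calc (a * b * a⁻¹ * b⁻¹)⁻¹ * g
          = (a * b * a⁻¹ * b⁻¹)⁻¹ * (g * (a * b * a⁻¹ * b⁻¹)) * (a * b * a⁻¹ * b⁻¹)⁻¹ := by
            group
        _ = (a * b * a⁻¹ * b⁻¹)⁻¹ * ((a * b * a⁻¹ * b⁻¹) * g) * (a * b * a⁻¹ * b⁻¹)⁻¹ := by
            rw [← hcen g]
        _ = g * (a * b * a⁻¹ * b⁻¹)⁻¹ := by group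
    have h2 : ρ ((a * b * a⁻¹ * b⁻¹)⁻¹) (ρ (a * b * a⁻¹ * b⁻¹) p) = p := by
      have h3 : ρ ((a * b * a⁻¹ * b⁻¹)⁻¹ * (a * b * a⁻¹ * b⁻¹)) p
          = ρ ((a * b * a⁻¹ * b⁻¹)⁻¹) (ρ (a * b * a⁻¹ * b⁻¹) p) := by
        rw [hmul]; rfl
      rw [← h3, inv_mul_cancel, hone]; rfl
    have hgt' : p < ρ (b * a * b⁻¹ * a⁻¹) p := by
      rw [hcc]
      have h4 := (hdiff ((a * b * a⁻¹ * b⁻¹)⁻¹)).strictMono hlt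
      rwa [h2] at h4
    exact KopellProof.main_core ρ hmul hone hdiff hfix b a hcen' p hgt'
  · exact KopellProof.main_core ρ hmul hone hdiff hfix a b hcen p hgt
end
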